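/- arXiv:2305.01609 — 7 statements merged into one kernel-verified Lean document; each statement's English description precedes it below -/
import Mathlib

section
/- Let R be a k-algebra that is a domain, σ an automorphism of R, and a a regular central element of R. Then the generalized Weyl algebra R(σ, a) is a domain. -/
/-- Presentation relations for the rank `n` generalized Weyl algebra `R(σ, a)`:
it is generated over `R` (whose ring structure is imposed by the first four
relation families) by `x_i = ι (inr (i, false))` and `y_i = ι (inr (i, true))`,
subject to `x_i r = σ_i(r) x_i`, `y_i r = σ_i⁻¹(r) y_i`, `y_i x_i = a_i`,
`x_i y_i = σ_i(a_i)`, and `[x_i, x_j] = [y_i, y_j] = [x_i, y_j] = 0` for `i ≠ j`. -/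
inductive GWARel (k R : Type*) [CommRing k] [Ring R] [Algebra k R]
    (n : ℕ) (σ : Fin n → R ≃ₐ[k] R) (a : Fin n → R) :
    FreeAlgebra k (R ⊕ Fin n × Bool) → FreeAlgebra k (R ⊕ Fin n × Bool) → Prop
  | add (r s : R) : GWARel k R n σ a (FreeAlgebra.ι k (.inl (r + s)))
      (FreeAlgebra.ι k (.inl r) + FreeAlgebra.ι k (.inl s))
  | mul (r s : R) : GWARel k R n σ a (FreeAlgebra.ι k (.inl (r * s)))
      (FreeAlgebra.ι k (.inl r) * FreeAlgebra.ι k (.inl s))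
  | smul (c : k) (r : R) : GWARel k R n σ a (FreeAlgebra.ι k (.inl (c • r)))
      (c • FreeAlgebra.ι k (.inl r))
  | one : GWARel k R n σ a (FreeAlgebra.ι k (.inl 1)) 1
  | xr (i : Fin n) (r : R) : GWARel k R n σ a
      (FreeAlgebra.ι k (.inr (i, false)) * FreeAlgebra.ι k (.inl r))
      (FreeAlgebra.ι k (.inl (σ i r)) * FreeAlgebra.ι k (.inr (i, false)))
  | yr (i : Fin n) (r : R) : GWARel k R n σ a
      (FreeAlgebra.ι k (.inr (i, true)) * FreeAlgebra.ι k (.inl r))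
      (FreeAlgebra.ι k (.inl ((σ i).symm r)) * FreeAlgebra.ι k (.inr (i, true)))
  | yx (i : Fin n) : GWARel k R n σ a
      (FreeAlgebra.ι k (.inr (i, true)) * FreeAlgebra.ι k (.inr (i, false)))
      (FreeAlgebra.ι k (.inl (a i)))
  | xy (i : Fin n) : GWARel k R n σ a
      (FreeAlgebra.ι k (.inr (i, false)) * FreeAlgebra.ι k (.inr (i, true)))
      (FreeAlgebra.ι k (.inl (σ i (a i))))
  | comm (i j : Fin n) (s t : Bool) (h : i ≠ j) : GWARel k R n σ a
      (FreeAlgebra.ι k (.inr (i, s)) * FreeAlgebra.ι k (.inr (j, t)))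
      (FreeAlgebra.ι k (.inr (j, t)) * FreeAlgebra.ι k (.inr (i, s)))

/-- The rank `n` generalized Weyl algebra `R(σ, a)`, presented by generators and
relations. -/
abbrev GWA (k R : Type*) [CommRing k] [Ring R] [Algebra k R]
    (n : ℕ) (σ : Fin n → R ≃ₐ[k] R) (a : Fin n → R) : Type _ :=
  RingQuot (GWARel k R n σ a)

/-- The image of `r ∈ R` in the generalized Weyl algebra. -/
noncomputable def GWA.r (k R : Type*) [CommRing k] [Ring R] [Algebra k R]
    {n : ℕ} (σ : Fin n → R ≃ₐ[k] R) (a : Fin n → R) (r : R) : GWA k R n σ a :=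
  RingQuot.mkAlgHom k (GWARel k R n σ a) (FreeAlgebra.ι k (.inl r))

/-- The generator `x_i` of the generalized Weyl algebra. -/
noncomputable def GWA.x (k R : Type*) [CommRing k] [Ring R] [Algebra k R]
    {n : ℕ} (σ : Fin n → R ≃ₐ[k] R) (a : Fin n → R) (i : Fin n) : GWA k R n σ a :=
  RingQuot.mkAlgHom k (GWARel k R n σ a) (FreeAlgebra.ι k (.inr (i, false)))

/-- The generator `y_i` of the generalized Weyl algebra. -/
noncomputable def GWA.y (k R : Type*) [CommRing k] [Ring R] [Algebra k R]
    {n : ℕ} (σ : Fin n → R ≃ₐ[k] R) (a : Fin n → R) (i : Fin n) : GWA k R n σ a :=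
  RingQuot.mkAlgHom k (GWARel k R n σ a) (FreeAlgebra.ι k (.inr (i, true)))

noncomputable section
namespace GWAP

variable {k R : Type*} [CommRing k] [Ring R] [Algebra k R]

/-! ### Operators on `ℤ →₀ R` -/

def Mr (k : Type*) [CommRing k] [Algebra k R] (r : R) : (ℤ →₀ R) →ₗ[k] (ℤ →₀ R) :=
  Finsupp.mapRange.linearMap (LinearMap.mulLeft k r)

def T (σ : R ≃ₐ[k] R) (m : ℤ) : (ℤ →₀ R) →ₗ[k] (ℤ →₀ R) :=
  Finsupp.mapRange.linearMap (σ ^ m).toLinearMap ∘ₗ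
    (Finsupp.domLCongr (Equiv.addRight m)).toLinearMap

@[simp] lemma Mr_apply (r : R) (f : ℤ →₀ R) (n : ℤ) : Mr k r f n = r * f n := by
  simp [Mr]

@[simp] lemma T_apply (σ : R ≃ₐ[k] R) (m : ℤ) (f : ℤ →₀ R) (n : ℤ) :
    T σ m f n = (σ ^ m) (f (n - m)) := by
  simp [T, Finsupp.domLCongr_apply, Finsupp.equivMapDomain_apply, Equiv.addRight]
  rfl

lemma zpow_apply_mul (σ : R ≃ₐ[k] R) (m n : ℤ) (r : R) :
    (σ ^ (m + n)) r = (σ ^ m) ((σ ^ n) r) := by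
  rw [zpow_add]; rfl

lemma Mr_comp_Mr (r s : R) :
    (Mr k r ∘ₗ Mr k s : (ℤ →₀ R) →ₗ[k] (ℤ →₀ R)) = Mr k (r * s) := by
  ext f n; simp [mul_assoc]

lemma T_comp_T (σ : R ≃ₐ[k] R) (m n : ℤ) : T σ m ∘ₗ T σ n = T σ (m + n) := by
  ext f p
  simp only [LinearMap.comp_apply, T_apply]
  rw [← zpow_apply_mul]
  ring_nf

lemma T_comp_Mr (σ : R ≃ₐ[k] R) (m : ℤ) (r : R) :
    T σ m ∘ₗ Mr k r = Mr k ((σ ^ m) r) ∘ₗ T σ m := by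
  ext f n; simp [map_mul]

@[simp] lemma Mr_one : (Mr k (1 : R)) = LinearMap.id := by ext f n; simp
@[simp] lemma T_zero (σ : R ≃ₐ[k] R) : T σ 0 = LinearMap.id := by ext f n; simp

variable (σ : R ≃ₐ[k] R) (a : R)

def Xop : Module.End k (ℤ →₀ R) := T σ 1
def Yop : Module.End k (ℤ →₀ R) := Mr k a ∘ₗ T σ (-1)

/-! ### The representation -/

def F : FreeAlgebra k (R ⊕ Fin 1 × Bool) →ₐ[k] Module.End k (ℤ →₀ R) :=
  FreeAlgebra.lift k (Sum.elim (fun r => Mr k r)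
    (fun p => if p.2 then Yop σ a else Xop σ))

@[simp] lemma F_r (r : R) : F σ a (FreeAlgebra.ι k (.inl r)) = Mr k r := by
  simp [F]

@[simp] lemma F_x (i : Fin 1) : F σ a (FreeAlgebra.ι k (.inr (i, false))) = Xop σ := by
  simp [F]

@[simp] lemma F_y (i : Fin 1) : F σ a (FreeAlgebra.ι k (.inr (i, true))) = Yop σ a := by
  simp [F]

lemma F_compat (hcent : ∀ r : R, a * r = r * a) :
    ∀ ⦃x y⦄, GWARel k R 1 ![σ] ![a] x y → F σ a x = F σ a y := by
  intro x y h
  induction h with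
  | add r s => simp only [F_r, map_add]; ext f n; simp [add_mul]
  | mul r s =>
      simp only [F_r, map_mul]
      rw [Module.End.mul_eq_comp, Mr_comp_Mr]
  | smul c r => simp only [F_r, map_smul]; ext f n; simp [Algebra.smul_mul_assoc]
  | one => simp only [F_r, map_one]; ext f n; simp
  | xr i r =>
      simp only [F_r, F_x, map_mul, Matrix.cons_val_fin_one, Module.End.mul_eq_comp, Xop]
      rw [T_comp_Mr, zpow_one]
  | yr i r =>
      simp only [F_r, F_y, map_mul, Matrix.cons_val_fin_one, Module.End.mul_eq_comp]
      rw [Yop, LinearMap.comp_assoc, T_comp_Mr, ← LinearMap.comp_assoc,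
        ← LinearMap.comp_assoc, Mr_comp_Mr, Mr_comp_Mr]
      have : (σ ^ (-1 : ℤ)) r = σ.symm r := by rw [zpow_neg_one]; rfl
      rw [this, hcent (σ.symm r)]
  | yx i =>
      simp only [F_x, F_y, F_r, map_mul, Matrix.cons_val_fin_one, Module.End.mul_eq_comp]
      rw [Yop, Xop, LinearMap.comp_assoc, T_comp_T]
      simp
  | xy i =>
      simp only [F_x, F_y, F_r, map_mul, Matrix.cons_val_fin_one, Module.End.mul_eq_comp]
      rw [Yop, Xop, ← LinearMap.comp_assoc, T_comp_Mr, LinearMap.comp_assoc, T_comp_T]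
      simp [zpow_one]
  | comm i j s t h => exact absurd (Subsingleton.elim i j) h

def Φ (hcent : ∀ r : R, a * r = r * a) :
    GWA k R 1 ![σ] ![a] →ₐ[k] Module.End k (ℤ →₀ R) :=
  RingQuot.liftAlgHom k ⟨F σ a, F_compat σ a hcent⟩

variable (hcent : ∀ r : R, a * r = r * a)

@[simp] lemma Φ_r (r : R) : Φ σ a hcent (GWA.r k R ![σ] ![a] r) = Mr k r := by
  rw [GWA.r, Φ, RingQuot.liftAlgHom_mkAlgHom_apply, F_r]

@[simp] lemma Φ_x (i : Fin 1) : Φ σ a hcent (GWA.x k R ![σ] ![a] i) = Xop σ := by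
  rw [GWA.x, Φ, RingQuot.liftAlgHom_mkAlgHom_apply, F_x]

@[simp] lemma Φ_y (i : Fin 1) : Φ σ a hcent (GWA.y k R ![σ] ![a] i) = Yop σ a := by
  rw [GWA.y, Φ, RingQuot.liftAlgHom_mkAlgHom_apply, F_y]

/-! ### Elements of the GWA -/

def Xg : GWA k R 1 ![σ] ![a] := GWA.x k R ![σ] ![a] 0
def Yg : GWA k R 1 ![σ] ![a] := GWA.y k R ![σ] ![a] 0

def rL : R →ₗ[k] GWA k R 1 ![σ] ![a] where
  toFun r := GWA.r k R ![σ] ![a] r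
  map_add' r s := by
    have h := RingQuot.mkAlgHom_rel k (GWARel.add (σ := ![σ]) (a := ![a]) r s)
    rw [map_add] at h
    exact h
  map_smul' c r := by
    have h := RingQuot.mkAlgHom_rel k (GWARel.smul (σ := ![σ]) (a := ![a]) c r)
    rw [map_smul] at h
    exact h

lemma rL_mul (r s : R) : rL σ a (r * s) = rL σ a r * rL σ a s := by
  have h := RingQuot.mkAlgHom_rel k (GWARel.mul (σ := ![σ]) (a := ![a]) r s)
  rw [map_mul] at h
  exact h

lemma rL_one : rL σ a (1 : R) = 1 := by
  have h := RingQuot.mkAlgHom_rel k (GWARel.one (σ := ![σ]) (a := ![a]))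
  rw [map_one] at h
  exact h

lemma x_rL (r : R) : Xg σ a * rL σ a r = rL σ a (σ r) * Xg σ a := by
  have h := RingQuot.mkAlgHom_rel k (GWARel.xr (σ := ![σ]) (a := ![a]) 0 r)
  rw [map_mul, map_mul] at h
  simp only [Matrix.cons_val_fin_one] at h
  exact h

lemma y_rL (r : R) : Yg σ a * rL σ a r = rL σ a (σ.symm r) * Yg σ a := by
  have h := RingQuot.mkAlgHom_rel k (GWARel.yr (σ := ![σ]) (a := ![a]) 0 r)
  rw [map_mul, map_mul] at h
  simp only [Matrix.cons_val_fin_one] at h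
  exact h

lemma yx_rel : Yg σ a * Xg σ a = rL σ a a := by
  have h := RingQuot.mkAlgHom_rel k (GWARel.yx (σ := ![σ]) (a := ![a]) 0)
  rw [map_mul] at h
  simp only [Matrix.cons_val_fin_one] at h
  exact h

lemma xy_rel : Xg σ a * Yg σ a = rL σ a (σ a) := by
  have h := RingQuot.mkAlgHom_rel k (GWARel.xy (σ := ![σ]) (a := ![a]) 0)
  rw [map_mul] at h
  simp only [Matrix.cons_val_fin_one] at h
  exact h

/-- monomial `x^n` / `y^{-n}`. -/
def e (n : ℤ) : GWA k R 1 ![σ] ![a] :=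
  if 0 ≤ n then Xg σ a ^ n.toNat else Yg σ a ^ (-n).toNat

lemma e_neg {n : ℤ} (h : n ≤ 0) : e σ a n = Yg σ a ^ (-n).toNat := by
  rcases lt_or_eq_of_le h with h' | h'
  · rw [e, if_neg (by omega)]
  · subst h'; simp [e]

lemma e_nonneg {n : ℤ} (h : 0 ≤ n) : e σ a n = Xg σ a ^ n.toNat := by
  rw [e, if_pos h]

def mon (n : ℤ) : R →ₗ[k] GWA k R 1 ![σ] ![a] :=
  LinearMap.mulRight k (e σ a n) ∘ₗ rL σ a

lemma mon_apply (n : ℤ) (r : R) : mon σ a n r = rL σ a r * e σ a n := by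
  simp only [mon, LinearMap.coe_comp, Function.comp_apply, LinearMap.mulRight_apply]

def ψ : (ℤ →₀ R) →ₗ[k] GWA k R 1 ![σ] ![a] :=
  Finsupp.lsum k (mon σ a)

lemma psi_apply (f : ℤ →₀ R) : ψ σ a f = f.sum fun n r => rL σ a r * e σ a n := by
  rw [ψ, Finsupp.lsum_apply]
  rfl

lemma mem_mon (n : ℤ) (r : R) : rL σ a r * e σ a n ∈ LinearMap.range (ψ σ a) :=
  ⟨Finsupp.single n r, by rw [ψ, Finsupp.lsum_single, mon_apply]⟩

lemma x_mul_e (n : ℤ) :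
    Xg σ a * e σ a n = rL σ a (if 0 ≤ n then 1 else σ a) * e σ a (n + 1) := by
  by_cases h : 0 ≤ n
  · rw [if_pos h, rL_one, one_mul, e_nonneg σ a h, e_nonneg σ a (by omega),
      ← pow_succ']
    congr 1
    omega
  · rw [if_neg h]
    have h1 : (-n).toNat = (-(n+1)).toNat + 1 := by omega
    rw [e_neg σ a (by omega), h1, pow_succ', ← mul_assoc, xy_rel, e_neg σ a (by omega)]

lemma y_mul_e (n : ℤ) :
    Yg σ a * e σ a n = rL σ a (if 0 < n then a else 1) * e σ a (n - 1) := by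
  by_cases h : 0 < n
  · rw [if_pos h]
    have h1 : n.toNat = (n-1).toNat + 1 := by omega
    rw [e_nonneg σ a (by omega), h1, pow_succ', ← mul_assoc, yx_rel,
      e_nonneg σ a (by omega)]
  · rw [if_neg h, rL_one, one_mul, e_neg σ a (by omega), e_neg σ a (by omega),
      ← pow_succ']
    congr 1
    omega

lemma span_aux (w : FreeAlgebra k (R ⊕ Fin 1 × Bool)) :
    ∀ v ∈ LinearMap.range (ψ σ a),
      RingQuot.mkAlgHom k (GWARel k R 1 ![σ] ![a]) w * v ∈ LinearMap.range (ψ σ a) := by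
  induction w using FreeAlgebra.induction with
  | grade0 c =>
      intro v hv
      rw [AlgHom.commutes, Algebra.algebraMap_eq_smul_one, smul_mul_assoc, one_mul]
      exact Submodule.smul_mem _ c hv
  | grade1 s =>
      rintro v ⟨f, rfl⟩
      rw [psi_apply, Finsupp.sum, Finset.mul_sum]
      apply Submodule.sum_mem
      intro n hn
      obtain (r | ⟨i, b⟩) := s
      · have : RingQuot.mkAlgHom k (GWARel k R 1 ![σ] ![a]) (FreeAlgebra.ι k (.inl r))
            = rL σ a r := rfl
        rw [this, ← mul_assoc, ← rL_mul]
        exact mem_mon σ a n _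
      · obtain rfl : i = 0 := Subsingleton.elim i 0
        cases b
        · have : RingQuot.mkAlgHom k (GWARel k R 1 ![σ] ![a])
              (FreeAlgebra.ι k (.inr (0, false))) = Xg σ a := rfl
          rw [this, ← mul_assoc, x_rL, mul_assoc, x_mul_e, ← mul_assoc, ← rL_mul]
          exact mem_mon σ a _ _
        · have : RingQuot.mkAlgHom k (GWARel k R 1 ![σ] ![a])
              (FreeAlgebra.ι k (.inr (0, true))) = Yg σ a := rfl
          rw [this, ← mul_assoc, y_rL, mul_assoc, y_mul_e, ← mul_assoc, ← rL_mul]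
          exact mem_mon σ a _ _
  | mul u1 u2 ih1 ih2 =>
      intro v hv
      rw [map_mul, mul_assoc]
      exact ih1 _ (ih2 _ hv)
  | add u1 u2 ih1 ih2 =>
      intro v hv
      rw [map_add, add_mul]
      exact Submodule.add_mem _ (ih1 _ hv) (ih2 _ hv)

lemma psi_surjective : Function.Surjective (ψ σ a) := by
  intro u
  obtain ⟨w, rfl⟩ := RingQuot.mkAlgHom_surjective k (GWARel k R 1 ![σ] ![a]) u
  have h1 : (1 : GWA k R 1 ![σ] ![a]) ∈ LinearMap.range (ψ σ a) := by
    have h0 : e σ a 0 = 1 := by simp [e]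
    have := mem_mon σ a 0 1
    rwa [rL_one, one_mul, h0] at this
  have := span_aux σ a w 1 h1
  rwa [mul_one] at this

/-! ### Computation of the representation on monomials -/

def c : ℕ → R
  | 0 => 1
  | j + 1 => c j * (σ ^ (-(j : ℤ))) a

def ec (n : ℤ) : R := if 0 ≤ n then 1 else c σ a (-n).toNat

lemma MrT_comp (r s : R) (m p : ℤ) :
    (Mr k r ∘ₗ T σ m) ∘ₗ (Mr k s ∘ₗ T σ p) = Mr k (r * (σ ^ m) s) ∘ₗ T σ (m + p) := by
  ext f n
  simp only [LinearMap.comp_apply, Mr_apply, T_apply, map_mul, mul_assoc]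
  rw [← zpow_apply_mul, sub_sub]

lemma Xop_eq : Xop σ = Mr k (1 : R) ∘ₗ T σ 1 := by
  rw [Mr_one, LinearMap.id_comp, Xop]

lemma Xop_pow (i : ℕ) : Xop σ ^ i = Mr k (1 : R) ∘ₗ T σ (i : ℤ) := by
  induction i with
  | zero => simp [pow_zero]; rfl
  | succ j ih =>
      rw [pow_succ, ih, Module.End.mul_eq_comp, Xop_eq, MrT_comp, map_one, mul_one]
      norm_num

lemma Yop_eq : Yop σ a = Mr k a ∘ₗ T σ (-1) := rfl

lemma Yop_pow (j : ℕ) : Yop σ a ^ j = Mr k (c σ a j) ∘ₗ T σ (-(j : ℤ)) := by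
  induction j with
  | zero => simp [pow_zero, c]; rfl
  | succ j ih =>
      rw [pow_succ, ih, Module.End.mul_eq_comp, Yop_eq, MrT_comp]
      have h1 : c σ a j * (σ ^ (-(j:ℤ))) a = c σ a (j + 1) := rfl
      have h2 : (-(j:ℤ)) + (-1) = -((j+1 : ℕ) : ℤ) := by push_cast; ring
      rw [h1, h2]

variable (hcent : ∀ r : R, a * r = r * a)

lemma Φ_rL (r : R) : Φ σ a hcent (rL σ a r) = Mr k r := Φ_r σ a hcent r

lemma Φ_e (n : ℤ) : Φ σ a hcent (e σ a n) = Mr k (ec σ a n) ∘ₗ T σ n := by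
  by_cases h : 0 ≤ n
  · rw [e_nonneg σ a h, map_pow, ec, if_pos h]
    have : Φ σ a hcent (Xg σ a) = Xop σ := Φ_x σ a hcent 0
    rw [this, Xop_pow, Int.toNat_of_nonneg h]
  · rw [e_neg σ a (by omega), map_pow, ec, if_neg h]
    have : Φ σ a hcent (Yg σ a) = Yop σ a := Φ_y σ a hcent 0
    rw [this, Yop_pow]
    have h2 : (-(((-n).toNat : ℕ) : ℤ)) = n := by omega
    rw [h2]

lemma Φ_mon (n : ℤ) (r : R) :
    Φ σ a hcent (mon σ a n r) = Mr k (r * ec σ a n) ∘ₗ T σ n := by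
  rw [mon_apply, map_mul, Φ_rL, Φ_e, Module.End.mul_eq_comp, ← LinearMap.comp_assoc,
    Mr_comp_Mr]

lemma keyApply (f g : ℤ →₀ R) (m : ℤ) :
    Φ σ a hcent (ψ σ a f) g m
      = ∑ n ∈ f.support, (f n * ec σ a n) * (σ ^ n) (g (m - n)) := by
  have h1 : ψ σ a f = f.sum fun n r => mon σ a n r := by
    rw [ψ, Finsupp.lsum_apply]
  rw [h1, map_finsuppSum, Finsupp.sum]
  have h2 : ∀ n r, Φ σ a hcent (mon σ a n r) g m
      = (r * ec σ a n) * (σ ^ n) (g (m - n)) := by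
    intro n r
    rw [Φ_mon]
    simp [mul_assoc]
  calc (∑ n ∈ f.support, Φ σ a hcent (mon σ a n (f n))) g m
      = ∑ n ∈ f.support, Φ σ a hcent (mon σ a n (f n)) g m := by
        rw [LinearMap.coe_sum, Finset.sum_apply, Finsupp.finset_sum_apply]
    _ = _ := Finset.sum_congr rfl fun n _ => h2 n (f n)

lemma nu_psi (f : ℤ →₀ R) (m : ℤ) :
    Φ σ a hcent (ψ σ a f) (Finsupp.single 0 1) m = f m * ec σ a m := by
  rw [keyApply]
  rw [Finset.sum_eq_single m]
  · rw [sub_self, Finsupp.single_eq_same, map_one, mul_one]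
  · intro n _ hnm
    rw [Finsupp.single_eq_of_ne (by omega), map_zero, mul_zero]
  · intro hm
    rw [Finsupp.notMem_support_iff.mp hm, zero_mul, zero_mul]

/-! ### Regularity -/

lemma reg_equiv (e : R ≃ₐ[k] R) (hreg : ∀ z : R, z * a = 0 → z = 0)
    (z : R) (h : z * e a = 0) : z = 0 := by
  have h1 : e.symm z * a = 0 := by
    have := congrArg e.symm h
    rwa [map_mul e.symm, e.symm_apply_apply, map_zero] at this
  have h2 := hreg _ h1
  have := congrArg e h2
  rwa [e.apply_symm_apply, map_zero] at this

lemma c_reg (hreg : ∀ z : R, z * a = 0 → z = 0) (j : ℕ) :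
    ∀ z : R, z * c σ a j = 0 → z = 0 := by
  induction j with
  | zero => intro z h; rwa [c, mul_one] at h
  | succ j ih =>
      intro z h
      rw [c, ← mul_assoc] at h
      exact ih _ (reg_equiv a (σ ^ (-(j:ℤ))) hreg _ h)

lemma ec_reg (hreg : ∀ z : R, z * a = 0 → z = 0) (n : ℤ) :
    ∀ z : R, z * ec σ a n = 0 → z = 0 := by
  intro z h
  rw [ec] at h
  by_cases h0 : 0 ≤ n
  · rwa [if_pos h0, mul_one] at h
  · rw [if_neg h0] at h
    exact c_reg σ a hreg _ _ h

end GWAP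

/-- If `R` is a `k`-algebra that is a domain, `σ` an automorphism of `R`,
and `a` a regular central element, then the rank one GWA `R(σ, a)` is a domain. -/
theorem gwa_isDomain (k R : Type*) [CommRing k] [Ring R] [Algebra k R] [IsDomain R]
    (σ : R ≃ₐ[k] R) (a : R) (hreg : a ∈ nonZeroDivisors R) (hcent : ∀ r : R, a * r = r * a) :
    IsDomain (GWA k R 1 ![σ] ![a]) := by
  have hreg' : ∀ z : R, z * a = 0 → z = 0 := fun z hz => hreg.2 z hz
  haveI : Nontrivial (GWA k R 1 ![σ] ![a]) := by
    refine ⟨1, 0, fun h10 => ?_⟩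
    have h := congrArg (fun u => GWAP.Φ σ a hcent u (Finsupp.single 0 1) (0 : ℤ)) h10
    simp only [map_one, map_zero, Module.End.one_apply, LinearMap.zero_apply,
      Finsupp.single_eq_same, Finsupp.coe_zero, Pi.zero_apply] at h
    exact one_ne_zero h
  haveI : NoZeroDivisors (GWA k R 1 ![σ] ![a]) := by
    refine ⟨fun {u v} huv => ?_⟩
    by_contra hcon
    push_neg at hcon
    obtain ⟨hu, hv⟩ := hcon
    obtain ⟨f, rfl⟩ := GWAP.psi_surjective σ a u
    obtain ⟨g, rfl⟩ := GWAP.psi_surjective σ a v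
    have hf : f ≠ 0 := fun h => hu (by rw [h, map_zero])
    have hg : g ≠ 0 := fun h => hv (by rw [h, map_zero])
    set G : ℤ →₀ R := GWAP.Φ σ a hcent (GWAP.ψ σ a g) (Finsupp.single 0 1) with hG
    have hGapp : ∀ m, G m = g m * GWAP.ec σ a m := fun m => GWAP.nu_psi σ a hcent g m
    have hGne : G ≠ 0 := by
      obtain ⟨m, hm⟩ := Finsupp.ne_iff.mp hg
      simp only [Finsupp.coe_zero, Pi.zero_apply] at hm
      intro h0
      apply hm
      refine GWAP.ec_reg σ a hreg' m _ ?_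
      rw [← hGapp m, h0, Finsupp.coe_zero, Pi.zero_apply]
    have hFs : f.support.Nonempty := Finsupp.support_nonempty_iff.mpr hf
    have hGs : G.support.Nonempty := Finsupp.support_nonempty_iff.mpr hGne
    set p := f.support.max' hFs with hp
    set q := G.support.max' hGs with hq
    have hcoord : GWAP.Φ σ a hcent (GWAP.ψ σ a f * GWAP.ψ σ a g)
        (Finsupp.single 0 1) (p + q) ≠ 0 := by
      rw [map_mul, Module.End.mul_apply, ← hG, GWAP.keyApply]
      rw [Finset.sum_eq_single p]
      · have h1 : p + q - p = q := by ring
        rw [h1]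
        have hfp : f p ≠ 0 := Finsupp.mem_support_iff.mp (f.support.max'_mem hFs)
        have hGq : G q ≠ 0 := Finsupp.mem_support_iff.mp (G.support.max'_mem hGs)
        have h2 : f p * GWAP.ec σ a p ≠ 0 := by
          intro h
          exact hfp (GWAP.ec_reg σ a hreg' p _ h)
        have h3 : (σ ^ p) (G q) ≠ 0 := fun h =>
          hGq ((σ ^ p).injective (by rw [h, map_zero]))
        exact mul_ne_zero h2 h3
      · intro n hn hnp
        have hle : n ≤ p := Finset.le_max' f.support n hn
        have hnq : q < p + q - n := by omega
        have hz : G (p + q - n) = 0 := by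
          apply Finsupp.notMem_support_iff.mp
          intro hmem
          exact absurd (Finset.le_max' G.support _ hmem) (not_le.mpr hnq)
        rw [hz, map_zero, mul_zero]
      · intro hpmem
        exact absurd (f.support.max'_mem hFs) hpmem
    apply hcoord
    rw [huv, map_zero]
    simp
  exact NoZeroDivisors.to_isDomain _
end
end

section
/- Let R be a left noetherian k-algebra, σ an automorphism of R, and a a regular central element. Then the generalized Weyl algebra R(σ, a) is left noetherian. -/
namespace GWAProof
variable {k R : Type*} [CommRing k] [Ring R] [Algebra k R]

variable (σ : R ≃ₐ[k] R) (a : R)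

noncomputable def ac (n : ℤ) : R := if 0 ≤ n then 1 else σ a
noncomputable def bc (a : R) (n : ℤ) : R := if n ≤ 0 then 1 else a

noncomputable def Lop (r : R) : (ℤ →₀ R) →ₗ[k] (ℤ →₀ R) :=
  Finsupp.mapRange.linearMap (LinearMap.mulLeft k r)

noncomputable def Xop : (ℤ →₀ R) →ₗ[k] (ℤ →₀ R) :=
  Finsupp.lsum k fun n => Finsupp.lsingle (n + 1) ∘ₗ
    (LinearMap.mulRight k (ac σ a n)) ∘ₗ σ.toLinearMap

noncomputable def Yop : (ℤ →₀ R) →ₗ[k] (ℤ →₀ R) :=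
  Finsupp.lsum k fun n => Finsupp.lsingle (n - 1) ∘ₗ
    (LinearMap.mulRight k (bc a n)) ∘ₗ (σ.symm).toLinearMap

@[simp] lemma Lop_apply (r : R) (f : ℤ →₀ R) (m : ℤ) : Lop (k := k) r f m = r * f m := by
  simp only [Lop, Finsupp.mapRange.linearMap_apply, Finsupp.mapRange_apply,
    LinearMap.mulLeft_apply]

@[simp] lemma Xop_single (n : ℤ) (s : R) :
    Xop (k := k) σ a (Finsupp.single n s) = Finsupp.single (n + 1) (σ s * ac σ a n) := by
  rw [Xop, Finsupp.lsum_single]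
  simp only [LinearMap.coe_comp, Function.comp_apply, AlgEquiv.toLinearMap_apply,
    LinearMap.mulRight_apply, Finsupp.lsingle_apply]

@[simp] lemma Yop_single (n : ℤ) (s : R) :
    Yop (k := k) σ a (Finsupp.single n s) = Finsupp.single (n - 1) (σ.symm s * bc a n) := by
  rw [Yop, Finsupp.lsum_single]
  simp only [LinearMap.coe_comp, Function.comp_apply, AlgEquiv.toLinearMap_apply,
    LinearMap.mulRight_apply, Finsupp.lsingle_apply]

lemma Xop_apply (f : ℤ →₀ R) (m : ℤ) :
    Xop (k := k) σ a f m = σ (f (m - 1)) * ac σ a (m - 1) := by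
  induction f using Finsupp.induction_linear with
  | zero => simp only [map_zero, Finsupp.coe_zero, Pi.zero_apply, zero_mul]
  | add f g hf hg => simp only [map_add, Finsupp.add_apply, hf, hg, add_mul]
  | single n s =>
      rw [Xop_single]
      rcases eq_or_ne m (n + 1) with rfl | hm
      · rw [Finsupp.single_eq_same, show n + 1 - 1 = n from by ring, Finsupp.single_eq_same]
      · rw [Finsupp.single_apply, if_neg (fun h => hm (by omega)),
          Finsupp.single_apply, if_neg (fun h => hm (by omega)), map_zero, zero_mul]

lemma Yop_apply (f : ℤ →₀ R) (m : ℤ) :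
    Yop (k := k) σ a f m = σ.symm (f (m + 1)) * bc a (m + 1) := by
  induction f using Finsupp.induction_linear with
  | zero => simp only [map_zero, Finsupp.coe_zero, Pi.zero_apply, zero_mul]
  | add f g hf hg => simp only [map_add, Finsupp.add_apply, hf, hg, add_mul]
  | single n s =>
      rw [Yop_single]
      rcases eq_or_ne m (n - 1) with rfl | hm
      · rw [Finsupp.single_eq_same, show n - 1 + 1 = n from by ring, Finsupp.single_eq_same]
      · rw [Finsupp.single_apply, if_neg (fun h => hm (by omega)),
          Finsupp.single_apply, if_neg (fun h => hm (by omega)), map_zero, zero_mul]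


variable (hcent : ∀ r : R, a * r = r * a)

lemma cent' (hcent : ∀ r : R, a * r = r * a) (j : ℕ) (r : R) :
    (⇑σ)^[j] a * r = r * (⇑σ)^[j] a := by
  induction j generalizing r with
  | zero => exact hcent r
  | succ j ih =>
      rw [Function.iterate_succ_apply']
      have := ih (σ.symm r)
      calc σ ((⇑σ)^[j] a) * r = σ ((⇑σ)^[j] a * σ.symm r) := by
            rw [map_mul, AlgEquiv.apply_symm_apply]
      _ = σ (σ.symm r * (⇑σ)^[j] a) := by rw [this]
      _ = r * σ ((⇑σ)^[j] a) := by rw [map_mul, AlgEquiv.apply_symm_apply]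

/-- The representation of the GWA on `ℤ →₀ R`. -/
noncomputable def phi (hcent : ∀ r : R, a * r = r * a) :
    GWA k R 1 ![σ] ![a] →ₐ[k] Module.End k (ℤ →₀ R) :=
  RingQuot.liftAlgHom k ⟨FreeAlgebra.lift k
    (Sum.elim (fun r => Lop (k := k) r) (fun p => cond p.2 (Yop σ a) (Xop σ a))), by
    have hc1 : ∀ r, σ a * r = r * σ a := cent' σ a hcent 1
    intro z w h
    induction h with
    | add r s => simp only [map_add, FreeAlgebra.lift_ι_apply, Sum.elim_inl]
                 exact LinearMap.ext fun f => Finsupp.ext fun m => by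
                   simp only [Lop_apply, LinearMap.add_apply, Finsupp.add_apply, Lop_apply,
                     add_mul]
    | mul r s => simp only [map_mul, FreeAlgebra.lift_ι_apply, Sum.elim_inl]
                 exact LinearMap.ext fun f => Finsupp.ext fun m => by
                   simp only [Lop_apply, Module.End.mul_apply, Lop_apply, mul_assoc]
    | smul c r => simp only [map_smul, FreeAlgebra.lift_ι_apply, Sum.elim_inl]
                  exact LinearMap.ext fun f => Finsupp.ext fun m => by
                    simp only [Lop_apply, LinearMap.smul_apply, Finsupp.smul_apply, Lop_apply,
                      smul_mul_assoc]
    | one => simp only [map_one, FreeAlgebra.lift_ι_apply, Sum.elim_inl]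
             exact LinearMap.ext fun f => Finsupp.ext fun m => by
               simp only [Lop_apply, Module.End.one_apply, one_mul]
    | xr i r =>
        simp only [map_mul, FreeAlgebra.lift_ι_apply, Sum.elim_inl, Sum.elim_inr, cond_false]
        exact LinearMap.ext fun f => Finsupp.ext fun m => by
          simp only [Module.End.mul_apply, Xop_apply, Lop_apply, Matrix.cons_val_zero,
            Subsingleton.elim i 0, map_mul, mul_assoc]
    | yr i r =>
        simp only [map_mul, FreeAlgebra.lift_ι_apply, Sum.elim_inl, Sum.elim_inr, cond_true]
        exact LinearMap.ext fun f => Finsupp.ext fun m => by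
          simp only [Module.End.mul_apply, Yop_apply, Lop_apply, Matrix.cons_val_zero,
            Subsingleton.elim i 0, map_mul, mul_assoc]
    | yx i =>
        simp only [map_mul, FreeAlgebra.lift_ι_apply, Sum.elim_inl, Sum.elim_inr, cond_true,
          cond_false]
        exact LinearMap.ext fun f => Finsupp.ext fun m => by
          simp only [Module.End.mul_apply, Yop_apply, Xop_apply, Lop_apply, Matrix.cons_val_zero,
            Subsingleton.elim i 0]
          rw [show m + 1 - 1 = m from by ring, map_mul]
          rcases le_or_gt 0 m with hm | hm
          · rw [ac, if_pos hm, bc, if_neg (by omega), map_one, mul_one,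
              AlgEquiv.symm_apply_apply, hcent]
          · rw [ac, if_neg (by omega), bc, if_pos (by omega), mul_one,
              AlgEquiv.symm_apply_apply, AlgEquiv.symm_apply_apply, ← hcent]
    | xy i =>
        simp only [map_mul, FreeAlgebra.lift_ι_apply, Sum.elim_inl, Sum.elim_inr, cond_true,
          cond_false]
        exact LinearMap.ext fun f => Finsupp.ext fun m => by
          simp only [Module.End.mul_apply, Yop_apply, Xop_apply, Lop_apply, Matrix.cons_val_zero,
            Subsingleton.elim i 0]
          rw [show m - 1 + 1 = m from by ring, map_mul, AlgEquiv.apply_symm_apply]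
          rcases le_or_gt m 0 with hm | hm
          · rw [bc, if_pos hm, ac, if_neg (by omega), map_one, mul_one, ← hc1]
          · rw [bc, if_neg (by omega), ac, if_pos (by omega), mul_one, ← hc1]
    | comm i j s t hij => exact absurd (Subsingleton.elim i j) hij⟩

/-! GWA-side abbreviations and relations -/

noncomputable def rr (r : R) : GWA k R 1 ![σ] ![a] := GWA.r k R ![σ] ![a] r
noncomputable def xx : GWA k R 1 ![σ] ![a] := GWA.x k R ![σ] ![a] 0
noncomputable def yy : GWA k R 1 ![σ] ![a] := GWA.y k R ![σ] ![a] 0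

lemma rr_add (r s : R) : rr σ a (r + s) = rr σ a r + rr σ a s := by
  have := RingQuot.mkAlgHom_rel k (GWARel.add (k := k) (n := 1) (σ := ![σ]) (a := ![a]) r s)
  simp only [map_add] at this; exact this

lemma rr_mul (r s : R) : rr σ a (r * s) = rr σ a r * rr σ a s := by
  have := RingQuot.mkAlgHom_rel k (GWARel.mul (k := k) (n := 1) (σ := ![σ]) (a := ![a]) r s)
  simp only [map_mul] at this; exact this

lemma rr_one : rr σ a (1 : R) = 1 := by
  have := RingQuot.mkAlgHom_rel k (GWARel.one (k := k) (n := 1) (σ := ![σ]) (a := ![a]))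
  simp only [map_one] at this; exact this

lemma rr_smul (c : k) (r : R) : rr σ a (c • r) = c • rr σ a r := by
  have := RingQuot.mkAlgHom_rel k (GWARel.smul (k := k) (n := 1) (σ := ![σ]) (a := ![a]) c r)
  simp only [map_smul] at this; exact this

lemma x_rr (r : R) : xx σ a * rr σ a r = rr σ a (σ r) * xx σ a := by
  have := RingQuot.mkAlgHom_rel k (GWARel.xr (k := k) (σ := ![σ]) (a := ![a]) 0 r)
  simp only [map_mul, Matrix.cons_val_zero] at this; exact this

lemma y_rr (r : R) : yy σ a * rr σ a r = rr σ a (σ.symm r) * yy σ a := by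
  have := RingQuot.mkAlgHom_rel k (GWARel.yr (k := k) (σ := ![σ]) (a := ![a]) 0 r)
  simp only [map_mul, Matrix.cons_val_zero] at this; exact this

lemma yx_rel : yy σ a * xx σ a = rr σ a a := by
  have := RingQuot.mkAlgHom_rel k (GWARel.yx (k := k) (σ := ![σ]) (a := ![a]) 0)
  simp only [map_mul, Matrix.cons_val_zero] at this; exact this

lemma xy_rel : xx σ a * yy σ a = rr σ a (σ a) := by
  have := RingQuot.mkAlgHom_rel k (GWARel.xy (k := k) (σ := ![σ]) (a := ![a]) 0)
  simp only [map_mul, Matrix.cons_val_zero] at this; exact this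

/-- the standard basis elements of the GWA -/
noncomputable def ww (n : ℤ) : GWA k R 1 ![σ] ![a] :=
  if 0 ≤ n then (xx σ a) ^ n.toNat else (yy σ a) ^ (-n).toNat

lemma ww_zero : ww σ a 0 = 1 := by simp [ww]

lemma ww_nonneg (n : ℤ) (hn : 0 ≤ n) : ww σ a n = xx σ a ^ n.toNat := if_pos hn

lemma ww_nonpos (n : ℤ) (hn : n ≤ 0) : ww σ a n = yy σ a ^ (-n).toNat := by
  rcases eq_or_lt_of_le hn with h0 | h0
  · rw [ww, if_pos (by omega), show n.toNat = 0 from by omega,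
      show (-n).toNat = 0 from by omega, pow_zero, pow_zero]
  · rw [ww, if_neg (by omega)]

lemma x_mul_ww (n : ℤ) : xx σ a * ww σ a n = rr σ a (ac σ a n) * ww σ a (n + 1) := by
  rcases le_or_gt 0 n with hn | hn
  · rw [ww_nonneg σ a n hn, ww_nonneg σ a (n+1) (by omega), ac, if_pos hn, rr_one, one_mul,
      show (n+1).toNat = n.toNat + 1 from by omega, pow_succ']
  · rw [ww_nonpos σ a n (by omega), ww_nonpos σ a (n+1) (by omega), ac, if_neg (by omega),
      show (-n).toNat = (-(n+1)).toNat + 1 from by omega, pow_succ', ← mul_assoc, xy_rel]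

lemma y_mul_ww (n : ℤ) : yy σ a * ww σ a n = rr σ a (bc a n) * ww σ a (n - 1) := by
  rcases le_or_gt n 0 with hn | hn
  · rw [ww_nonpos σ a n hn, ww_nonpos σ a (n-1) (by omega), bc, if_pos hn, rr_one, one_mul,
      show (-(n-1)).toNat = (-n).toNat + 1 from by omega, pow_succ']
  · rw [ww_nonneg σ a n (by omega), ww_nonneg σ a (n-1) (by omega), bc, if_neg (by omega),
      show n.toNat = (n-1).toNat + 1 from by omega, pow_succ', ← mul_assoc, yx_rel]


/-! reconstruction map -/

noncomputable def recs (n : ℤ) : R →ₗ[k] GWA k R 1 ![σ] ![a] where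
  toFun s := rr σ a s * ww σ a n
  map_add' r s := by rw [rr_add, add_mul]
  map_smul' c s := by rw [RingHom.id_apply, rr_smul, smul_mul_assoc]

noncomputable def rec' : (ℤ →₀ R) →ₗ[k] GWA k R 1 ![σ] ![a] :=
  Finsupp.lsum k (recs σ a)

@[simp] lemma rec'_single (n : ℤ) (s : R) :
    rec' σ a (Finsupp.single n s) = rr σ a s * ww σ a n :=
  Finsupp.lsum_single k _ n s

lemma phi_x (hcent : ∀ r : R, a * r = r * a) : phi σ a hcent (xx σ a) = Xop σ a := by
  rw [xx, GWA.x, phi, RingQuot.liftAlgHom_mkAlgHom_apply, FreeAlgebra.lift_ι_apply]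
  rfl

lemma phi_y (hcent : ∀ r : R, a * r = r * a) : phi σ a hcent (yy σ a) = Yop σ a := by
  rw [yy, GWA.y, phi, RingQuot.liftAlgHom_mkAlgHom_apply, FreeAlgebra.lift_ι_apply]
  rfl

lemma phi_rr (hcent : ∀ r : R, a * r = r * a) (r : R) :
    phi σ a hcent (rr σ a r) = Lop (k := k) r := by
  rw [rr, GWA.r, phi, RingQuot.liftAlgHom_mkAlgHom_apply, FreeAlgebra.lift_ι_apply]
  rfl

lemma rec'_phi (hcent : ∀ r : R, a * r = r * a) (t : GWA k R 1 ![σ] ![a]) (f : ℤ →₀ R) :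
    rec' σ a (phi σ a hcent t f) = t * rec' σ a f := by
  obtain ⟨z, rfl⟩ := RingQuot.mkAlgHom_surjective k _ t
  induction z using FreeAlgebra.induction generalizing f with
  | grade0 c =>
      rw [AlgHom.commutes, AlgHom.commutes, Module.algebraMap_end_apply, map_smul,
        Algebra.smul_def]
  | grade1 g =>
      rcases g with r | ⟨i, b⟩
      · have : RingQuot.mkAlgHom k (GWARel k R 1 ![σ] ![a]) (FreeAlgebra.ι k (Sum.inl r))
            = rr σ a r := rfl
        rw [this, phi_rr]
        induction f using Finsupp.induction_linear with
        | zero => simp only [map_zero, mul_zero]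
        | add f g hf hg => simp only [map_add, hf, hg, mul_add]
        | single n s =>
            rw [show Lop (k := k) r (Finsupp.single n s) = Finsupp.single n (r * s) from by
                ext m
                rw [Lop_apply, Finsupp.single_apply, Finsupp.single_apply]
                rcases eq_or_ne n m with rfl | hm
                · rw [if_pos rfl, if_pos rfl]
                · rw [if_neg hm, if_neg hm, mul_zero],
              rec'_single, rec'_single, rr_mul, mul_assoc]
      · rcases b with _ | _
        · have : RingQuot.mkAlgHom k (GWARel k R 1 ![σ] ![a])
              (FreeAlgebra.ι k (Sum.inr (i, false))) = xx σ a := by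
            rw [xx, GWA.x, Subsingleton.elim i 0]
          rw [this, phi_x]
          induction f using Finsupp.induction_linear with
          | zero => simp only [map_zero, mul_zero]
          | add f g hf hg => simp only [map_add, hf, hg, mul_add]
          | single n s =>
              rw [Xop_single, rec'_single, rec'_single, rr_mul, mul_assoc, ← x_mul_ww,
                ← mul_assoc, ← x_rr, mul_assoc]
        · have : RingQuot.mkAlgHom k (GWARel k R 1 ![σ] ![a])
              (FreeAlgebra.ι k (Sum.inr (i, true))) = yy σ a := by
            rw [yy, GWA.y, Subsingleton.elim i 0]
          rw [this, phi_y]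
          induction f using Finsupp.induction_linear with
          | zero => simp only [map_zero, mul_zero]
          | add f g hf hg => simp only [map_add, hf, hg, mul_add]
          | single n s =>
              rw [Yop_single, rec'_single, rec'_single, rr_mul, mul_assoc, ← y_mul_ww,
                ← mul_assoc, ← y_rr, mul_assoc]
  | mul z w hz hw =>
      rw [map_mul, map_mul, Module.End.mul_apply, hz, hw, mul_assoc]
  | add z w hz hw =>
      rw [map_add, map_add, LinearMap.add_apply, map_add, hz, hw, add_mul]

noncomputable def ev (hcent : ∀ r : R, a * r = r * a) (t : GWA k R 1 ![σ] ![a]) : ℤ →₀ R :=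
  phi σ a hcent t (Finsupp.single 0 1)

lemma rec'_ev (hcent : ∀ r : R, a * r = r * a) (t : GWA k R 1 ![σ] ![a]) :
    rec' σ a (ev σ a hcent t) = t := by
  rw [ev, rec'_phi, rec'_single, rr_one, one_mul, ww_zero, mul_one]


/-! iterate lemmas -/

lemma iter_add (g : R ≃ₐ[k] R) (n : ℕ) (r s : R) :
    (⇑g)^[n] (r + s) = (⇑g)^[n] r + (⇑g)^[n] s := by
  induction n generalizing r s with
  | zero => rfl
  | succ n ih => rw [Function.iterate_succ_apply, map_add, ih, ← Function.iterate_succ_apply, ← Function.iterate_succ_apply]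

lemma iter_mul (g : R ≃ₐ[k] R) (n : ℕ) (r s : R) :
    (⇑g)^[n] (r * s) = (⇑g)^[n] r * (⇑g)^[n] s := by
  induction n generalizing r s with
  | zero => rfl
  | succ n ih => rw [Function.iterate_succ_apply, map_mul, ih, ← Function.iterate_succ_apply, ← Function.iterate_succ_apply]

lemma iter_zero (g : R ≃ₐ[k] R) (n : ℕ) : (⇑g)^[n] (0 : R) = 0 := by
  induction n with
  | zero => rfl
  | succ n ih => rw [Function.iterate_succ_apply, map_zero, ih]

lemma symm_iter (n : ℕ) (r : R) : (⇑σ.symm)^[n] ((⇑σ)^[n] r) = r :=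
  (Function.LeftInverse.iterate σ.symm_apply_apply n) r

lemma iter_symm (n : ℕ) (r : R) : (⇑σ)^[n] ((⇑σ.symm)^[n] r) = r :=
  (Function.LeftInverse.iterate σ.apply_symm_apply n) r

/-! ev lemmas -/

lemma Lop_eq_smul (r : R) (f : ℤ →₀ R) : Lop (k := k) r f = r • f := by
  ext m
  rw [Lop_apply, Finsupp.smul_apply, smul_eq_mul]

variable (hcent : ∀ r : R, a * r = r * a)

lemma ev_add (t t' : GWA k R 1 ![σ] ![a]) :
    ev σ a hcent (t + t') = ev σ a hcent t + ev σ a hcent t' := by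
  rw [ev, ev, ev, map_add, LinearMap.add_apply]

lemma ev_zero : ev σ a hcent 0 = 0 := by rw [ev, map_zero, LinearMap.zero_apply]

lemma ev_sub (t t' : GWA k R 1 ![σ] ![a]) :
    ev σ a hcent (t - t') = ev σ a hcent t - ev σ a hcent t' := by
  rw [ev, ev, ev, map_sub, LinearMap.sub_apply]

lemma ev_mul (t t' : GWA k R 1 ![σ] ![a]) :
    ev σ a hcent (t * t') = phi σ a hcent t (ev σ a hcent t') := by
  rw [ev, ev, map_mul, Module.End.mul_apply]

lemma ev_rr_mul (r : R) (t : GWA k R 1 ![σ] ![a]) :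
    ev σ a hcent (rr σ a r * t) = r • ev σ a hcent t := by
  rw [ev_mul, phi_rr, Lop_eq_smul]

lemma ev_xpow_mul (j : ℕ) (t : GWA k R 1 ![σ] ![a]) :
    ev σ a hcent (xx σ a ^ j * t) = (⇑(Xop (k := k) σ a))^[j] (ev σ a hcent t) := by
  rw [ev_mul, map_pow, phi_x, Module.End.pow_apply]

lemma ev_ypow_mul (j : ℕ) (t : GWA k R 1 ![σ] ![a]) :
    ev σ a hcent (yy σ a ^ j * t) = (⇑(Yop (k := k) σ a))^[j] (ev σ a hcent t) := by
  rw [ev_mul, map_pow, phi_y, Module.End.pow_apply]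

lemma rec'_rsmul (r : R) (f : ℤ →₀ R) :
    rec' σ a (r • f) = rr σ a r * rec' σ a f := by
  induction f using Finsupp.induction_linear with
  | zero => rw [smul_zero, map_zero, mul_zero]
  | add f g hf hg => rw [smul_add, map_add, map_add, hf, hg, mul_add]
  | single n s => rw [Finsupp.smul_single, smul_eq_mul, rec'_single, rec'_single, rr_mul,
      mul_assoc]

/-! iterated shift bounds -/

lemma Xop_iter (j : ℕ) (N : ℤ) (hN : 0 ≤ N) (f : ℤ →₀ R)
    (hf : ∀ m, f m ≠ 0 → -N ≤ m ∧ m ≤ N) :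
    (∀ m, ((⇑(Xop (k := k) σ a))^[j] f) m ≠ 0 → -N + j ≤ m ∧ m ≤ N + j) ∧
      ((⇑(Xop (k := k) σ a))^[j] f) (N + j) = (⇑σ)^[j] (f N) := by
  induction j with
  | zero => exact ⟨fun m hm => by simpa using hf m hm, by simp⟩
  | succ j ih =>
      obtain ⟨ihb, iht⟩ := ih
      rw [Function.iterate_succ_apply']
      constructor
      · intro m hm
        rw [Xop_apply] at hm
        have h1 : ((⇑(Xop (k := k) σ a))^[j] f) (m - 1) ≠ 0 := fun h => by
          rw [h, map_zero, zero_mul] at hm; exact hm rfl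
        have := ihb _ h1
        omega
      · rw [Xop_apply, show N + (j + 1 : ℕ) - 1 = N + j from by push_cast; ring, iht,
          ac, if_pos (by positivity), mul_one, Function.iterate_succ_apply' (⇑σ) j (f N)]

lemma Yop_iter (j : ℕ) (N : ℤ) (hN : 0 ≤ N) (f : ℤ →₀ R)
    (hf : ∀ m, f m ≠ 0 → -N ≤ m ∧ m ≤ N) :
    (∀ m, ((⇑(Yop (k := k) σ a))^[j] f) m ≠ 0 → -N - j ≤ m ∧ m ≤ N - j) ∧
      ((⇑(Yop (k := k) σ a))^[j] f) (-N - j) = (⇑σ.symm)^[j] (f (-N)) := by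
  induction j with
  | zero => exact ⟨fun m hm => by simpa using hf m hm, by simp⟩
  | succ j ih =>
      obtain ⟨ihb, iht⟩ := ih
      rw [Function.iterate_succ_apply']
      constructor
      · intro m hm
        rw [Yop_apply] at hm
        have h1 : ((⇑(Yop (k := k) σ a))^[j] f) (m + 1) ≠ 0 := fun h => by
          rw [h, map_zero, zero_mul] at hm; exact hm rfl
        have := ihb _ h1
        omega
      · rw [Yop_apply, show -N - (j + 1 : ℕ) + 1 = -N - j from by push_cast; ring, iht,
          bc, if_pos (by omega), mul_one, Function.iterate_succ_apply' (⇑σ.symm) j (f (-N))]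

/-! the leading coefficient chains -/

noncomputable def Lp (I : Ideal (GWA k R 1 ![σ] ![a])) (n : ℕ) : Submodule R R where
  carrier := { r | ∃ t ∈ I, (∀ m, ev σ a hcent t m ≠ 0 → -(n : ℤ) ≤ m ∧ m ≤ n) ∧
    (⇑σ.symm)^[n] (ev σ a hcent t n) = r }
  zero_mem' := ⟨0, I.zero_mem, by
    rw [ev_zero]; exact ⟨fun m hm => absurd rfl hm, iter_zero _ _⟩⟩
  add_mem' := by
    rintro r s ⟨t, htI, htb, rfl⟩ ⟨u, huI, hub, rfl⟩
    refine ⟨t + u, I.add_mem htI huI, fun m hm => ?_, ?_⟩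
    · rw [ev_add, Finsupp.add_apply] at hm
      rcases eq_or_ne (ev σ a hcent t m) 0 with h1 | h1
      · exact hub m (fun h => by rw [h1, h, add_zero] at hm; exact hm rfl)
      · exact htb m h1
    · rw [ev_add, Finsupp.add_apply, iter_add]
  smul_mem' := by
    rintro c r ⟨t, htI, htb, rfl⟩
    refine ⟨rr σ a ((⇑σ)^[n] c) * t, I.smul_mem _ htI, fun m hm => ?_, ?_⟩
    · rw [ev_rr_mul, Finsupp.smul_apply, smul_eq_mul] at hm
      exact htb m (fun h => by rw [h, mul_zero] at hm; exact hm rfl)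
    · rw [ev_rr_mul, Finsupp.smul_apply, smul_eq_mul, iter_mul, symm_iter, smul_eq_mul]

noncomputable def Lm (I : Ideal (GWA k R 1 ![σ] ![a])) (n : ℕ) : Submodule R R where
  carrier := { r | ∃ t ∈ I, (∀ m, ev σ a hcent t m ≠ 0 → -(n : ℤ) ≤ m ∧ m ≤ n) ∧
    (⇑σ)^[n] (ev σ a hcent t (-(n : ℤ))) = r }
  zero_mem' := ⟨0, I.zero_mem, by
    rw [ev_zero]; exact ⟨fun m hm => absurd rfl hm, iter_zero _ _⟩⟩
  add_mem' := by
    rintro r s ⟨t, htI, htb, rfl⟩ ⟨u, huI, hub, rfl⟩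
    refine ⟨t + u, I.add_mem htI huI, fun m hm => ?_, ?_⟩
    · rw [ev_add, Finsupp.add_apply] at hm
      rcases eq_or_ne (ev σ a hcent t m) 0 with h1 | h1
      · exact hub m (fun h => by rw [h1, h, add_zero] at hm; exact hm rfl)
      · exact htb m h1
    · rw [ev_add, Finsupp.add_apply, iter_add]
  smul_mem' := by
    rintro c r ⟨t, htI, htb, rfl⟩
    refine ⟨rr σ a ((⇑σ.symm)^[n] c) * t, I.smul_mem _ htI, fun m hm => ?_, ?_⟩
    · rw [ev_rr_mul, Finsupp.smul_apply, smul_eq_mul] at hm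
      exact htb m (fun h => by rw [h, mul_zero] at hm; exact hm rfl)
    · rw [ev_rr_mul, Finsupp.smul_apply, smul_eq_mul, iter_mul, iter_symm, smul_eq_mul]

lemma Lp_mono (I : Ideal (GWA k R 1 ![σ] ![a])) : Monotone (Lp σ a hcent I) := by
  refine monotone_nat_of_le_succ fun n => ?_
  rintro r ⟨t, htI, htb, rfl⟩
  refine ⟨xx σ a * t, I.smul_mem _ htI, fun m hm => ?_, ?_⟩
  · rw [ev_mul, phi_x, Xop_apply] at hm
    have h1 : ev σ a hcent t (m - 1) ≠ 0 := fun h => by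
      rw [h, map_zero, zero_mul] at hm; exact hm rfl
    have := htb _ h1
    omega
  · rw [ev_mul, phi_x, Xop_apply, show ((n + 1 : ℕ) : ℤ) - 1 = n from by push_cast; ring,
      ac, if_pos (by positivity), mul_one, Function.iterate_succ_apply, σ.symm_apply_apply]

lemma Lm_mono (I : Ideal (GWA k R 1 ![σ] ![a])) : Monotone (Lm σ a hcent I) := by
  refine monotone_nat_of_le_succ fun n => ?_
  rintro r ⟨t, htI, htb, rfl⟩
  refine ⟨yy σ a * t, I.smul_mem _ htI, fun m hm => ?_, ?_⟩
  · rw [ev_mul, phi_y, Yop_apply] at hm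
    have h1 : ev σ a hcent t (m + 1) ≠ 0 := fun h => by
      rw [h, map_zero, zero_mul] at hm; exact hm rfl
    have := htb _ h1
    omega
  · rw [ev_mul, phi_y, Yop_apply, show -((n + 1 : ℕ) : ℤ) + 1 = -n from by push_cast; ring,
      bc, if_pos (by omega), mul_one, Function.iterate_succ_apply, σ.apply_symm_apply]


/-- degree function on positions -/
def dd (n : ℤ) : ℕ := (2*n).toNat + (-(2*n+1)).toNat

end GWAProof

open GWAProof

/-- If `R` is a left noetherian `k`-algebra, `σ` an automorphism of `R`,
and `a` a regular central element, then the GWA `R(σ, a)` is left noetherian. -/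
theorem gwa_isNoetherianRing (k R : Type*) [CommRing k] [Ring R] [Algebra k R]
    [IsNoetherianRing R]
    (σ : R ≃ₐ[k] R) (a : R) (hreg : a ∈ nonZeroDivisors R) (hcent : ∀ r : R, a * r = r * a) :
    IsNoetherianRing (GWA k R 1 ![σ] ![a]) := by
  classical
  rw [isNoetherianRing_iff, isNoetherian_def]
  intro I
  obtain ⟨N₁, hN₁⟩ := (monotone_stabilizes_iff_noetherian.mpr inferInstance)
    ⟨Lp σ a hcent I, Lp_mono σ a hcent I⟩
  obtain ⟨N₂, hN₂⟩ := (monotone_stabilizes_iff_noetherian.mpr inferInstance)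
    ⟨Lm σ a hcent I, Lm_mono σ a hcent I⟩
  set N := max N₁ N₂ with hNdef
  have hLp : ∀ K, N ≤ K → Lp σ a hcent I K = Lp σ a hcent I N := fun K hK =>
    ((hN₁ K (le_trans (le_max_left _ _) hK)).symm.trans (hN₁ N (le_max_left _ _)) :)
  have hLm : ∀ K, N ≤ K → Lm σ a hcent I K = Lm σ a hcent I N := fun K hK =>
    ((hN₂ K (le_trans (le_max_right _ _) hK)).symm.trans (hN₂ N (le_max_right _ _)) :)
  set S : Set ℤ := Set.Icc (-(N:ℤ)) N with hSdef
  -- the image of I under ev, as an R-submodule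
  let EI : Submodule R (ℤ →₀ R) :=
    { carrier := {f | ∃ t ∈ I, ev σ a hcent t = f}
      zero_mem' := ⟨0, I.zero_mem, ev_zero σ a hcent⟩
      add_mem' := by
        rintro f g ⟨t, htI, rfl⟩ ⟨u, huI, rfl⟩
        exact ⟨t + u, I.add_mem htI huI, ev_add σ a hcent t u⟩
      smul_mem' := by
        rintro c f ⟨t, htI, rfl⟩
        exact ⟨rr σ a c * t, I.smul_mem _ htI, ev_rr_mul σ a hcent c t⟩ }
  haveI : IsNoetherian R (↥S →₀ R) :=
    isNoetherian_of_linearEquiv (Finsupp.linearEquivFunOnFinite R R ↥S).symm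
  haveI : IsNoetherian R (Finsupp.supported R R S) :=
    isNoetherian_of_linearEquiv (Finsupp.supportedEquivFinsupp S).symm
  set V' : Submodule R (Finsupp.supported R R S) :=
    Submodule.comap (Finsupp.supported R R S).subtype EI with hV'def
  obtain ⟨s', hs'⟩ := IsNoetherian.noetherian V'
  have hs'sub : (↑s' : Set (Finsupp.supported R R S)) ⊆ V' := hs' ▸ Submodule.subset_span
  set genOf : Finsupp.supported R R S → GWA k R 1 ![σ] ![a] := fun w =>
    if h : (w : ℤ →₀ R) ∈ EI then h.choose else 0 with hgenOf
  set genSet : Finset (GWA k R 1 ![σ] ![a]) := s'.image genOf with hgenSet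
  -- main claim by strong induction on the degree
  have main : ∀ v : ℕ, ∀ p ∈ I, (ev σ a hcent p).support.sup dd ≤ v →
      p ∈ Submodule.span (GWA k R 1 ![σ] ![a]) (↑genSet : Set (GWA k R 1 ![σ] ![a])) := by
    intro v
    induction v using Nat.strong_induction_on with
    | _ v ih =>
    intro p hp hD
    by_cases hbd : ∀ m, ev σ a hcent p m ≠ 0 → -(N:ℤ) ≤ m ∧ m ≤ N
    · -- bounded case
      have hevp : ev σ a hcent p ∈ EI := ⟨p, hp, rfl⟩
      have hsupp : ev σ a hcent p ∈ Finsupp.supported R R S := by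
        rw [Finsupp.mem_supported]
        intro m hm
        rw [Finset.mem_coe, Finsupp.mem_support_iff] at hm
        exact Set.mem_Icc.mpr (hbd m hm)
      have hw : (⟨ev σ a hcent p, hsupp⟩ : Finsupp.supported R R S) ∈
          Submodule.span R (↑s' : Set (Finsupp.supported R R S)) := by
        rw [hs']
        exact hevp
      have key : ∀ u ∈ Submodule.span R (↑s' : Set (Finsupp.supported R R S)),
          rec' σ a (u : ℤ →₀ R) ∈ Submodule.span (GWA k R 1 ![σ] ![a]) (↑genSet :
            Set (GWA k R 1 ![σ] ![a])) := by
        intro u hu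
        induction hu using Submodule.span_induction with
        | mem u hu =>
            have hEI : (u : ℤ →₀ R) ∈ EI := hs'sub hu
            have hgev : ev σ a hcent (genOf u) = (u : ℤ →₀ R) := by
              rw [hgenOf]; dsimp only; rw [dif_pos hEI]; exact hEI.choose_spec.2
            have h1 : rec' σ a (u : ℤ →₀ R) = genOf u := by
              rw [← hgev, rec'_ev]
            rw [h1]
            exact Submodule.subset_span (Finset.mem_coe.mpr (Finset.mem_image_of_mem _ hu))
        | zero => rw [Submodule.coe_zero, map_zero]; exact Submodule.zero_mem _
        | add u u' _ _ h1 h2 => rw [Submodule.coe_add, map_add]; exact Submodule.add_mem _ h1 h2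
        | smul c u _ h1 =>
            rw [SetLike.val_smul, rec'_rsmul]
            exact Submodule.smul_mem _ _ h1
      have := key _ hw
      rwa [rec'_ev] at this
    · -- unbounded case
      rcases not_forall.mp hbd with ⟨m₁, hm₁⟩
      rcases Classical.not_imp.mp hm₁ with ⟨hm₁ne, hm₁out⟩
      have hsupne : (ev σ a hcent p).support.Nonempty :=
        ⟨m₁, Finsupp.mem_support_iff.mpr hm₁ne⟩
      obtain ⟨m₀, hm₀mem, hm₀sup⟩ := Finset.exists_mem_eq_sup _ hsupne dd
      have hbound : ∀ m, ev σ a hcent p m ≠ 0 → dd m ≤ dd m₀ := fun m hm =>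
        hm₀sup ▸ Finset.le_sup (Finsupp.mem_support_iff.mpr hm)
      have hddv : dd m₀ ≤ v := hm₀sup ▸ hD
      have hv₀ : 2 * N < dd m₀ := by
        have h1 := hbound m₁ hm₁ne
        simp only [dd] at h1 ⊢
        omega
      rcases le_or_gt 0 m₀ with hpos | hneg
      · -- leading term at positive position
        set K := m₀.toNat with hKdef
        have hm₀K : m₀ = (K : ℤ) := by omega
        have hKN : N < K := by simp only [dd] at hv₀; omega
        have hpb : ∀ m, ev σ a hcent p m ≠ 0 → -(K:ℤ) ≤ m ∧ m ≤ K := by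
          intro m hm
          have := hbound m hm
          simp only [dd] at this
          omega
        have hmem : (⇑σ.symm)^[K] (ev σ a hcent p K) ∈ Lp σ a hcent I K :=
          ⟨p, hp, hpb, rfl⟩
        rw [hLp K (le_of_lt hKN)] at hmem
        obtain ⟨q, hqI, hqb, hqtw⟩ := hmem
        set j := K - N with hjdef
        have hqspan : q ∈ Submodule.span (GWA k R 1 ![σ] ![a]) (↑genSet :
            Set (GWA k R 1 ![σ] ![a])) := by
          refine ih (2*N) (by omega) q hqI (Finset.sup_le fun m hm => ?_)
          have := hqb m (Finsupp.mem_support_iff.mp hm)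
          simp only [dd]
          omega
        obtain ⟨hXb, hXt⟩ := Xop_iter σ a j (N:ℤ) (by positivity) (ev σ a hcent q) hqb
        have hevx : ev σ a hcent (xx σ a ^ j * q) =
            (⇑(Xop (k := k) σ a))^[j] (ev σ a hcent q) := ev_xpow_mul σ a hcent j q
        have htop : ev σ a hcent (xx σ a ^ j * q) (K : ℤ) = ev σ a hcent p (K : ℤ) := by
          rw [hevx, show ((K : ℤ)) = (N : ℤ) + j from by push_cast; omega, hXt]
          have h2 : ev σ a hcent q N = (⇑σ)^[N] ((⇑σ.symm)^[K] (ev σ a hcent p K)) := by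
            rw [← hqtw, iter_symm]
          rw [h2, ← Function.iterate_add_apply, show j + N = K from by omega, iter_symm]
          congr 1
          push_cast
          omega
        set p' := p - xx σ a ^ j * q with hp'def
        have hp'I : p' ∈ I := I.sub_mem hp (I.smul_mem _ hqI)
        have hp'b : ∀ m, ev σ a hcent p' m ≠ 0 → dd m ≤ 2*K - 1 := by
          intro m hm
          rw [hp'def, ev_sub, Finsupp.sub_apply] at hm
          have hmne : m ≠ (K : ℤ) := by
            rintro rfl
            rw [htop, sub_self] at hm
            exact hm rfl
          rcases eq_or_ne (ev σ a hcent p m) 0 with h1 | h1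
          · have h2 : ev σ a hcent (xx σ a ^ j * q) m ≠ 0 := fun h => by
              rw [h1, h, sub_self] at hm; exact hm rfl
            rw [hevx] at h2
            have := hXb m h2
            simp only [dd]
            omega
          · have h3 := hpb m h1
            simp only [dd]
            omega
        have hp'span : p' ∈ Submodule.span (GWA k R 1 ![σ] ![a]) (↑genSet :
            Set (GWA k R 1 ![σ] ![a])) := by
          refine ih (2*K - 1) (by simp only [dd] at hddv; omega) p' hp'I
            (Finset.sup_le fun m hm => hp'b m (Finsupp.mem_support_iff.mp hm))
        have hpeq : p = p' + xx σ a ^ j * q := by rw [hp'def, sub_add_cancel]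
        rw [hpeq]
        exact Submodule.add_mem _ hp'span (Submodule.smul_mem _ _ hqspan)
      · -- leading term at negative position
        set K := (-m₀).toNat with hKdef
        have hm₀K : m₀ = -(K : ℤ) := by omega
        have hKN : N < K := by simp only [dd] at hv₀; omega
        have hpb : ∀ m, ev σ a hcent p m ≠ 0 → -(K:ℤ) ≤ m ∧ m ≤ K := by
          intro m hm
          have := hbound m hm
          simp only [dd] at this
          omega
        have hmem : (⇑σ)^[K] (ev σ a hcent p (-(K:ℤ))) ∈ Lm σ a hcent I K :=
          ⟨p, hp, hpb, rfl⟩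
        rw [hLm K (le_of_lt hKN)] at hmem
        obtain ⟨q, hqI, hqb, hqtw⟩ := hmem
        set j := K - N with hjdef
        have hqspan : q ∈ Submodule.span (GWA k R 1 ![σ] ![a]) (↑genSet :
            Set (GWA k R 1 ![σ] ![a])) := by
          refine ih (2*N) (by omega) q hqI (Finset.sup_le fun m hm => ?_)
          have := hqb m (Finsupp.mem_support_iff.mp hm)
          simp only [dd]
          omega
        obtain ⟨hYb, hYt⟩ := Yop_iter σ a j (N:ℤ) (by positivity) (ev σ a hcent q) hqb
        have hevy : ev σ a hcent (yy σ a ^ j * q) =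
            (⇑(Yop (k := k) σ a))^[j] (ev σ a hcent q) := ev_ypow_mul σ a hcent j q
        have htop : ev σ a hcent (yy σ a ^ j * q) (-(K : ℤ)) = ev σ a hcent p (-(K : ℤ)) := by
          rw [hevy, show (-(K : ℤ)) = -(N : ℤ) - j from by push_cast; omega, hYt]
          have h2 : ev σ a hcent q (-(N:ℤ)) =
              (⇑σ.symm)^[N] ((⇑σ)^[K] (ev σ a hcent p (-(K:ℤ)))) := by
            rw [← hqtw, symm_iter]
          rw [h2, ← Function.iterate_add_apply, show j + N = K from by omega, symm_iter]
          congr 1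
          push_cast
          omega
        set p' := p - yy σ a ^ j * q with hp'def
        have hp'I : p' ∈ I := I.sub_mem hp (I.smul_mem _ hqI)
        have hp'b : ∀ m, ev σ a hcent p' m ≠ 0 → dd m ≤ 2*K - 2 := by
          intro m hm
          rw [hp'def, ev_sub, Finsupp.sub_apply] at hm
          have hmne : m ≠ -(K : ℤ) := by
            rintro rfl
            rw [htop, sub_self] at hm
            exact hm rfl
          rcases eq_or_ne (ev σ a hcent p m) 0 with h1 | h1
          · have h2 : ev σ a hcent (yy σ a ^ j * q) m ≠ 0 := fun h => by
              rw [h1, h, sub_self] at hm; exact hm rfl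
            rw [hevy] at h2
            have := hYb m h2
            simp only [dd]
            omega
          · have h3 := hpb m h1
            have h4 := hbound m h1
            simp only [dd] at h4 ⊢
            omega
        have hp'span : p' ∈ Submodule.span (GWA k R 1 ![σ] ![a]) (↑genSet :
            Set (GWA k R 1 ![σ] ![a])) := by
          refine ih (2*K - 2) (by simp only [dd] at hddv; omega) p' hp'I
            (Finset.sup_le fun m hm => hp'b m (Finsupp.mem_support_iff.mp hm))
        have hpeq : p = p' + yy σ a ^ j * q := by rw [hp'def, sub_add_cancel]
        rw [hpeq]
        exact Submodule.add_mem _ hp'span (Submodule.smul_mem _ _ hqspan)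
  refine ⟨genSet, le_antisymm (Submodule.span_le.mpr ?_) fun p hp =>
    main _ p hp le_rfl⟩
  intro g hg
  rw [Finset.mem_coe, hgenSet, Finset.mem_image] at hg
  obtain ⟨w, hws', rfl⟩ := hg
  rw [hgenOf]
  dsimp only
  by_cases h : (w : ℤ →₀ R) ∈ EI
  · rw [dif_pos h]
    exact h.choose_spec.1
  · rw [dif_neg h]
    exact I.zero_mem
end

section
/- Let J(a) = k[z](σ, a) be a classical generalized Weyl algebra with σ(z) = z - 1 and a ∈ k[z] nonzero, over an algebraically closed field k of characteristic zero. If a has a pair of roots r₁, r₂ with r₁ - r₂ a positive integer, then J(a) is not simple. -/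
/-- The automorphism `σ` of `k[z]` with `σ(z) = z - 1`. -/
noncomputable def shiftDown (k : Type*) [CommRing k] : Polynomial k ≃ₐ[k] Polynomial k :=
  AlgEquiv.ofAlgHom (Polynomial.aeval (Polynomial.X - 1)) (Polynomial.aeval (Polynomial.X + 1))
    (by ext : 1; simp) (by ext : 1; simp)

section aux
variable {k : Type*} [Field k]
open Polynomial Finsupp

lemma aeval_eval_sub (r : Polynomial k) (t : k) :
    (Polynomial.aeval (Polynomial.X - 1 : Polynomial k) r).eval t = r.eval (t - 1) := by
  rw [Polynomial.aeval_def, Polynomial.algebraMap_eq, ← Polynomial.comp, Polynomial.eval_comp]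
  simp

lemma aeval_eval_add (r : Polynomial k) (t : k) :
    (Polynomial.aeval (Polynomial.X + 1 : Polynomial k) r).eval t = r.eval (t + 1) := by
  rw [Polynomial.aeval_def, Polynomial.algebraMap_eq, ← Polynomial.comp, Polynomial.eval_comp]
  simp

variable (k) in
abbrev V := ℕ →₀ k

/-- diagonal action of a polynomial -/
noncomputable def Eop (c : ℕ → k) (r : Polynomial k) : V k →ₗ[k] V k :=
  Finsupp.lsum k fun n => r.eval (c n) • Finsupp.lsingle n

noncomputable def Xop : V k →ₗ[k] V k :=
  Finsupp.lsum k fun n => Finsupp.lsingle (n + 1)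

noncomputable def Yop (μ : ℕ → k) : V k →ₗ[k] V k :=
  Finsupp.lsum k fun n => μ n • Finsupp.lsingle (n - 1)

@[simp] lemma Eop_single (c : ℕ → k) (r : Polynomial k) (n : ℕ) (t : k) :
    Eop c r (Finsupp.single n t) = r.eval (c n) • Finsupp.single n t := by
  simp [Eop, Finsupp.smul_single, mul_comm]

@[simp] lemma Xop_single (n : ℕ) (t : k) :
    Xop (Finsupp.single n t) = Finsupp.single (n + 1) t := by simp [Xop]

@[simp] lemma Yop_single (μ : ℕ → k) (n : ℕ) (t : k) :
    Yop μ (Finsupp.single n t) = μ n • Finsupp.single (n - 1) t := by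
  simp [Yop, Finsupp.smul_single]

end aux

section rel
variable {k : Type*} [Field k]
open Polynomial

lemma shiftDown_poly_apply (r : Polynomial k) :
    shiftDown k r = Polynomial.aeval (Polynomial.X - 1) r := rfl
lemma shiftDown_symm_poly_apply (r : Polynomial k) :
    (shiftDown k).symm r = Polynomial.aeval (Polynomial.X + 1) r := rfl

variable (a : Polynomial k) (r₂ : k)

noncomputable def Frep : FreeAlgebra k (Polynomial k ⊕ Fin 1 × Bool) →ₐ[k] Module.End k (V k) :=
  FreeAlgebra.lift k (Sum.elim (fun r => Eop (fun n => r₂ + 1 + n) r)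
    (fun p => if p.2 then Yop (fun n => a.eval (r₂ + n)) else Xop))

@[simp] lemma Frep_inl (r : Polynomial k) :
    Frep a r₂ (FreeAlgebra.ι k (.inl r)) = Eop (fun n => r₂ + 1 + n) r := by
  simp [Frep]
@[simp] lemma Frep_x (i : Fin 1) :
    Frep a r₂ (FreeAlgebra.ι k (.inr (i, false))) = Xop := by simp [Frep]
@[simp] lemma Frep_y (i : Fin 1) :
    Frep a r₂ (FreeAlgebra.ι k (.inr (i, true))) = Yop (fun n => a.eval (r₂ + n)) := by
  simp [Frep]

lemma Frep_rel (ha2 : a.eval r₂ = 0) : ∀ ⦃x y⦄,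
    GWARel k (Polynomial k) 1 ![shiftDown k] ![a] x y → Frep a r₂ x = Frep a r₂ y := by
  intro x y h
  induction h with
  | add r s =>
      simp only [Frep_inl, map_add]; refine Finsupp.lhom_ext fun n t => ?_
      simp only [LinearMap.add_apply, Eop_single, Polynomial.eval_add, add_smul]
  | mul r s =>
      simp only [Frep_inl, map_mul]; refine Finsupp.lhom_ext fun n t => ?_
      simp only [Module.End.mul_apply, Eop_single, map_smul, smul_smul, Polynomial.eval_mul]
      rw [mul_comm]
  | smul c r =>
      simp only [Frep_inl, map_smul]; refine Finsupp.lhom_ext fun n t => ?_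
      simp only [LinearMap.smul_apply, Eop_single, Polynomial.eval_smul, smul_assoc,
        smul_eq_mul, mul_smul]
  | one =>
      simp only [Frep_inl, map_one]; refine Finsupp.lhom_ext fun n t => ?_
      simp [Eop_single]
  | xr i r =>
      simp only [map_mul, Frep_inl, Frep_x, Matrix.cons_val_fin_one]
      refine Finsupp.lhom_ext fun n t => ?_
      simp only [Module.End.mul_apply, Xop_single, Eop_single, map_smul]
      have : (shiftDown k r).eval (r₂ + 1 + (n + 1 : ℕ)) = r.eval (r₂ + 1 + n) := by
        rw [shiftDown_poly_apply, aeval_eval_sub]; push_cast; ring_nf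
      rw [this]
  | yr i r =>
      simp only [map_mul, Frep_inl, Frep_y, Matrix.cons_val_fin_one]
      refine Finsupp.lhom_ext fun n t => ?_
      simp only [Module.End.mul_apply, Yop_single, Eop_single, map_smul, smul_smul,
        shiftDown_symm_poly_apply, aeval_eval_add]
      cases n with
      | zero => simp [ha2]
      | succ n =>
          simp only [Nat.succ_sub_one]
          congr 1
          push_cast; ring_nf
  | yx i =>
      simp only [map_mul, Frep_inl, Frep_y, Frep_x, Matrix.cons_val_fin_one]
      refine Finsupp.lhom_ext fun n t => ?_
      simp only [Module.End.mul_apply, Xop_single, Yop_single, Eop_single, Nat.add_sub_cancel]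
      congr 1
      push_cast; ring_nf
  | xy i =>
      simp only [map_mul, Frep_inl, Frep_y, Frep_x, Matrix.cons_val_fin_one]
      refine Finsupp.lhom_ext fun n t => ?_
      simp only [Module.End.mul_apply, Yop_single, Xop_single, Eop_single, map_smul,
        shiftDown_poly_apply, aeval_eval_sub]
      cases n with
      | zero => simp [ha2]
      | succ n =>
          simp only [Nat.succ_sub_one]
          congr 1
          push_cast; ring_nf
  | comm i j s t h => exact absurd (Subsingleton.elim i j) h

end rel

section final
variable {k : Type*} [Field k]
open Polynomial

noncomputable def psi (a : Polynomial k) (r₂ : k) (ha2 : a.eval r₂ = 0) :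
    GWA k (Polynomial k) 1 ![shiftDown k] ![a] →ₐ[k] Module.End k (V k) :=
  RingQuot.liftAlgHom k ⟨Frep a r₂, fun _ _ hxy => Frep_rel a r₂ ha2 hxy⟩

lemma psi_mk (a : Polynomial k) (r₂ : k) (ha2 : a.eval r₂ = 0)
    (f : FreeAlgebra k (Polynomial k ⊕ Fin 1 × Bool)) :
    psi a r₂ ha2 (RingQuot.mkAlgHom k (GWARel k (Polynomial k) 1 ![shiftDown k] ![a]) f)
      = Frep a r₂ f :=
  RingQuot.liftAlgHom_mkAlgHom_apply k _ _ _

/-- the invariant subspace -/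
noncomputable def Wsub (k : Type*) [Field k] (m : ℕ) : Submodule k (V k) :=
  Submodule.span k (Set.range fun j : ℕ => Finsupp.single (m + j) (1 : k))

lemma single_mem_Wsub {m n : ℕ} (h : m ≤ n) (t : k) : Finsupp.single n t ∈ Wsub k m := by
  obtain ⟨j, rfl⟩ := Nat.exists_eq_add_of_le h
  have : Finsupp.single (m + j) t = t • Finsupp.single (m + j) (1 : k) := by
    simp [Finsupp.smul_single]
  rw [this]
  exact Submodule.smul_mem _ _ (Submodule.subset_span ⟨j, rfl⟩)

lemma Wsub_apply_zero {m : ℕ} (hm : 0 < m) {v : V k} (hv : v ∈ Wsub k m) : v 0 = 0 := by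
  induction hv using Submodule.span_induction with
  | mem w hw => obtain ⟨j, rfl⟩ := hw; exact Finsupp.single_eq_of_ne (by omega)
  | zero => simp
  | add u v _ _ hu hv => simp [hu, hv]
  | smul c u _ hu => simp [hu]

lemma Eop_mem_Wsub {m : ℕ} (c : ℕ → k) (r : Polynomial k) {v : V k} (hv : v ∈ Wsub k m) :
    Eop c r v ∈ Wsub k m := by
  induction hv using Submodule.span_induction with
  | mem w hw => obtain ⟨j, rfl⟩ := hw; rw [Eop_single]; exact Submodule.smul_mem _ _ (single_mem_Wsub (Nat.le_add_right m j) _)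
  | zero => simp
  | add u v _ _ hu hv => rw [map_add]; exact Submodule.add_mem _ hu hv
  | smul c u _ hu => rw [map_smul]; exact Submodule.smul_mem _ _ hu

lemma Xop_mem_Wsub {m : ℕ} {v : V k} (hv : v ∈ Wsub k m) : Xop v ∈ Wsub k m := by
  induction hv using Submodule.span_induction with
  | mem w hw => obtain ⟨j, rfl⟩ := hw; rw [Xop_single]; exact single_mem_Wsub (by omega) _
  | zero => simp
  | add u v _ _ hu hv => rw [map_add]; exact Submodule.add_mem _ hu hv
  | smul c u _ hu => rw [map_smul]; exact Submodule.smul_mem _ _ hu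

lemma Yop_mem_Wsub {m : ℕ} (μ : ℕ → k) (hμ : μ m = 0) {v : V k} (hv : v ∈ Wsub k m) :
    Yop μ v ∈ Wsub k m := by
  induction hv using Submodule.span_induction with
  | mem w hw =>
      obtain ⟨j, rfl⟩ := hw; rw [Yop_single]
      rcases Nat.eq_zero_or_pos j with rfl | hj
      · simp [hμ]
      · exact Submodule.smul_mem _ _ (single_mem_Wsub (by omega) _)
  | zero => simp
  | add u v _ _ hu hv => rw [map_add]; exact Submodule.add_mem _ hu hv
  | smul c u _ hu => rw [map_smul]; exact Submodule.smul_mem _ _ hu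

lemma psi_inv (a : Polynomial k) (r₂ : k) (ha2 : a.eval r₂ = 0) (m : ℕ)
    (hrt : a.eval (r₂ + (m : k)) = 0) (g : GWA k (Polynomial k) 1 ![shiftDown k] ![a]) :
    ∀ v ∈ Wsub k m, psi a r₂ ha2 g v ∈ Wsub k m := by
  obtain ⟨f, rfl⟩ := RingQuot.mkAlgHom_surjective k _ g
  rw [psi_mk]
  induction f using FreeAlgebra.induction with
  | grade0 c =>
      intro v hv
      rw [AlgHom.commutes]
      simpa using Submodule.smul_mem _ c hv
  | grade1 z =>
      rcases z with r | ⟨i, b⟩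
      · intro v hv; rw [Frep_inl]; exact Eop_mem_Wsub _ _ hv
      · cases b
        · intro v hv; rw [Frep_x]; exact Xop_mem_Wsub hv
        · intro v hv; rw [Frep_y]
          refine Yop_mem_Wsub _ ?_ hv
          simpa using hrt
  | mul f g hf hg => intro v hv; rw [map_mul]; exact hf _ (hg _ hv)
  | add f g hf hg => intro v hv; rw [map_add]; exact Submodule.add_mem _ (hf _ hv) (hg _ hv)

end final

section main
variable {k : Type*} [Field k]
open Polynomial

lemma Xop_pow_single (j n : ℕ) (t : k) :
    (Xop ^ j : Module.End k (V k)) (Finsupp.single n t) = Finsupp.single (n + j) t := by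
  induction j generalizing n with
  | zero => simp
  | succ j ih => rw [pow_succ, Module.End.mul_apply, Xop_single, ih]; congr 1; omega

lemma Xop_pow_mem (m : ℕ) (v : V k) : (Xop ^ m : Module.End k (V k)) v ∈ Wsub k m := by
  induction v using Finsupp.induction with
  | zero => simp
  | single_add n t f _ _ ih =>
      rw [map_add]
      exact Submodule.add_mem _ (by rw [Xop_pow_single]; exact single_mem_Wsub (by omega) _) ih

theorem classical_gwa_congruent_roots_not_simple' (k : Type*) [Field k] [IsAlgClosed k]
    [CharZero k] (a : Polynomial k) (ha : a ≠ 0)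
    (r₁ r₂ : k) (h₁ : a.IsRoot r₁) (h₂ : a.IsRoot r₂)
    (hcong : ∃ m : ℕ, 0 < m ∧ r₁ - r₂ = m) :
    ¬ IsSimpleRing (GWA k (Polynomial k) 1 ![shiftDown k] ![a]) := by
  obtain ⟨m, hm, hr⟩ := hcong
  intro hs
  have ha2 : a.eval r₂ = 0 := h₂
  have hrt : a.eval (r₂ + (m : k)) = 0 := by
    have h : r₁ = r₂ + (m : k) := by
      rw [eq_add_of_sub_eq hr]; ring
    rw [← h]; exact h₁
  set ψ := psi a r₂ ha2 with hψ
  have hψx : ψ (GWA.x k (Polynomial k) ![shiftDown k] ![a] 0) = Xop := by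
    rw [hψ, GWA.x, psi_mk, Frep_x]
  let I : TwoSidedIdeal (GWA k (Polynomial k) 1 ![shiftDown k] ![a]) :=
    TwoSidedIdeal.mk' {g | ∀ v, ψ g v ∈ Wsub k m}
      (fun v => by rw [map_zero]; exact (Wsub k m).zero_mem)
      (fun hx hy v => by
        rw [map_add, LinearMap.add_apply]; exact Submodule.add_mem _ (hx v) (hy v))
      (fun hx v => by rw [map_neg, LinearMap.neg_apply]; exact Submodule.neg_mem _ (hx v))
      (fun {x y} hy v => by
        rw [map_mul, Module.End.mul_apply]; exact psi_inv a r₂ ha2 m hrt x _ (hy v))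
      (fun {x y} hx v => by rw [map_mul, Module.End.mul_apply]; exact hx _)
  have hxm : (GWA.x k (Polynomial k) ![shiftDown k] ![a] 0) ^ m ∈ I := by
    rw [TwoSidedIdeal.mem_mk']
    intro v
    rw [map_pow, hψx]
    exact Xop_pow_mem m v
  haveI := hs.simple
  rcases eq_bot_or_eq_top I with hI | hI
  · rw [hI, TwoSidedIdeal.mem_bot] at hxm
    have h0 : ψ ((GWA.x k (Polynomial k) ![shiftDown k] ![a] 0) ^ m) (Finsupp.single 0 1)
        = Finsupp.single m (1 : k) := by
      rw [map_pow, hψx, Xop_pow_single, Nat.zero_add]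
    rw [hxm, map_zero] at h0
    have : (Finsupp.single m (1:k)) m = 0 := by rw [← h0]; simp
    rw [Finsupp.single_eq_same] at this
    exact one_ne_zero this
  · have h1 : (1 : GWA k (Polynomial k) 1 ![shiftDown k] ![a]) ∈ I := by
      rw [hI]; exact TwoSidedIdeal.mem_top _
    rw [TwoSidedIdeal.mem_mk'] at h1
    have := Wsub_apply_zero hm (h1 (Finsupp.single 0 1))
    rw [map_one] at this
    simp at this

end main

/-- If `a ∈ k[z]` is nonzero and has a pair of roots `r₁, r₂` with
`r₁ - r₂` a positive integer, then the classical GWA `J(a) = k[z](σ, a)` with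
`σ(z) = z - 1` is not simple. -/
theorem classical_gwa_congruent_roots_not_simple (k : Type*) [Field k] [IsAlgClosed k]
    [CharZero k] (a : Polynomial k) (ha : a ≠ 0)
    (r₁ r₂ : k) (h₁ : a.IsRoot r₁) (h₂ : a.IsRoot r₂)
    (hcong : ∃ m : ℕ, 0 < m ∧ r₁ - r₂ = m) :
    ¬ IsSimpleRing (GWA k (Polynomial k) 1 ![shiftDown k] ![a]) := by
  exact classical_gwa_congruent_roots_not_simple' k a ha r₁ r₂ h₁ h₂ hcong
end

section
/- For λ ∈ k not an integer, the vector space V^λ with basis {v_i : i ∈ ℤ}, with A_1(k)-action p·v_i = v_{i+1} and q·v_i = (i+λ)·v_{i-1}, is a simple left module over the first Weyl algebra. -/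
/-- Presentation relation of the first Weyl algebra: `q * p = p * q + 1`,
where `p` is the generator `0` and `q` the generator `1`. -/
inductive WeylRel (k : Type*) [CommRing k] :
    FreeAlgebra k (Fin 2) → FreeAlgebra k (Fin 2) → Prop
  | qp : WeylRel k (FreeAlgebra.ι k 1 * FreeAlgebra.ι k 0)
      (FreeAlgebra.ι k 0 * FreeAlgebra.ι k 1 + 1)

/-- The first Weyl algebra `A₁(k)`, generated by `p, q` with `qp - pq = 1`. -/
abbrev WeylAlgebra (k : Type*) [CommRing k] : Type _ := RingQuot (WeylRel k)

/-- The generator `p` of the first Weyl algebra. -/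
noncomputable def Wp (k : Type*) [CommRing k] : WeylAlgebra k :=
  RingQuot.mkAlgHom k (WeylRel k) (FreeAlgebra.ι k 0)

/-- The generator `q` of the first Weyl algebra. -/
noncomputable def Wq (k : Type*) [CommRing k] : WeylAlgebra k :=
  RingQuot.mkAlgHom k (WeylRel k) (FreeAlgebra.ι k 1)

lemma weyl_ksmul {k : Type*} [Field k] {M : Type*} [AddCommGroup M] [Module k M]
    [Module (WeylAlgebra k) M] [IsScalarTower k (WeylAlgebra k) M]
    (c : k) (a : WeylAlgebra k) (x : M) : a • (c • x) = c • (a • x) := by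
  rw [← algebraMap_smul (WeylAlgebra k) c x, ← mul_smul, ← Algebra.commutes, mul_smul,
    algebraMap_smul]

/-- For `λ ∈ k` not an integer, the module `V^λ` with basis
`{v_i : i ∈ ℤ}` and action `p·v_i = v_{i+1}`, `q·v_i = (i + λ)·v_{i-1}` is a
simple left module over the first Weyl algebra. -/
theorem weyl_Vlambda_isSimpleModule (k : Type*) [Field k] [CharZero k]
    (lam : k) (hlam : ∀ n : ℤ, lam ≠ (n : k))
    (M : Type*) [AddCommGroup M] [Module k M] [Module (WeylAlgebra k) M]
    [IsScalarTower k (WeylAlgebra k) M]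
    (b : Module.Basis ℤ k M)
    (hp : ∀ i : ℤ, Wp k • b i = b (i + 1))
    (hq : ∀ i : ℤ, Wq k • b i = ((i : k) + lam) • b (i - 1)) :
    IsSimpleModule (WeylAlgebra k) M := by
  haveI : Nontrivial M := ⟨b 0, 0, b.ne_zero 0⟩
  -- the diagonal action of q*p
  have hqp : ∀ m : ℤ, (Wq k * Wp k) • b m = ((m : k) + 1 + lam) • b m := by
    intro m
    rw [mul_smul, hp, hq]
    have : (m + 1 : ℤ) - 1 = m := by ring
    rw [this]
    push_cast
    ring_nf
  refine (isSimpleModule_iff _ _).mpr ⟨?_⟩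
  intro N
  by_cases hN : N = ⊥
  · exact Or.inl hN
  right
  -- N is closed under k-scalars
  have hk : ∀ (c : k) (x : M), x ∈ N → c • x ∈ N := by
    intro c x hx
    rw [← algebraMap_smul (WeylAlgebra k) c x]
    exact N.smul_mem _ hx
  -- Step A : some basis vector lies in N
  have stepA : ∃ i : ℤ, b i ∈ N := by
    obtain ⟨x, hxN, hx0⟩ : ∃ x ∈ N, x ≠ 0 := by
      by_contra h
      push_neg at h
      exact hN (by ext y; simp only [Submodule.mem_bot]; exact ⟨fun hy => h y hy, fun hy => hy ▸ N.zero_mem⟩)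
    have key : ∀ n : ℕ, ∀ x : M, x ∈ N → x ≠ 0 → (b.repr x).support.card ≤ n →
        ∃ i : ℤ, b i ∈ N := by
      intro n
      induction n with
      | zero =>
        intro x hxN hx0 hc
        exfalso
        have : b.repr x ≠ 0 := by
          simpa using hx0
        have hne : (b.repr x).support.Nonempty := Finsupp.support_nonempty_iff.mpr this
        have := Finset.card_pos.mpr hne
        omega
      | succ n ih =>
        intro x hxN hx0 hc
        by_cases h1 : (b.repr x).support.card = 1
        · obtain ⟨i, c, hc0, hxi⟩ := Finsupp.card_support_eq_one'.mp h1
          have hx : x = c • b i := by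
            apply b.repr.injective
            rw [hxi, map_smul, b.repr_self, Finsupp.smul_single, smul_eq_mul, mul_one]
          have : b i = c⁻¹ • x := by rw [hx, smul_smul, inv_mul_cancel₀ hc0, one_smul]
          exact ⟨i, this ▸ hk c⁻¹ x hxN⟩
        · have hely : b.repr x ≠ 0 := by simpa using hx0
          have hne : (b.repr x).support.Nonempty := Finsupp.support_nonempty_iff.mpr hely
          have h2 : 1 < (b.repr x).support.card := by
            have := Finset.card_pos.mpr hne
            omega
          obtain ⟨i, hi, j, hj, hij⟩ := Finset.one_lt_card.mp h2
          -- the shifted diagonal operator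
          set c0 : k := (i : k) + 1 + lam with hc0
          let T : M →ₗ[k] M :=
            { toFun := fun z => (Wq k * Wp k) • z - c0 • z
              map_add' := by
                intro z w
                simp only [smul_add]
                abel
              map_smul' := by
                intro r z
                simp only [RingHom.id_apply]
                rw [weyl_ksmul, smul_sub, smul_comm c0 r] }
          have hTb : ∀ m : ℤ, T (b m) = ((m : k) - (i : k)) • b m := by
            intro m
            show (Wq k * Wp k) • b m - c0 • b m = _
            rw [hqp m, ← sub_smul, hc0]
            ring_nf
          have hTrepr : ∀ (z : M) (m : ℤ),
              b.repr (T z) m = ((m : k) - (i : k)) * b.repr z m := by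
            intro z m
            have hmaps : (Finsupp.lapply m ∘ₗ (b.repr.toLinearMap ∘ₗ T)) =
                ((m : k) - (i : k)) • (Finsupp.lapply m ∘ₗ b.repr.toLinearMap) := by
              apply b.ext
              intro l
              simp only [LinearMap.comp_apply, LinearMap.smul_apply, LinearEquiv.coe_toLinearMap,
                Finsupp.lapply_apply, hTb l, map_smul, b.repr_self, Finsupp.smul_apply,
                Finsupp.single_apply, smul_eq_mul]
              by_cases hlm : l = m
              · subst hlm; simp
              · simp [hlm]
            have := LinearMap.congr_fun hmaps z
            simpa using this
          have hyN : T x ∈ N := by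
            have h1' : (Wq k * Wp k) • x ∈ N := N.smul_mem _ hxN
            have h2' : c0 • x ∈ N := hk c0 x hxN
            exact N.sub_mem h1' h2'
          have hysupp : (b.repr (T x)).support ⊆ (b.repr x).support.erase i := by
            intro m hm
            rw [Finsupp.mem_support_iff, hTrepr] at hm
            rw [Finset.mem_erase, Finsupp.mem_support_iff]
            constructor
            · rintro rfl; apply hm; simp
            · exact fun h => hm (by rw [h, mul_zero])
          have hyj : b.repr (T x) j ≠ 0 := by
            rw [hTrepr]
            apply mul_ne_zero
            · rw [sub_ne_zero]
              exact fun h => hij (Int.cast_injective h).symm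
            · exact Finsupp.mem_support_iff.mp hj
          have hy0 : T x ≠ 0 := fun h => hyj (by rw [h, map_zero]; rfl)
          have hcard : (b.repr (T x)).support.card ≤ n := by
            have := Finset.card_le_card hysupp
            have h3 := Finset.card_erase_of_mem hi
            omega
          exact ih (T x) hyN hy0 hcard
    exact key (b.repr x).support.card x hxN hx0 le_rfl
  -- Step B : all basis vectors lie in N
  obtain ⟨i, hiN⟩ := stepA
  have stepB : ∀ j : ℤ, b j ∈ N := by
    have main : ∀ d : ℤ, b (i + d) ∈ N := by
      intro d
      induction d using Int.induction_on with
      | zero => simpa using hiN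
      | succ n hn =>
        have := N.smul_mem (Wp k) hn
        rw [hp] at this
        convert this using 2
        ring
      | pred n hn =>
        have hw := N.smul_mem (Wq k) hn
        rw [hq] at hw
        set c : k := ((i + -(n : ℤ) : ℤ) : k) + lam with hc
        have hc0 : c ≠ 0 := by
          rw [hc]
          intro h
          push_cast at h
          refine hlam (-(i + -(n : ℤ))) ?_
          push_cast
          linear_combination h
        have := hk c⁻¹ _ hw
        rw [smul_smul, inv_mul_cancel₀ hc0, one_smul] at this
        convert this using 2
        ring
    intro j
    have := main (j - i)
    rwa [add_sub_cancel] at this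
  -- conclude N = ⊤
  rw [eq_top_iff]
  intro x _
  have : x ∈ Submodule.restrictScalars k N := by
    have hle : Submodule.span k (Set.range b) ≤ Submodule.restrictScalars k N := by
      rw [Submodule.span_le]
      rintro _ ⟨j, rfl⟩
      exact stepB j
    have : x ∈ Submodule.span k (Set.range b) := by
      rw [b.span_eq]; trivial
    exact hle this
  exact this
end

section
/- The modules V⁺ (supported in degrees ≥ 0, with p·v_i = v_{i+1}, q·v_i = i v_{i-1}) and V^λ for λ ∈ (0,1) (supported on ℤ with q·v_i = (i+λ)v_{i-1}) over the first Weyl algebra are not isomorphic, and V^λ ≇ V^μ for distinct λ, μ ∈ (0,1). -/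
/-- Auxiliary: `k`-linear map on a `V` given by scalar multiplication by an
element of a `k`-algebra acting on `V`. -/
noncomputable def algSmul {k : Type*} [CommRing k] (A : Type*) [Ring A] [Algebra k A]
    {V : Type*} [AddCommGroup V] [Module k V] [Module A V] [IsScalarTower k A V]
    (a : A) : V →ₗ[k] V where
  toFun v := a • v
  map_add' := smul_add a
  map_smul' r v := by
    show a • r • v = r • a • v
    rw [← algebraMap_smul A r v, ← mul_smul, ← Algebra.commutes r a, mul_smul, algebraMap_smul]

/-- Auxiliary: a linear map sending each basis vector to a nonzero multiple of a
(permuted) basis vector is injective. -/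
lemma basis_scale_shift_inj {k : Type*} [Field k] {V : Type*} [AddCommGroup V]
    [Module k V] {ι : Type*} (b : Module.Basis ι k V) (e : ι ≃ ι) (d : ι → k)
    (hd : ∀ i, d i ≠ 0) (T : V →ₗ[k] V) (hT : ∀ i, T (b i) = d i • b (e i)) :
    Function.Injective T := by
  have hcomp : (b.constr k (fun j => (d (e.symm j))⁻¹ • b (e.symm j))).comp T
      = LinearMap.id := by
    apply b.ext
    intro i
    simp [hT, smul_smul, Module.Basis.constr_basis, mul_inv_cancel₀ (hd i)]
  intro x y h
  have := congrArg (b.constr k (fun j => (d (e.symm j))⁻¹ • b (e.symm j))) h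
  rwa [← LinearMap.comp_apply, ← LinearMap.comp_apply, hcomp, LinearMap.id_apply,
    LinearMap.id_apply] at this

/-- Auxiliary: eigenvalues of a linear map which is diagonal in a basis are
among the diagonal entries. -/
lemma diag_eigen {k : Type*} [Field k] {V : Type*} [AddCommGroup V] [Module k V]
    {ι : Type*} (b : Module.Basis ι k V) (d : ι → k) (T : V →ₗ[k] V)
    (hT : ∀ i, T (b i) = d i • b i) (v : V) (t : k) (hv : v ≠ 0)
    (heq : T v = t • v) : ∃ i, d i = t := by
  by_contra h
  push_neg at h
  set S : V →ₗ[k] V := T - t • LinearMap.id with hS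
  have hSb : ∀ i, S (b i) = (d i - t) • b i := by
    intro i
    simp [hS, hT i, sub_smul]
  have hinj : Function.Injective S :=
    basis_scale_shift_inj b (Equiv.refl ι) (fun i => d i - t)
      (fun i => sub_ne_zero.mpr (h i)) S hSb
  have : S v = S 0 := by
    simp [hS, heq]
  exact hv (hinj this)

/-- Over the first Weyl algebra, the weight module `V⁺`
(with basis indexed by `ℕ`, `p·v_i = v_{i+1}`, `q·v_i = i v_{i-1}`) is not
isomorphic to `V^λ` for `λ ∈ (0,1)` (with basis indexed by `ℤ`,
`q·v_i = (i+λ) v_{i-1}`), and `V^λ ≇ V^μ` for distinct `λ, μ ∈ (0,1)`. -/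
theorem weyl_weight_modules_not_iso (k : Type*) [Field k] [LinearOrder k] [IsStrictOrderedRing k]
    (lam mu : k) (hlam : 0 < lam ∧ lam < 1) (hmu : 0 < mu ∧ mu < 1)
    -- the module V⁺ :
    (M : Type*) [AddCommGroup M] [Module k M] [Module (WeylAlgebra k) M]
    [IsScalarTower k (WeylAlgebra k) M] (b : Module.Basis ℕ k M)
    (hpM : ∀ i : ℕ, Wp k • b i = b (i + 1))
    (hqM0 : Wq k • b 0 = 0)
    (hqM : ∀ i : ℕ, Wq k • b (i + 1) = ((i : k) + 1) • b i)
    -- the module V^λ :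
    (N : Type*) [AddCommGroup N] [Module k N] [Module (WeylAlgebra k) N]
    [IsScalarTower k (WeylAlgebra k) N] (c : Module.Basis ℤ k N)
    (hpN : ∀ i : ℤ, Wp k • c i = c (i + 1))
    (hqN : ∀ i : ℤ, Wq k • c i = ((i : k) + lam) • c (i - 1))
    -- the module V^μ :
    (N' : Type*) [AddCommGroup N'] [Module k N'] [Module (WeylAlgebra k) N']
    [IsScalarTower k (WeylAlgebra k) N'] (c' : Module.Basis ℤ k N')
    (hpN' : ∀ i : ℤ, Wp k • c' i = c' (i + 1))
    (hqN' : ∀ i : ℤ, Wq k • c' i = ((i : k) + mu) • c' (i - 1)) :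
    ¬ Nonempty (M ≃ₗ[WeylAlgebra k] N) ∧
      (lam ≠ mu → ¬ Nonempty (N ≃ₗ[WeylAlgebra k] N')) := by
  -- coefficients `i + λ` are all nonzero
  have hlz : ∀ i : ℤ, (i : k) + lam ≠ 0 := by
    intro i hi
    have h1 : (i : k) = -lam := by linarith
    have h2 : ((-1 : ℤ) : k) < (i : k) := by push_cast; linarith [hlam.2]
    have h3 : (i : k) < ((0 : ℤ) : k) := by push_cast; linarith [hlam.1]
    have h2' : (-1 : ℤ) < i := by exact_mod_cast h2
    have h3' : i < 0 := by exact_mod_cast h3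
    omega
  constructor
  · rintro ⟨f⟩
    -- `b 0` is killed by `q`, but `q` acts injectively on `N`.
    have hinj : Function.Injective (algSmul (WeylAlgebra k) (Wq k) : N →ₗ[k] N) := by
      refine basis_scale_shift_inj c (Equiv.subRight (1 : ℤ)) (fun i => (i : k) + lam)
        hlz _ (fun i => ?_)
      show Wq k • c i = ((i : k) + lam) • c (i - 1)
      exact hqN i
    have h1 : Wq k • f (b 0) = 0 := by
      rw [← map_smul, hqM0, map_zero]
    have h2 : f (b 0) = 0 := by
      have : (algSmul (WeylAlgebra k) (Wq k) : N →ₗ[k] N) (f (b 0))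
          = (algSmul (WeylAlgebra k) (Wq k) : N →ₗ[k] N) 0 := by
        show Wq k • f (b 0) = Wq k • (0 : N)
        rw [h1, smul_zero]
      exact hinj this
    exact b.ne_zero 0 (f.injective (by simpa using h2))
  · intro hne
    rintro ⟨f⟩
    -- `f (c 0)` is a `pq`-eigenvector of eigenvalue `λ` in `N'`,
    -- but the eigenvalues there are `i + μ`.
    have hpq : (Wp k * Wq k) • c 0 = lam • c 0 := by
      rw [mul_smul, hqN 0]
      have : Wp k • (((0 : ℤ) : k) + lam) • c (0 - 1)
          = (((0 : ℤ) : k) + lam) • (Wp k • c (0 - 1)) :=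
        (algSmul (WeylAlgebra k) (Wp k) : N →ₗ[k] N).map_smul _ _
      rw [this, hpN]
      norm_num
    have hfk : ∀ (r : k) (x : N), f (r • x) = r • f x := by
      intro r x
      rw [← algebraMap_smul (WeylAlgebra k) r x, map_smul, algebraMap_smul]
    have hv : (algSmul (WeylAlgebra k) (Wp k * Wq k) : N' →ₗ[k] N') (f (c 0))
        = lam • f (c 0) := by
      show (Wp k * Wq k) • f (c 0) = lam • f (c 0)
      rw [← map_smul, hpq, hfk]
    have hvne : f (c 0) ≠ 0 := fun h =>
      c.ne_zero 0 (f.injective (by simpa using h))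
    have hTb : ∀ i : ℤ, (algSmul (WeylAlgebra k) (Wp k * Wq k) : N' →ₗ[k] N') (c' i)
        = ((i : k) + mu) • c' i := by
      intro i
      show (Wp k * Wq k) • c' i = ((i : k) + mu) • c' i
      rw [mul_smul, hqN' i]
      have : Wp k • (((i : ℤ) : k) + mu) • c' (i - 1)
          = (((i : ℤ) : k) + mu) • (Wp k • c' (i - 1)) :=
        (algSmul (WeylAlgebra k) (Wp k) : N' →ₗ[k] N').map_smul _ _
      rw [this, hpN']
      norm_num
    obtain ⟨j, hj⟩ := diag_eigen c' (fun i => (i : k) + mu) _ hTb (f (c 0)) lam hvne hv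
    -- so `λ - μ = j` is a nonzero integer of absolute value `< 1`: contradiction
    have hj0 : j ≠ 0 := by
      rintro rfl
      simp only [Int.cast_zero, zero_add] at hj
      exact hne hj.symm
    have h2 : ((-1 : ℤ) : k) < (j : k) := by push_cast; nlinarith [hlam.1, hlam.2, hmu.1, hmu.2, hj]
    have h3 : (j : k) < ((1 : ℤ) : k) := by push_cast; nlinarith [hlam.1, hlam.2, hmu.1, hmu.2, hj]
    have h2' : (-1 : ℤ) < j := by exact_mod_cast h2
    have h3' : j < 1 := by exact_mod_cast h3
    omega
end

section
/- For λ ∈ k, the primitive quotient U_λ = U(sl₂)/(Ω - (λ² - 1)) is isomorphic to the classical generalized Weyl algebra k[z](σ, a) with σ(z) = z - 1 and a = (1/4)(λ² - 1) - z² - z. -/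
/-- Presentation relations of `U(sl₂)`: generated by `e = ι 0`, `f = ι 1`,
`h = ι 2` with `[e,f] = h`, `[h,e] = 2e`, `[h,f] = -2f`. -/
inductive Sl2Rel (k : Type*) [CommRing k] :
    FreeAlgebra k (Fin 3) → FreeAlgebra k (Fin 3) → Prop
  | ef : Sl2Rel k (FreeAlgebra.ι k 0 * FreeAlgebra.ι k 1)
      (FreeAlgebra.ι k 1 * FreeAlgebra.ι k 0 + FreeAlgebra.ι k 2)
  | he : Sl2Rel k (FreeAlgebra.ι k 2 * FreeAlgebra.ι k 0)
      (FreeAlgebra.ι k 0 * FreeAlgebra.ι k 2 + 2 * FreeAlgebra.ι k 0)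
  | hf : Sl2Rel k (FreeAlgebra.ι k 2 * FreeAlgebra.ι k 1)
      (FreeAlgebra.ι k 1 * FreeAlgebra.ι k 2 - 2 * FreeAlgebra.ι k 1)

/-- The universal enveloping algebra `U(sl₂)`, by its presentation. -/
abbrev Usl2 (k : Type*) [CommRing k] : Type _ := RingQuot (Sl2Rel k)

/-- The generator `e` of `U(sl₂)`. -/
noncomputable def Ue (k : Type*) [CommRing k] : Usl2 k :=
  RingQuot.mkAlgHom k (Sl2Rel k) (FreeAlgebra.ι k 0)

/-- The generator `f` of `U(sl₂)`. -/
noncomputable def Uf (k : Type*) [CommRing k] : Usl2 k :=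
  RingQuot.mkAlgHom k (Sl2Rel k) (FreeAlgebra.ι k 1)

/-- The generator `h` of `U(sl₂)`. -/
noncomputable def Uh (k : Type*) [CommRing k] : Usl2 k :=
  RingQuot.mkAlgHom k (Sl2Rel k) (FreeAlgebra.ι k 2)

/-- The Casimir element `Ω = 4fe + h² + 2h` of `U(sl₂)`. -/
noncomputable def Casimir (k : Type*) [CommRing k] : Usl2 k :=
  4 * Uf k * Ue k + Uh k ^ 2 + 2 * Uh k

/-- The relation identifying the Casimir element with the scalar `λ² - 1`. -/
inductive CasRel (k : Type*) [CommRing k] (lam : k) : Usl2 k → Usl2 k → Prop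
  | rel : CasRel k lam (Casimir k) (algebraMap k (Usl2 k) (lam ^ 2 - 1))

/-- The primitive quotient `U_λ = U(sl₂)/(Ω - (λ² - 1))`. -/
abbrev Ulam (k : Type*) [CommRing k] (lam : k) : Type _ := RingQuot (CasRel k lam)

/-! ### Auxiliary development for the proof -/

-- Remove the low-level `RingQuot` operation instances so that all arithmetic
-- on `RingQuot` elaborates through the canonical `Ring`/`Algebra` instances.
attribute [-instance] RingQuot.instZero RingQuot.instOne RingQuot.instAdd
  RingQuot.instMul RingQuot.instNeg RingQuot.instSub RingQuot.instNatCast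
  RingQuot.instSMulOfAlgebra

namespace UlamGWAProof

set_option linter.unusedSectionVars false

open Polynomial RingQuot

/-! #### Generic lemmas about generalized Weyl algebras -/

section GWAGeneric

variable {k R : Type*} [CommRing k] [Ring R] [Algebra k R]
variable {n : ℕ} (σ : Fin n → R ≃ₐ[k] R) (a : Fin n → R)

lemma gwa_r_add (p q : R) :
    GWA.r k R σ a (p + q) = GWA.r k R σ a p + GWA.r k R σ a q := by
  have h := RingQuot.mkAlgHom_rel k (GWARel.add (k := k) (R := R) (n := n) (σ := σ) (a := a) p q)
  rw [map_add] at h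
  exact h

lemma gwa_r_mul (p q : R) :
    GWA.r k R σ a (p * q) = GWA.r k R σ a p * GWA.r k R σ a q := by
  have h := RingQuot.mkAlgHom_rel k (GWARel.mul (k := k) (R := R) (n := n) (σ := σ) (a := a) p q)
  rw [map_mul] at h
  exact h

lemma gwa_r_smul (c : k) (p : R) :
    GWA.r k R σ a (c • p) = c • GWA.r k R σ a p := by
  have h := RingQuot.mkAlgHom_rel k (GWARel.smul (k := k) (R := R) (n := n) (σ := σ) (a := a) c p)
  rw [map_smul] at h
  exact h

lemma gwa_r_one : GWA.r k R σ a 1 = 1 := by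
  have h := RingQuot.mkAlgHom_rel k (GWARel.one (k := k) (R := R) (n := n) (σ := σ) (a := a))
  rw [map_one] at h
  exact h

lemma gwa_r_zero : GWA.r k R σ a 0 = 0 := by
  have h := gwa_r_smul σ a (0 : k) (1 : R)
  rw [zero_smul, zero_smul] at h
  exact h

/-- `GWA.r` as an algebra homomorphism. -/
noncomputable def gwaRHom : R →ₐ[k] GWA k R n σ a where
  toFun := GWA.r k R σ a
  map_one' := gwa_r_one σ a
  map_mul' := gwa_r_mul σ a
  map_zero' := gwa_r_zero σ a
  map_add' := gwa_r_add σ a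
  commutes' := fun c => by
    show GWA.r k R σ a (algebraMap k R c) = _
    rw [Algebra.algebraMap_eq_smul_one, gwa_r_smul, gwa_r_one,
      ← Algebra.algebraMap_eq_smul_one]

@[simp] lemma gwaRHom_apply (p : R) : gwaRHom σ a p = GWA.r k R σ a p := rfl

lemma gwa_xr (i : Fin n) (p : R) :
    GWA.x k R σ a i * GWA.r k R σ a p = GWA.r k R σ a (σ i p) * GWA.x k R σ a i := by
  have h := RingQuot.mkAlgHom_rel k (GWARel.xr (k := k) (R := R) (n := n) (σ := σ) (a := a) i p)
  rw [map_mul, map_mul] at h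
  exact h

lemma gwa_yr (i : Fin n) (p : R) :
    GWA.y k R σ a i * GWA.r k R σ a p = GWA.r k R σ a ((σ i).symm p) * GWA.y k R σ a i := by
  have h := RingQuot.mkAlgHom_rel k (GWARel.yr (k := k) (R := R) (n := n) (σ := σ) (a := a) i p)
  rw [map_mul, map_mul] at h
  exact h

lemma gwa_yx (i : Fin n) :
    GWA.y k R σ a i * GWA.x k R σ a i = GWA.r k R σ a (a i) := by
  have h := RingQuot.mkAlgHom_rel k (GWARel.yx (k := k) (R := R) (n := n) (σ := σ) (a := a) i)
  rw [map_mul] at h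
  exact h

lemma gwa_xy (i : Fin n) :
    GWA.x k R σ a i * GWA.y k R σ a i = GWA.r k R σ a (σ i (a i)) := by
  have h := RingQuot.mkAlgHom_rel k (GWARel.xy (k := k) (R := R) (n := n) (σ := σ) (a := a) i)
  rw [map_mul] at h
  exact h

end GWAGeneric

/-! #### Generic ring identities (proved in abstract rings, away from `RingQuot`) -/

section GenericRing

variable {A : Type*} [Ring A]

lemma gi_ef (x y z c : A) (hyx : y * x = c - z ^ 2 - z) (hxy : x * y = c - z ^ 2 + z) :
    -y * -x = -x * -y + -(2 * z) := by
  rw [neg_mul_neg, neg_mul_neg, hyx, hxy]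
  noncomm_ring

lemma gi_he (y z : A) (hyz : y * z = (z + 1) * y) :
    -(2 * z) * -y = -y * -(2 * z) + 2 * -y := by
  have h1 : -(2 * z) * -y = 2 * ((z + 1) * y) - 2 * y := by noncomm_ring
  rw [h1, ← hyz]
  noncomm_ring

lemma gi_hf (x z : A) (hxz : x * z = (z - 1) * x) :
    -(2 * z) * -x = -x * -(2 * z) - 2 * -x := by
  have h1 : -(2 * z) * -x = 2 * ((z - 1) * x) + 2 * x := by noncomm_ring
  rw [h1, ← hxz]
  noncomm_ring

lemma gi_cas (x y z c d : A) (hxy : x * y = c - z ^ 2 + z) (h4 : 4 * c = d) :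
    4 * -x * -y + (-(2 * z)) ^ 2 + 2 * -(2 * z) = d := by
  have h1 : 4 * -x * -y + (-(2 * z)) ^ 2 + 2 * -(2 * z)
      = 4 * (x * y) + 4 * z ^ 2 - 4 * z := by noncomm_ring
  rw [h1, hxy, ← h4]
  noncomm_ring

lemma gi_sq (c z : A) : c - (z - 1) ^ 2 - (z - 1) = c - z ^ 2 + z := by noncomm_ring

lemma gi_negneg (a b c : A) (h : a * b = c) : -a * -b = c := by
  rw [neg_mul_neg]; exact h

lemma gi_negcomm (t u v : A) (h : t * u = v * t) : -t * u = v * -t := by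
  rw [neg_mul, mul_neg, h]

end GenericRing

section AlgC4

variable {k : Type*} [Field k] {A : Type*} [Semiring A] [Algebra k A]

lemma algC4 (c : k) : algebraMap k A (c / 4) = (4⁻¹ : k) • algebraMap k A c := by
  rw [div_eq_inv_mul, map_mul, ← Algebra.smul_def]

end AlgC4

section AevalAeval

variable {k : Type*} [CommRing k] {A : Type*} [Semiring A] [Algebra k A]

lemma aeval_aeval (W : A) (q p : k[X]) :
    aeval W (aeval q p) = aeval (aeval W q) p := by
  have h : (aeval W).comp (aeval q : k[X] →ₐ[k] k[X]) = aeval (aeval W q) :=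
    Polynomial.algHom_ext (by simp)
  rw [← AlgHom.comp_apply, h]

end AevalAeval

section GenericAlg

variable {k : Type*} [Field k] [CharZero k]
variable {A : Type*} [Ring A] [Algebra k A]

lemma gi_two (t : A) : (2 : A) * t = (2 : k) • t := by
  rw [Algebra.smul_def, map_ofNat]

lemma gi_four (t : A) : (4 : A) * t = (4 : k) • t := by
  rw [Algebra.smul_def, map_ofNat]

lemma gi_FZ (H F : A) (h : H * F = F * H - 2 * F) :
    F * ((-(2⁻¹ : k)) • H) = ((-(2⁻¹ : k)) • H - 1) * F := by
  have h' : F * H = H * F + 2 * F := by rw [h]; noncomm_ring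
  rw [mul_smul_comm, h', gi_two (k := k), sub_mul, smul_mul_assoc, one_mul]
  module

lemma gi_EZ (H E : A) (h : H * E = E * H + 2 * E) :
    E * ((-(2⁻¹ : k)) • H) = ((-(2⁻¹ : k)) • H + 1) * E := by
  have h' : E * H = H * E - 2 * E := by rw [h]; noncomm_ring
  rw [mul_smul_comm, h', gi_two (k := k), add_mul, smul_mul_assoc, one_mul]
  module

lemma gi_FE (H F E d : A) (hCas : 4 * F * E + H ^ 2 + 2 * H = d) :
    F * E = (4⁻¹ : k) • d - ((-(2⁻¹ : k)) • H) ^ 2 + (-(2⁻¹ : k)) • H := by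
  have h4 : (4 : A) * (F * E) = d - H ^ 2 - 2 * H := by rw [← hCas]; noncomm_ring
  have h5 : F * E = (4⁻¹ : k) • ((4 : A) * (F * E)) := by
    rw [gi_four (k := k), smul_smul]
    norm_num
  rw [h5, h4, gi_two (k := k)]
  simp only [_root_.smul_pow]
  module

lemma gi_EF (F E H c : A) (hEF : E * F = F * E + H)
    (hFE : F * E = c - ((-(2⁻¹ : k)) • H) ^ 2 + (-(2⁻¹ : k)) • H) :
    E * F = c - ((-(2⁻¹ : k)) • H) ^ 2 - (-(2⁻¹ : k)) • H := by
  rw [hEF, hFE]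
  simp only [_root_.smul_pow]
  module

lemma gi_zhalf (t : A) : (-(2⁻¹ : k)) • (-(2 * t)) = t := by
  rw [gi_two (k := k)]
  module

lemma gi_negtwo (t : A) : -(2 * ((-(2⁻¹ : k)) • t)) = t := by
  rw [gi_two (k := k)]
  module

/-- If `t * W = W' * t` then `t * p(W) = p(W') * t`. -/
lemma mul_pow_comm (t W W' : A) (h : t * W = W' * t) (m : ℕ) :
    t * W ^ m = W' ^ m * t := by
  induction m with
  | zero => simp
  | succ m ih =>
    rw [pow_succ, ← mul_assoc, ih, mul_assoc, h, ← mul_assoc, ← pow_succ]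

lemma mul_aeval_comm (t W W' : A) (h : t * W = W' * t) (p : k[X]) :
    t * aeval W p = aeval W' p * t := by
  induction p using Polynomial.induction_on' with
  | add p q hp hq => rw [map_add, map_add, mul_add, add_mul, hp, hq]
  | monomial m c =>
    rw [aeval_monomial, aeval_monomial, ← mul_assoc, ← Algebra.commutes c t,
      mul_assoc, mul_pow_comm t W W' h, ← mul_assoc, mul_assoc]

lemma shiftDown_X : shiftDown k X = X - 1 := by
  show aeval (X - 1) X = X - 1
  rw [aeval_X]

lemma shiftDown_symm_X : (shiftDown k).symm X = X + 1 := by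
  rw [shiftDown, AlgEquiv.ofAlgHom_symm]
  show aeval (X + 1) X = X + 1
  rw [aeval_X]

lemma aeval_shiftDown (W : A) (p : k[X]) :
    aeval W (shiftDown k p) = aeval (W - 1) p := by
  have h : (aeval W).comp (aeval (X - 1) : k[X] →ₐ[k] k[X]) = aeval (W - 1) :=
    Polynomial.algHom_ext (by simp)
  show aeval W ((aeval (X - 1) : k[X] →ₐ[k] k[X]) p) = _
  rw [← AlgHom.comp_apply, h]

lemma aeval_shiftDown_symm (W : A) (p : k[X]) :
    aeval W ((shiftDown k).symm p) = aeval (W + 1) p := by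
  have h : (aeval W).comp (aeval (X + 1) : k[X] →ₐ[k] k[X]) = aeval (W + 1) :=
    Polynomial.algHom_ext (by simp)
  rw [shiftDown, AlgEquiv.ofAlgHom_symm]
  show aeval W ((aeval (X + 1) : k[X] →ₐ[k] k[X]) p) = _
  rw [← AlgHom.comp_apply, h]

end GenericAlg

/-! #### The specific setup -/

section Main

variable (k : Type*) [Field k] [CharZero k] (lam : k)

/-- The polynomial `a = (λ²-1)/4 - z² - z`. -/
noncomputable abbrev a0 : k[X] := C ((lam ^ 2 - 1) / 4) - X ^ 2 - X

noncomputable abbrev Gw := GWA k (Polynomial k) 1 ![shiftDown k] ![a0 k lam]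

noncomputable def zg : Gw k lam := GWA.r k k[X] ![shiftDown k] ![a0 k lam] X
noncomputable def xg : Gw k lam := GWA.x k k[X] ![shiftDown k] ![a0 k lam] 0
noncomputable def yg : Gw k lam := GWA.y k k[X] ![shiftDown k] ![a0 k lam] 0

lemma aeval_zg (p : k[X]) :
    aeval (zg k lam) p = GWA.r k k[X] ![shiftDown k] ![a0 k lam] p := by
  have h : (aeval (zg k lam) : k[X] →ₐ[k] Gw k lam)
      = gwaRHom ![shiftDown k] ![a0 k lam] :=
    Polynomial.algHom_ext (by rw [aeval_X]; rfl)
  rw [h, gwaRHom_apply]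

lemma r_sub_one : GWA.r k k[X] ![shiftDown k] ![a0 k lam] (X - 1) = zg k lam - 1 := by
  rw [← aeval_zg, map_sub, aeval_X, map_one]

lemma r_add_one : GWA.r k k[X] ![shiftDown k] ![a0 k lam] (X + 1) = zg k lam + 1 := by
  rw [← aeval_zg, map_add, aeval_X, map_one]

lemma r_a0 : GWA.r k k[X] ![shiftDown k] ![a0 k lam] (a0 k lam)
    = algebraMap k (Gw k lam) ((lam ^ 2 - 1) / 4) - zg k lam ^ 2 - zg k lam := by
  rw [← aeval_zg, map_sub, map_sub, aeval_C, map_pow, aeval_X]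

lemma r_sa0 : GWA.r k k[X] ![shiftDown k] ![a0 k lam] (shiftDown k (a0 k lam))
    = algebraMap k (Gw k lam) ((lam ^ 2 - 1) / 4) - zg k lam ^ 2 + zg k lam := by
  rw [← aeval_zg, aeval_shiftDown, map_sub, map_sub, aeval_C, map_pow, aeval_X]
  exact gi_sq _ _

lemma xg_zg : xg k lam * zg k lam = (zg k lam - 1) * xg k lam := by
  calc xg k lam * zg k lam
      = GWA.r k k[X] ![shiftDown k] ![a0 k lam] ((![shiftDown k] 0 : k[X] ≃ₐ[k] k[X]) X)
        * xg k lam := gwa_xr ![shiftDown k] ![a0 k lam] 0 X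
    _ = GWA.r k k[X] ![shiftDown k] ![a0 k lam] (X - 1) * xg k lam := by
        rw [show ((![shiftDown k] 0 : k[X] ≃ₐ[k] k[X]) X) = X - 1 from shiftDown_X]
    _ = (zg k lam - 1) * xg k lam := by rw [r_sub_one]

lemma yg_zg : yg k lam * zg k lam = (zg k lam + 1) * yg k lam := by
  calc yg k lam * zg k lam
      = GWA.r k k[X] ![shiftDown k] ![a0 k lam] ((![shiftDown k] 0 : k[X] ≃ₐ[k] k[X]).symm X)
        * yg k lam := gwa_yr ![shiftDown k] ![a0 k lam] 0 X
    _ = GWA.r k k[X] ![shiftDown k] ![a0 k lam] (X + 1) * yg k lam := by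
        rw [show ((![shiftDown k] 0 : k[X] ≃ₐ[k] k[X]).symm X) = X + 1 from shiftDown_symm_X]
    _ = (zg k lam + 1) * yg k lam := by rw [r_add_one]

lemma yg_xg : yg k lam * xg k lam
    = algebraMap k (Gw k lam) ((lam ^ 2 - 1) / 4) - zg k lam ^ 2 - zg k lam := by
  calc yg k lam * xg k lam
      = GWA.r k k[X] ![shiftDown k] ![a0 k lam] (a0 k lam) :=
        gwa_yx ![shiftDown k] ![a0 k lam] 0
    _ = _ := r_a0 k lam

lemma xg_yg : xg k lam * yg k lam
    = algebraMap k (Gw k lam) ((lam ^ 2 - 1) / 4) - zg k lam ^ 2 + zg k lam := by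
  calc xg k lam * yg k lam
      = GWA.r k k[X] ![shiftDown k] ![a0 k lam] (shiftDown k (a0 k lam)) :=
        gwa_xy ![shiftDown k] ![a0 k lam] 0
    _ = _ := r_sa0 k lam

lemma four_c : (4 : Gw k lam) * algebraMap k (Gw k lam) ((lam ^ 2 - 1) / 4)
    = algebraMap k (Gw k lam) (lam ^ 2 - 1) := by
  rw [show (4 : Gw k lam) = algebraMap k (Gw k lam) 4 from (map_ofNat _ 4).symm,
    ← map_mul]
  congr 1
  field_simp

/-! #### The forward map `φ : U_λ → GWA` -/

noncomputable def phiFree : FreeAlgebra k (Fin 3) →ₐ[k] Gw k lam :=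
  FreeAlgebra.lift k ![-yg k lam, -xg k lam, -(2 * zg k lam)]

lemma phiFree_e : phiFree k lam (FreeAlgebra.ι k 0) = -yg k lam := by
  simp [phiFree]
lemma phiFree_f : phiFree k lam (FreeAlgebra.ι k 1) = -xg k lam := by
  simp [phiFree]
lemma phiFree_h : phiFree k lam (FreeAlgebra.ι k 2) = -(2 * zg k lam) := by
  simp [phiFree]

lemma phiFree_rel : ∀ ⦃u v : FreeAlgebra k (Fin 3)⦄, Sl2Rel k u v →
    phiFree k lam u = phiFree k lam v := by
  intro u v h
  cases h with
  | ef =>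
    rw [map_mul, map_add, map_mul, phiFree_e, phiFree_f, phiFree_h]
    exact gi_ef _ _ _ _ (yg_xg k lam) (xg_yg k lam)
  | he =>
    rw [map_mul, map_add, map_mul, map_mul, map_ofNat, phiFree_e, phiFree_h]
    exact gi_he _ _ (yg_zg k lam)
  | hf =>
    rw [map_mul, map_sub, map_mul, map_mul, map_ofNat, phiFree_f, phiFree_h]
    exact gi_hf _ _ (xg_zg k lam)

noncomputable def phi1 : Usl2 k →ₐ[k] Gw k lam :=
  RingQuot.liftAlgHom k ⟨phiFree k lam, phiFree_rel k lam⟩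

lemma phi1_mk (u : FreeAlgebra k (Fin 3)) :
    phi1 k lam (RingQuot.mkAlgHom k (Sl2Rel k) u) = phiFree k lam u :=
  RingQuot.liftAlgHom_mkAlgHom_apply _ _ _ _

lemma phi1_e : phi1 k lam (Ue k) = -yg k lam := by rw [Ue, phi1_mk, phiFree_e]
lemma phi1_f : phi1 k lam (Uf k) = -xg k lam := by rw [Uf, phi1_mk, phiFree_f]
lemma phi1_h : phi1 k lam (Uh k) = -(2 * zg k lam) := by rw [Uh, phi1_mk, phiFree_h]

lemma phi1_cas : phi1 k lam (Casimir k) = algebraMap k (Gw k lam) (lam ^ 2 - 1) := by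
  rw [Casimir, map_add, map_add, map_mul, map_mul, map_ofNat, map_mul, map_ofNat,
    map_pow, phi1_e, phi1_f, phi1_h]
  exact gi_cas _ _ _ _ _ (xg_yg k lam) (four_c k lam)

noncomputable def phi : Ulam k lam →ₐ[k] Gw k lam :=
  RingQuot.liftAlgHom k ⟨phi1 k lam, by
    rintro _ _ ⟨⟩
    rw [phi1_cas, AlgHom.commutes]⟩

lemma phi_mk (u : Usl2 k) :
    phi k lam (RingQuot.mkAlgHom k (CasRel k lam) u) = phi1 k lam u :=
  RingQuot.liftAlgHom_mkAlgHom_apply _ _ _ _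

/-! #### The reverse map `ψ : GWA → U_λ` -/

noncomputable def UE : Ulam k lam := RingQuot.mkAlgHom k (CasRel k lam) (Ue k)
noncomputable def UF : Ulam k lam := RingQuot.mkAlgHom k (CasRel k lam) (Uf k)
noncomputable def UH : Ulam k lam := RingQuot.mkAlgHom k (CasRel k lam) (Uh k)
noncomputable def UZ : Ulam k lam := (-(2⁻¹ : k)) • UH k lam

lemma ue_uf : Ue k * Uf k = Uf k * Ue k + Uh k := by
  have h := RingQuot.mkAlgHom_rel k (Sl2Rel.ef (k := k))
  rw [map_mul, map_add, map_mul] at h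
  exact h

lemma uh_ue : Uh k * Ue k = Ue k * Uh k + 2 * Ue k := by
  have h := RingQuot.mkAlgHom_rel k (Sl2Rel.he (k := k))
  rw [map_mul, map_add, map_mul, map_mul, map_ofNat] at h
  exact h

lemma uh_uf : Uh k * Uf k = Uf k * Uh k - 2 * Uf k := by
  have h := RingQuot.mkAlgHom_rel k (Sl2Rel.hf (k := k))
  rw [map_mul, map_sub, map_mul, map_mul, map_ofNat] at h
  exact h

lemma hEF : UE k lam * UF k lam = UF k lam * UE k lam + UH k lam := by
  have h := congrArg (RingQuot.mkAlgHom k (CasRel k lam)) (ue_uf k)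
  rw [map_mul, map_add, map_mul] at h
  exact h

lemma hHE : UH k lam * UE k lam = UE k lam * UH k lam + 2 * UE k lam := by
  have h := congrArg (RingQuot.mkAlgHom k (CasRel k lam)) (uh_ue k)
  rw [map_mul, map_add, map_mul, map_mul, map_ofNat] at h
  exact h

lemma hHF : UH k lam * UF k lam = UF k lam * UH k lam - 2 * UF k lam := by
  have h := congrArg (RingQuot.mkAlgHom k (CasRel k lam)) (uh_uf k)
  rw [map_mul, map_sub, map_mul, map_mul, map_ofNat] at h
  exact h

lemma hCasU : 4 * UF k lam * UE k lam + UH k lam ^ 2 + 2 * UH k lam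
    = algebraMap k (Ulam k lam) (lam ^ 2 - 1) := by
  have h := RingQuot.mkAlgHom_rel k (CasRel.rel (k := k) (lam := lam))
  rw [Casimir, map_add, map_add, map_mul, map_mul, map_ofNat, map_mul, map_ofNat,
    map_pow, AlgHom.commutes] at h
  exact h

lemma hFZ : UF k lam * UZ k lam = (UZ k lam - 1) * UF k lam :=
  by have := gi_FZ (k := k) (UH k lam) (UF k lam) (hHF k lam); rw [UZ]; exact this

lemma hEZ : UE k lam * UZ k lam = (UZ k lam + 1) * UE k lam :=
  by have := gi_EZ (k := k) (UH k lam) (UE k lam) (hHE k lam); rw [UZ]; exact this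

lemma hFEval : UF k lam * UE k lam
    = algebraMap k (Ulam k lam) ((lam ^ 2 - 1) / 4) - UZ k lam ^ 2 + UZ k lam := by
  rw [algC4 (k := k)]
  exact gi_FE _ _ _ _ (hCasU k lam)

lemma hEFval : UE k lam * UF k lam
    = algebraMap k (Ulam k lam) ((lam ^ 2 - 1) / 4) - UZ k lam ^ 2 - UZ k lam := by
  rw [algC4 (k := k)]
  exact gi_EF _ _ _ _ (hEF k lam) (gi_FE _ _ _ _ (hCasU k lam))

/-- Values of the reverse map on generators. -/
noncomputable def psiv : k[X] ⊕ Fin 1 × Bool → Ulam k lam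
  | .inl p => aeval (UZ k lam) p
  | .inr (_, false) => -UF k lam
  | .inr (_, true) => -UE k lam

noncomputable def psiFree : FreeAlgebra k (k[X] ⊕ Fin 1 × Bool) →ₐ[k] Ulam k lam :=
  FreeAlgebra.lift k (psiv k lam)

lemma psiFree_ι (v : k[X] ⊕ Fin 1 × Bool) :
    psiFree k lam (FreeAlgebra.ι k v) = psiv k lam v :=
  FreeAlgebra.lift_ι_apply _ _

lemma psiFree_rel : ∀ ⦃u v⦄,
    GWARel k k[X] 1 ![shiftDown k] ![a0 k lam] u v →
    psiFree k lam u = psiFree k lam v := by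
  intro u v h
  cases h with
  | add r s =>
    rw [map_add, psiFree_ι, psiFree_ι, psiFree_ι]
    exact map_add (aeval (UZ k lam)) r s
  | mul r s =>
    rw [map_mul, psiFree_ι, psiFree_ι, psiFree_ι]
    exact map_mul (aeval (UZ k lam)) r s
  | smul c r =>
    rw [map_smul, psiFree_ι, psiFree_ι]
    exact map_smul (aeval (UZ k lam)) c r
  | one =>
    rw [psiFree_ι, map_one]
    exact map_one (aeval (UZ k lam))
  | xr i r =>
    rw [map_mul, map_mul, psiFree_ι, psiFree_ι, psiFree_ι]
    obtain rfl : i = 0 := Subsingleton.elim i 0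
    show -UF k lam * aeval (UZ k lam) r = aeval (UZ k lam) (shiftDown k r) * -UF k lam
    have h6 : aeval (UZ k lam) (shiftDown k r) = aeval (UZ k lam - 1) r := by
      show aeval (UZ k lam) (aeval (X - 1) r) = _
      rw [aeval_aeval, map_sub, aeval_X, map_one]
    rw [h6]
    exact gi_negcomm (UF k lam) _ _ (mul_aeval_comm (k := k) (UF k lam) (UZ k lam) (UZ k lam - 1) (hFZ k lam) r)
  | yr i r =>
    rw [map_mul, map_mul, psiFree_ι, psiFree_ι, psiFree_ι]
    obtain rfl : i = 0 := Subsingleton.elim i 0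
    show -UE k lam * aeval (UZ k lam) r
        = aeval (UZ k lam) ((shiftDown k).symm r) * -UE k lam
    have h6 : aeval (UZ k lam) ((shiftDown k).symm r) = aeval (UZ k lam + 1) r := by
      show aeval (UZ k lam) (aeval (X + 1) r) = _
      rw [aeval_aeval, map_add, aeval_X, map_one]
    rw [h6]
    exact gi_negcomm (UE k lam) _ _ (mul_aeval_comm (k := k) (UE k lam) (UZ k lam) (UZ k lam + 1) (hEZ k lam) r)
  | yx i =>
    rw [map_mul, psiFree_ι, psiFree_ι, psiFree_ι]
    obtain rfl : i = 0 := Subsingleton.elim i 0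
    show -UE k lam * -UF k lam = aeval (UZ k lam) (a0 k lam)
    have h5 : aeval (UZ k lam) (a0 k lam)
        = algebraMap k (Ulam k lam) ((lam ^ 2 - 1) / 4) - UZ k lam ^ 2 - UZ k lam := by
      rw [map_sub, map_sub, aeval_C, map_pow, aeval_X]
    rw [h5]
    exact gi_negneg _ _ _ (hEFval k lam)
  | xy i =>
    rw [map_mul, psiFree_ι, psiFree_ι, psiFree_ι]
    obtain rfl : i = 0 := Subsingleton.elim i 0
    show -UF k lam * -UE k lam = aeval (UZ k lam) (shiftDown k (a0 k lam))
    have h6 : aeval (UZ k lam) (shiftDown k (a0 k lam))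
        = aeval (UZ k lam - 1) (a0 k lam) := by
      show aeval (UZ k lam) (aeval (X - 1) (a0 k lam)) = _
      rw [aeval_aeval,
        show (aeval (UZ k lam) (X - 1 : k[X])) = UZ k lam - 1 from by
          rw [map_sub, aeval_X, map_one]]
    rw [h6]
    have h5 : aeval (UZ k lam - 1) (a0 k lam)
        = algebraMap k (Ulam k lam) ((lam ^ 2 - 1) / 4) - (UZ k lam - 1) ^ 2
          - (UZ k lam - 1) := by
      rw [map_sub, map_sub, aeval_C, map_pow, aeval_X]
    rw [h5]
    exact gi_negneg _ _ _ ((hFEval k lam).trans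
      (gi_sq (algebraMap k (Ulam k lam) ((lam ^ 2 - 1) / 4)) (UZ k lam)).symm)
  | comm i j s t hij =>
    exact absurd (Subsingleton.elim i j) hij

noncomputable def psi : Gw k lam →ₐ[k] Ulam k lam :=
  RingQuot.liftAlgHom k ⟨psiFree k lam, psiFree_rel k lam⟩

lemma psi_mk (u : FreeAlgebra k (k[X] ⊕ Fin 1 × Bool)) :
    psi k lam (RingQuot.mkAlgHom k (GWARel k k[X] 1 ![shiftDown k] ![a0 k lam]) u)
      = psiFree k lam u :=
  RingQuot.liftAlgHom_mkAlgHom_apply _ _ _ _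

/-! #### The two maps are inverse to each other -/

lemma phi_UZ : phi k lam (UZ k lam) = zg k lam := by
  rw [UZ, map_smul, UH, phi_mk, phi1_h]
  exact gi_zhalf _

lemma phi_psi : (phi k lam).comp (psi k lam) = AlgHom.id k (Gw k lam) := by
  refine RingQuot.ringQuot_ext' _ _ _ ?_
  refine FreeAlgebra.hom_ext ?_
  funext v
  simp only [Function.comp_apply, AlgHom.coe_comp, AlgHom.id_apply]
  rw [psi_mk, psiFree_ι]
  obtain p | ⟨i, b⟩ := v
  · show phi k lam (aeval (UZ k lam) p)
        = GWA.r k k[X] ![shiftDown k] ![a0 k lam] p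
    rw [← aeval_algHom_apply, phi_UZ, aeval_zg]
  · obtain rfl : i = 0 := Subsingleton.elim i 0
    cases b with
    | false =>
      show phi k lam (-UF k lam) = GWA.x k k[X] ![shiftDown k] ![a0 k lam] 0
      calc phi k lam (-UF k lam) = -(phi k lam (UF k lam)) :=
            map_neg (phi k lam) (UF k lam)
        _ = -(-xg k lam) := by rw [UF, phi_mk, phi1_f]
        _ = GWA.x k k[X] ![shiftDown k] ![a0 k lam] 0 := neg_neg (xg k lam)
    | true =>
      show phi k lam (-UE k lam) = GWA.y k k[X] ![shiftDown k] ![a0 k lam] 0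
      calc phi k lam (-UE k lam) = -(phi k lam (UE k lam)) :=
            map_neg (phi k lam) (UE k lam)
        _ = -(-yg k lam) := by rw [UE, phi_mk, phi1_e]
        _ = GWA.y k k[X] ![shiftDown k] ![a0 k lam] 0 := neg_neg (yg k lam)

lemma psi_phi : (psi k lam).comp (phi k lam) = AlgHom.id k (Ulam k lam) := by
  refine RingQuot.ringQuot_ext' _ _ _ ?_
  refine RingQuot.ringQuot_ext' _ _ _ ?_
  refine FreeAlgebra.hom_ext ?_
  funext i
  simp only [Function.comp_apply, AlgHom.coe_comp, AlgHom.id_apply]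
  rw [phi_mk, phi1_mk]
  fin_cases i
  · show psi k lam (phiFree k lam (FreeAlgebra.ι k 0))
        = RingQuot.mkAlgHom k (CasRel k lam) (RingQuot.mkAlgHom k (Sl2Rel k)
            (FreeAlgebra.ι k 0))
    rw [phiFree_e]
    calc psi k lam (-yg k lam) = -(psi k lam (yg k lam)) :=
          map_neg (psi k lam) (yg k lam)
      _ = -(-UE k lam) := by
          rw [yg, GWA.y, psi_mk, psiFree_ι]; rfl
      _ = _ := neg_neg (UE k lam)
  · show psi k lam (phiFree k lam (FreeAlgebra.ι k 1))
        = RingQuot.mkAlgHom k (CasRel k lam) (RingQuot.mkAlgHom k (Sl2Rel k)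
            (FreeAlgebra.ι k 1))
    rw [phiFree_f]
    calc psi k lam (-xg k lam) = -(psi k lam (xg k lam)) :=
          map_neg (psi k lam) (xg k lam)
      _ = -(-UF k lam) := by
          rw [xg, GWA.x, psi_mk, psiFree_ι]; rfl
      _ = _ := neg_neg (UF k lam)
  · show psi k lam (phiFree k lam (FreeAlgebra.ι k 2))
        = RingQuot.mkAlgHom k (CasRel k lam) (RingQuot.mkAlgHom k (Sl2Rel k)
            (FreeAlgebra.ι k 2))
    rw [phiFree_h]
    calc psi k lam (-(2 * zg k lam)) = -(psi k lam (2 * zg k lam)) :=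
          map_neg (psi k lam) (2 * zg k lam)
      _ = -(2 * psi k lam (zg k lam)) := by rw [map_mul, map_ofNat]
      _ = -(2 * aeval (UZ k lam) X) := by rw [zg, GWA.r, psi_mk, psiFree_ι]; rfl
      _ = -(2 * UZ k lam) := by rw [aeval_X (R := k)]
      _ = _ := gi_negtwo (k := k) (UH k lam)

end Main

end UlamGWAProof

/-- For `λ ∈ k`, the primitive quotient `U_λ = U(sl₂)/(Ω - (λ²-1))`
is isomorphic to the classical GWA `k[z](σ, a)` with `σ(z) = z - 1` and
`a = (1/4)(λ² - 1) - z² - z`. -/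
theorem Ulam_iso_classical_gwa (k : Type*) [Field k] [CharZero k] (lam : k) :
    Nonempty (Ulam k lam ≃ₐ[k]
      GWA k (Polynomial k) 1 ![shiftDown k]
        ![Polynomial.C ((lam ^ 2 - 1) / 4) - Polynomial.X ^ 2 - Polynomial.X]) := by
  exact ⟨AlgEquiv.ofAlgHom (UlamGWAProof.phi k lam) (UlamGWAProof.psi k lam)
    (UlamGWAProof.phi_psi k lam) (UlamGWAProof.psi_phi k lam)⟩
end

section
/- Let A = k[z](σ, a) be a classical generalized Weyl algebra with σ(z) = z - 1, and let φ be the k-algebra automorphism determined by φ(x) = μ⁻¹x, φ(y) = μy, φ(z) = z, where μ ∈ k^× has finite order ℓ. Then the fixed ring A^⟨φ⟩ is generated by z, x^ℓ, y^ℓ, and is isomorphic to the generalized Weyl algebra k[z](σ^ℓ, â) where â = ∏_{j=0}^{ℓ-1} a(z + j). -/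
namespace GWAAux

open Finset

variable {k R : Type*} [CommRing k] [CommRing R] [Algebra k R]
variable (σ₀ : R ≃ₐ[k] R) (a₀ : R)

/-- `R → A` as an algebra hom. -/
noncomputable def rho : R →ₐ[k] GWA k R 1 ![σ₀] ![a₀] where
  toFun r := RingQuot.mkAlgHom k (GWARel k R 1 ![σ₀] ![a₀]) (FreeAlgebra.ι k (.inl r))
  map_one' := by
    simpa using RingQuot.mkAlgHom_rel k (GWARel.one (σ := ![σ₀]) (a := ![a₀]))
  map_mul' r s := by
    simpa using RingQuot.mkAlgHom_rel k (GWARel.mul (σ := ![σ₀]) (a := ![a₀]) r s)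
  map_add' r s := by
    simpa using RingQuot.mkAlgHom_rel k (GWARel.add (σ := ![σ₀]) (a := ![a₀]) r s)
  map_zero' := by
    have h := RingQuot.mkAlgHom_rel k (GWARel.add (σ := ![σ₀]) (a := ![a₀]) 0 0)
    simp only [add_zero, map_add] at h
    exact (right_eq_add.mp h)
  commutes' c := by
    have h := RingQuot.mkAlgHom_rel k (GWARel.smul (σ := ![σ₀]) (a := ![a₀]) c 1)
    have h1 := RingQuot.mkAlgHom_rel k (GWARel.one (σ := ![σ₀]) (a := ![a₀]))
    simp only [map_smul, map_one] at h h1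
    show RingQuot.mkAlgHom k (GWARel k R 1 ![σ₀] ![a₀])
        (FreeAlgebra.ι k (.inl (algebraMap k R c))) = _
    rw [Algebra.algebraMap_eq_smul_one (A := R), h, h1, Algebra.algebraMap_eq_smul_one]

lemma rho_apply (r : R) : rho σ₀ a₀ r = GWA.r k R ![σ₀] ![a₀] r := rfl

local notation "A" => GWA k R 1 ![σ₀] ![a₀]
local notation "XX" => GWA.x k R ![σ₀] ![a₀] 0
local notation "YY" => GWA.y k R ![σ₀] ![a₀] 0
local notation "ρ" => rho σ₀ a₀

lemma x_r (r : R) : XX * ρ r = ρ (σ₀ r) * XX := by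
  have h := RingQuot.mkAlgHom_rel k (GWARel.xr (σ := ![σ₀]) (a := ![a₀]) 0 r)
  simpa [GWA.x, rho, map_mul] using h

lemma y_r (r : R) : YY * ρ r = ρ (σ₀.symm r) * YY := by
  have h := RingQuot.mkAlgHom_rel k (GWARel.yr (σ := ![σ₀]) (a := ![a₀]) 0 r)
  simpa [GWA.y, rho, map_mul] using h

lemma y_x : YY * XX = ρ a₀ := by
  have h := RingQuot.mkAlgHom_rel k (GWARel.yx (σ := ![σ₀]) (a := ![a₀]) 0)
  simpa [GWA.x, GWA.y, rho, map_mul] using h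

lemma x_y : XX * YY = ρ (σ₀ a₀) := by
  have h := RingQuot.mkAlgHom_rel k (GWARel.xy (σ := ![σ₀]) (a := ![a₀]) 0)
  simpa [GWA.x, GWA.y, rho, map_mul] using h

lemma aut_pow_succ_apply (τ : R ≃ₐ[k] R) (n : ℕ) (r : R) :
    (τ ^ (n + 1)) r = τ ((τ ^ n) r) := by
  rw [pow_succ']; rfl

lemma aut_pow_succ_apply' (τ : R ≃ₐ[k] R) (n : ℕ) (r : R) :
    (τ ^ (n + 1)) r = (τ ^ n) (τ r) := by
  rw [pow_succ]; rfl

lemma aut_symm_pow (τ : R ≃ₐ[k] R) (n : ℕ) : (τ ^ n).symm = τ.symm ^ n :=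
  (inv_pow τ n).symm

lemma x_pow_r (m : ℕ) (r : R) : XX ^ m * ρ r = ρ ((σ₀ ^ m) r) * XX ^ m := by
  induction m generalizing r with
  | zero => simp
  | succ n ih =>
    calc XX ^ (n+1) * ρ r = XX ^ n * (XX * ρ r) := by rw [pow_succ, mul_assoc]
    _ = XX ^ n * (ρ (σ₀ r) * XX) := by rw [x_r]
    _ = (XX ^ n * ρ (σ₀ r)) * XX := by rw [mul_assoc]
    _ = (ρ ((σ₀ ^ n) (σ₀ r)) * XX ^ n) * XX := by rw [ih]
    _ = ρ ((σ₀ ^ (n+1)) r) * XX ^ (n+1) := by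
        rw [mul_assoc, ← pow_succ, ← aut_pow_succ_apply']

lemma y_pow_r (m : ℕ) (r : R) : YY ^ m * ρ r = ρ ((σ₀.symm ^ m) r) * YY ^ m := by
  induction m generalizing r with
  | zero => simp
  | succ n ih =>
    calc YY ^ (n+1) * ρ r = YY ^ n * (YY * ρ r) := by rw [pow_succ, mul_assoc]
    _ = YY ^ n * (ρ (σ₀.symm r) * YY) := by rw [y_r]
    _ = (YY ^ n * ρ (σ₀.symm r)) * YY := by rw [mul_assoc]
    _ = (ρ ((σ₀.symm ^ n) (σ₀.symm r)) * YY ^ n) * YY := by rw [ih]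
    _ = ρ ((σ₀.symm ^ (n+1)) r) * YY ^ (n+1) := by
        rw [mul_assoc, ← pow_succ, ← aut_pow_succ_apply']

lemma r_mul_x_pow (m : ℕ) (s : R) : ρ s * XX ^ m = XX ^ m * ρ ((σ₀.symm ^ m) s) := by
  rw [x_pow_r, ← aut_symm_pow, AlgEquiv.apply_symm_apply]

lemma r_mul_y_pow (m : ℕ) (s : R) : ρ s * YY ^ m = YY ^ m * ρ ((σ₀ ^ m) s) := by
  rw [y_pow_r, ← aut_symm_pow, AlgEquiv.symm_apply_apply]

lemma y_pow_x_pow (m : ℕ) :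
    YY ^ m * XX ^ m = ρ (∏ j ∈ range m, (σ₀.symm ^ j) a₀) := by
  induction m with
  | zero => simp
  | succ n ih =>
    have h : YY ^ (n + 1) * XX ^ (n + 1) = YY ^ n * (YY * XX) * XX ^ n := by
      rw [pow_succ, pow_succ']; simp only [mul_assoc]
    rw [h, y_x, mul_assoc, r_mul_x_pow, ← mul_assoc, ih, ← map_mul,
      prod_range_succ, ← aut_symm_pow, aut_symm_pow]

lemma x_pow_y_pow (m : ℕ) :
    XX ^ m * YY ^ m = ρ ((σ₀ ^ m) (∏ j ∈ range m, (σ₀.symm ^ j) a₀)) := by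
  induction m with
  | zero => simp
  | succ n ih =>
    have h : XX ^ (n + 1) * YY ^ (n + 1) = XX ^ n * (XX * YY) * YY ^ n := by
      rw [pow_succ, pow_succ']; simp only [mul_assoc]
    have h2 : (∏ j ∈ range (n+1), (σ₀.symm ^ j) a₀)
        = σ₀.symm (∏ j ∈ range n, (σ₀.symm ^ j) a₀) * a₀ := by
      rw [prod_range_succ', map_prod, pow_zero]
      rw [show ((1 : R ≃ₐ[k] R) a₀) = a₀ from rfl]
      exact congrArg (· * a₀) (prod_congr rfl fun j _ => aut_pow_succ_apply σ₀.symm j a₀)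
    rw [h, x_y, mul_assoc, r_mul_y_pow, ← mul_assoc, ih, ← map_mul, h2, map_mul, map_mul,
      ← map_mul]
    congr 1
    rw [aut_pow_succ_apply' σ₀ n, AlgEquiv.apply_symm_apply, aut_pow_succ_apply' σ₀ n,
      mul_comm]

/-- The normal-form spanning set `{x^m ρ(r)} ∪ {y^m ρ(r)}`. -/
def gwaSpanSet : Set (GWA k R 1 ![σ₀] ![a₀]) :=
  {u | ∃ m r, u = XX ^ m * ρ r} ∪ {u | ∃ m r, u = YY ^ m * ρ r}

lemma memX (m : ℕ) (r : R) :
    XX ^ m * ρ r ∈ Submodule.span k (gwaSpanSet σ₀ a₀) :=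
  Submodule.subset_span (Or.inl ⟨m, r, rfl⟩)

lemma memY (m : ℕ) (r : R) :
    YY ^ m * ρ r ∈ Submodule.span k (gwaSpanSet σ₀ a₀) :=
  Submodule.subset_span (Or.inr ⟨m, r, rfl⟩)

lemma mem_rho (r : R) : ρ r ∈ Submodule.span k (gwaSpanSet σ₀ a₀) := by
  simpa using memX σ₀ a₀ 0 r

lemma span_gwaSpanSet : Submodule.span k (gwaSpanSet σ₀ a₀) = ⊤ := by
  set M := Submodule.span k (gwaSpanSet σ₀ a₀) with hM
  have h1 : (1 : GWA k R 1 ![σ₀] ![a₀]) ∈ M := by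
    simpa using memX σ₀ a₀ 0 1
  -- stability under left multiplication by the generators
  have stab : ∀ g : GWA k R 1 ![σ₀] ![a₀],
      ((∃ p, g = ρ p) ∨ g = XX ∨ g = YY) → ∀ v ∈ M, g * v ∈ M := by
    rintro g hg v hv
    induction hv using Submodule.span_induction with
    | mem s hs =>
      rcases hg with ⟨p, rfl⟩ | rfl | rfl
      · rcases hs with ⟨m, r, rfl⟩ | ⟨m, r, rfl⟩
        · rw [← mul_assoc, r_mul_x_pow, mul_assoc, ← map_mul]
          exact memX σ₀ a₀ m _
        · rw [← mul_assoc, r_mul_y_pow, mul_assoc, ← map_mul]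
          exact memY σ₀ a₀ m _
      · rcases hs with ⟨m, r, rfl⟩ | ⟨m, r, rfl⟩
        · rw [← mul_assoc, ← pow_succ']
          exact memX σ₀ a₀ (m + 1) r
        · rcases m with _ | m
          · simpa using memX σ₀ a₀ 1 r
          · have : XX * (YY ^ (m + 1) * ρ r) = ρ (σ₀ a₀) * (YY ^ m * ρ r) := by
              rw [pow_succ', ← mul_assoc, ← mul_assoc, x_y, mul_assoc]
            rw [this, ← mul_assoc, r_mul_y_pow, mul_assoc, ← map_mul]
            exact memY σ₀ a₀ m _
      · rcases hs with ⟨m, r, rfl⟩ | ⟨m, r, rfl⟩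
        · rcases m with _ | m
          · simpa using memY σ₀ a₀ 1 r
          · have : YY * (XX ^ (m + 1) * ρ r) = ρ a₀ * (XX ^ m * ρ r) := by
              rw [pow_succ', ← mul_assoc, ← mul_assoc, y_x, mul_assoc]
            rw [this, ← mul_assoc, r_mul_x_pow, mul_assoc, ← map_mul]
            exact memX σ₀ a₀ m _
        · rw [← mul_assoc, ← pow_succ']
          exact memY σ₀ a₀ (m + 1) r
    | zero => simpa using Submodule.zero_mem M
    | add x y hx hy ihx ihy => rw [mul_add]; exact Submodule.add_mem M ihx ihy
    | smul c x hx ihx => rw [mul_smul_comm]; exact Submodule.smul_mem M c ihx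
  rw [eq_top_iff]
  rintro u -
  obtain ⟨w, rfl⟩ := RingQuot.mkAlgHom_surjective k (GWARel k R 1 ![σ₀] ![a₀]) u
  have main : ∀ w : FreeAlgebra k (R ⊕ Fin 1 × Bool),
      ∀ v ∈ M, RingQuot.mkAlgHom k (GWARel k R 1 ![σ₀] ![a₀]) w * v ∈ M := by
    intro w
    refine FreeAlgebra.induction k _
      (motive := fun w => ∀ v ∈ M, RingQuot.mkAlgHom k (GWARel k R 1 ![σ₀] ![a₀]) w * v ∈ M)
      ?_ ?_ ?_ ?_ w
    · intro c v hv
      rw [AlgHom.commutes, ← Algebra.smul_def]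
      exact Submodule.smul_mem M c hv
    · rintro (p | ⟨i, b⟩)
      · exact stab _ (Or.inl ⟨p, rfl⟩)
      · obtain rfl : i = 0 := Subsingleton.elim i 0
        cases b
        · exact stab _ (Or.inr (Or.inl rfl))
        · exact stab _ (Or.inr (Or.inr rfl))
    · intro u w ihu ihw v hv
      rw [map_mul, mul_assoc]
      exact ihu _ (ihw v hv)
    · intro u w ihu ihw v hv
      rw [map_add, add_mul]
      exact Submodule.add_mem M (ihu v hv) (ihw v hv)
  simpa using main w 1 h1

section Rep

variable (b c : R)

/-- `x`-action on `ℤ →₀ R`: `d·e_i ↦ (σ d)b·e_{i+1}`. -/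
noncomputable def vX : (ℤ →₀ R) →ₗ[k] (ℤ →₀ R) :=
  (Finsupp.lmapDomain R k (· + 1)).comp
    (Finsupp.mapRange.linearMap ((LinearMap.mulRight k b).comp σ₀.toLinearMap))

/-- `y`-action on `ℤ →₀ R`: `d·e_i ↦ (σ⁻¹ d)c·e_{i-1}`. -/
noncomputable def vY : (ℤ →₀ R) →ₗ[k] (ℤ →₀ R) :=
  (Finsupp.lmapDomain R k (· - 1)).comp
    (Finsupp.mapRange.linearMap ((LinearMap.mulRight k c).comp σ₀.symm.toLinearMap))

/-- `R`-action on `ℤ →₀ R` by componentwise multiplication. -/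
noncomputable def vR (p : R) : (ℤ →₀ R) →ₗ[k] (ℤ →₀ R) :=
  Finsupp.mapRange.linearMap (LinearMap.mulLeft k p)

lemma vX_single (i : ℤ) (d : R) :
    vX σ₀ b (Finsupp.single i d) = Finsupp.single (i + 1) (σ₀ d * b) := by
  rw [vX, LinearMap.comp_apply, Finsupp.lmapDomain_apply]
  show Finsupp.mapDomain _ (Finsupp.mapRange _ (by simp) (Finsupp.single i d)) = _
  rw [Finsupp.mapRange_single, Finsupp.mapDomain_single]
  rfl

lemma vY_single (i : ℤ) (d : R) :
    vY σ₀ c (Finsupp.single i d) = Finsupp.single (i - 1) (σ₀.symm d * c) := by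
  rw [vY, LinearMap.comp_apply, Finsupp.lmapDomain_apply]
  show Finsupp.mapDomain _ (Finsupp.mapRange _ (by simp) (Finsupp.single i d)) = _
  rw [Finsupp.mapRange_single, Finsupp.mapDomain_single]
  rfl

lemma vR_single (p : R) (i : ℤ) (d : R) :
    vR (k := k) p (Finsupp.single i d) = Finsupp.single i (p * d) := by
  rw [vR]
  show Finsupp.mapRange _ (by simp) (Finsupp.single i d) = _
  rw [Finsupp.mapRange_single]
  rfl

lemma vR_one : vR (k := k) (1 : R) = (1 : Module.End k (ℤ →₀ R)) := by
  refine Finsupp.lhom_ext fun i d => ?_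
  rw [vR_single, one_mul, Module.End.one_apply]

/-- The generators of the representation. -/
noncomputable def repGen : R ⊕ Fin 1 × Bool → Module.End k (ℤ →₀ R) := fun v =>
  match v with
  | .inl p => vR p
  | .inr (_, false) => vX σ₀ b
  | .inr (_, true) => vY σ₀ c

@[simp] lemma repGen_inl (p : R) : repGen (k := k) σ₀ b c (.inl p) = vR p := rfl
@[simp] lemma repGen_inr_x (i : Fin 1) : repGen (k := k) σ₀ b c (.inr (i, false)) = vX σ₀ b := rfl
@[simp] lemma repGen_inr_y (i : Fin 1) : repGen (k := k) σ₀ b c (.inr (i, true)) = vY σ₀ c := rfl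

/-- The representation of the GWA on `ℤ →₀ R`, given suitable parameters `b`, `c`. -/
noncomputable def gwaRep (h1 : σ₀.symm b * c = a₀) (h2 : σ₀ c * b = σ₀ a₀) :
    GWA k R 1 ![σ₀] ![a₀] →ₐ[k] Module.End k (ℤ →₀ R) :=
  RingQuot.liftAlgHom k ⟨FreeAlgebra.lift k (repGen σ₀ b c), by
    intro u v huv
    induction huv with
    | add r s =>
      simp only [map_add, FreeAlgebra.lift_ι_apply, repGen_inl]
      refine Finsupp.lhom_ext fun i d => ?_
      rw [vR_single, LinearMap.add_apply, vR_single, vR_single, ← Finsupp.single_add, add_mul]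
    | mul r s =>
      simp only [map_mul, FreeAlgebra.lift_ι_apply, repGen_inl]
      refine Finsupp.lhom_ext fun i d => ?_
      rw [vR_single, Module.End.mul_apply, vR_single, vR_single, mul_assoc]
    | smul c' r =>
      simp only [map_smul, FreeAlgebra.lift_ι_apply, repGen_inl]
      refine Finsupp.lhom_ext fun i d => ?_
      rw [vR_single, LinearMap.smul_apply, vR_single, Finsupp.smul_single, smul_mul_assoc]
    | one =>
      simp only [map_one, FreeAlgebra.lift_ι_apply, repGen_inl]
      exact vR_one
    | xr i r =>
      obtain rfl : i = 0 := Subsingleton.elim i 0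
      simp only [map_mul, FreeAlgebra.lift_ι_apply, repGen_inl, repGen_inr_x,
        Matrix.cons_val_zero]
      refine Finsupp.lhom_ext fun j d => ?_
      rw [Module.End.mul_apply, vR_single, vX_single, Module.End.mul_apply, vX_single,
        vR_single, map_mul, mul_assoc]
    | yr i r =>
      obtain rfl : i = 0 := Subsingleton.elim i 0
      simp only [map_mul, FreeAlgebra.lift_ι_apply, repGen_inl, repGen_inr_y,
        Matrix.cons_val_zero]
      refine Finsupp.lhom_ext fun j d => ?_
      rw [Module.End.mul_apply, vR_single, vY_single, Module.End.mul_apply, vY_single,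
        vR_single, map_mul, mul_assoc]
    | yx i =>
      obtain rfl : i = 0 := Subsingleton.elim i 0
      simp only [map_mul, FreeAlgebra.lift_ι_apply, repGen_inl, repGen_inr_x, repGen_inr_y,
        Matrix.cons_val_zero]
      refine Finsupp.lhom_ext fun j d => ?_
      rw [Module.End.mul_apply, vX_single, vY_single, vR_single, map_mul,
        AlgEquiv.symm_apply_apply, add_sub_cancel_right, mul_assoc, h1, mul_comm]
    | xy i =>
      obtain rfl : i = 0 := Subsingleton.elim i 0
      simp only [map_mul, FreeAlgebra.lift_ι_apply, repGen_inl, repGen_inr_x, repGen_inr_y,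
        Matrix.cons_val_zero]
      refine Finsupp.lhom_ext fun j d => ?_
      rw [Module.End.mul_apply, vY_single, vX_single, vR_single, map_mul,
        AlgEquiv.apply_symm_apply, sub_add_cancel, mul_assoc, h2, mul_comm]
    | comm i j s t h => exact absurd (Subsingleton.elim i j) h⟩

variable (h1 : σ₀.symm b * c = a₀) (h2 : σ₀ c * b = σ₀ a₀)

lemma gwaRep_rho (p : R) : gwaRep σ₀ a₀ b c h1 h2 (ρ p) = vR p := by
  rw [show (ρ p : GWA k R 1 ![σ₀] ![a₀]) = RingQuot.mkAlgHom k (GWARel k R 1 ![σ₀] ![a₀])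
    (FreeAlgebra.ι k (.inl p)) from rfl, gwaRep, RingQuot.liftAlgHom_mkAlgHom_apply,
    FreeAlgebra.lift_ι_apply, repGen_inl]

lemma gwaRep_x : gwaRep σ₀ a₀ b c h1 h2 XX = vX σ₀ b := by
  rw [GWA.x, gwaRep, RingQuot.liftAlgHom_mkAlgHom_apply, FreeAlgebra.lift_ι_apply,
    repGen_inr_x]

lemma gwaRep_y : gwaRep σ₀ a₀ b c h1 h2 YY = vY σ₀ c := by
  rw [GWA.y, gwaRep, RingQuot.liftAlgHom_mkAlgHom_apply, FreeAlgebra.lift_ι_apply,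
    repGen_inr_y]

lemma vX_one_pow (m : ℕ) (i : ℤ) (d : R) :
    ((vX σ₀ (1 : R)) ^ m) (Finsupp.single i d) = Finsupp.single (i + m) ((σ₀ ^ m) d) := by
  induction m generalizing i d with
  | zero =>
    rw [pow_zero, pow_zero, Module.End.one_apply]
    norm_num
  | succ n ih =>
    rw [pow_succ, Module.End.mul_apply, vX_single, mul_one, ih, ← aut_pow_succ_apply']
    congr 1
    omega

lemma vY_one_pow (m : ℕ) (i : ℤ) (d : R) :
    ((vY σ₀ (1 : R)) ^ m) (Finsupp.single i d) = Finsupp.single (i - m) ((σ₀.symm ^ m) d) := by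
  induction m generalizing i d with
  | zero =>
    rw [pow_zero, pow_zero, Module.End.one_apply]
    norm_num
  | succ n ih =>
    rw [pow_succ, Module.End.mul_apply, vY_single, mul_one, ih, ← aut_pow_succ_apply']
    congr 1
    omega

lemma vX_pow_exists (m : ℕ) (i : ℤ) (d : R) :
    ∃ e, ((vX σ₀ b) ^ m) (Finsupp.single i d) = Finsupp.single (i + m) e := by
  induction m generalizing i d with
  | zero => exact ⟨d, by rw [pow_zero, Module.End.one_apply]; norm_num⟩
  | succ n ih =>
    rw [pow_succ, Module.End.mul_apply, vX_single]
    obtain ⟨e, he⟩ := ih (i + 1) (σ₀ d * b)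
    exact ⟨e, by rw [he]; congr 1; omega⟩

lemma vY_pow_exists (m : ℕ) (i : ℤ) (d : R) :
    ∃ e, ((vY σ₀ c) ^ m) (Finsupp.single i d) = Finsupp.single (i - m) e := by
  induction m generalizing i d with
  | zero => exact ⟨d, by rw [pow_zero, Module.End.one_apply]; norm_num⟩
  | succ n ih =>
    rw [pow_succ, Module.End.mul_apply, vY_single]
    obtain ⟨e, he⟩ := ih (i - 1) (σ₀.symm d * c)
    exact ⟨e, by rw [he]; congr 1; omega⟩

end Rep

section Psi

variable (ℓ : ℕ)

/-- `â = ∏_{j<ℓ} σ^{-j}(a)`. -/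
noncomputable def ahat : R := ∏ j ∈ range ℓ, (σ₀.symm ^ j) a₀

local notation "BB" => GWA k R 1 ![σ₀ ^ ℓ] ![ahat σ₀ a₀ ℓ]
local notation "XB" => GWA.x k R ![σ₀ ^ ℓ] ![ahat σ₀ a₀ ℓ] 0
local notation "YB" => GWA.y k R ![σ₀ ^ ℓ] ![ahat σ₀ a₀ ℓ] 0
local notation "ρB" => rho (σ₀ ^ ℓ) (ahat σ₀ a₀ ℓ)

/-- Generators for the map `k[z](σ^ℓ, â) → k[z](σ, a)`. -/
noncomputable def psiGen : R ⊕ Fin 1 × Bool → GWA k R 1 ![σ₀] ![a₀] := fun v =>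
  match v with
  | .inl p => ρ p
  | .inr (_, false) => XX ^ ℓ
  | .inr (_, true) => YY ^ ℓ

@[simp] lemma psiGen_inl (p : R) : psiGen σ₀ a₀ ℓ (.inl p) = ρ p := rfl
@[simp] lemma psiGen_inr_x (i : Fin 1) : psiGen σ₀ a₀ ℓ (.inr (i, false)) = XX ^ ℓ := rfl
@[simp] lemma psiGen_inr_y (i : Fin 1) : psiGen σ₀ a₀ ℓ (.inr (i, true)) = YY ^ ℓ := rfl

/-- The canonical map `k[z](σ^ℓ, â) → k[z](σ, a)`, `x ↦ x^ℓ`, `y ↦ y^ℓ`. -/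
noncomputable def psi : BB →ₐ[k] GWA k R 1 ![σ₀] ![a₀] :=
  RingQuot.liftAlgHom k ⟨FreeAlgebra.lift k (psiGen σ₀ a₀ ℓ), by
    intro u v huv
    induction huv with
    | add r s => simp [map_add]
    | mul r s => simp [map_mul]
    | smul c' r => simp [map_smul]
    | one => simp [map_one]
    | xr i r =>
      obtain rfl : i = 0 := Subsingleton.elim i 0
      simp only [map_mul, FreeAlgebra.lift_ι_apply, psiGen_inl, psiGen_inr_x,
        Matrix.cons_val_zero]
      exact x_pow_r σ₀ a₀ ℓ r
    | yr i r =>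
      obtain rfl : i = 0 := Subsingleton.elim i 0
      simp only [map_mul, FreeAlgebra.lift_ι_apply, psiGen_inl, psiGen_inr_y,
        Matrix.cons_val_zero]
      rw [aut_symm_pow]
      exact y_pow_r σ₀ a₀ ℓ r
    | yx i =>
      obtain rfl : i = 0 := Subsingleton.elim i 0
      simp only [map_mul, FreeAlgebra.lift_ι_apply, psiGen_inl, psiGen_inr_x, psiGen_inr_y,
        Matrix.cons_val_zero]
      exact y_pow_x_pow σ₀ a₀ ℓ
    | xy i =>
      obtain rfl : i = 0 := Subsingleton.elim i 0
      simp only [map_mul, FreeAlgebra.lift_ι_apply, psiGen_inl, psiGen_inr_x, psiGen_inr_y,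
        Matrix.cons_val_zero]
      exact x_pow_y_pow σ₀ a₀ ℓ
    | comm i j s t h => exact absurd (Subsingleton.elim i j) h⟩

lemma psi_rho (p : R) : psi σ₀ a₀ ℓ (ρB p) = ρ p := by
  rw [show (ρB p : BB) = RingQuot.mkAlgHom k (GWARel k R 1 ![σ₀ ^ ℓ] ![ahat σ₀ a₀ ℓ])
    (FreeAlgebra.ι k (.inl p)) from rfl, psi, RingQuot.liftAlgHom_mkAlgHom_apply,
    FreeAlgebra.lift_ι_apply, psiGen_inl]

lemma psi_x : psi σ₀ a₀ ℓ XB = XX ^ ℓ := by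
  rw [GWA.x, psi, RingQuot.liftAlgHom_mkAlgHom_apply, FreeAlgebra.lift_ι_apply, psiGen_inr_x]

lemma psi_y : psi σ₀ a₀ ℓ YB = YY ^ ℓ := by
  rw [GWA.y, psi, RingQuot.liftAlgHom_mkAlgHom_apply, FreeAlgebra.lift_ι_apply, psiGen_inr_y]

/-- Evaluation of a representation at the vacuum vector `e₀`, as a linear map. -/
noncomputable def erep (rep : GWA k R 1 ![σ₀] ![a₀] →ₐ[k] Module.End k (ℤ →₀ R)) :
    GWA k R 1 ![σ₀] ![a₀] →ₗ[k] (ℤ →₀ R) where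
  toFun u := rep u (Finsupp.single 0 1)
  map_add' u v := by simp only [map_add, LinearMap.add_apply]
  map_smul' c u := by simp only [map_smul, LinearMap.smul_apply, RingHom.id_apply]

/-- The first representation: `b = 1`, `c = a`. -/
noncomputable def rep₁ : GWA k R 1 ![σ₀] ![a₀] →ₐ[k] Module.End k (ℤ →₀ R) :=
  gwaRep σ₀ a₀ 1 a₀ (by rw [map_one, one_mul]) (by rw [_root_.mul_one])

/-- The second representation: `b = σ a`, `c = 1`. -/
noncomputable def rep₂ : GWA k R 1 ![σ₀] ![a₀] →ₐ[k] Module.End k (ℤ →₀ R) :=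
  gwaRep σ₀ a₀ (σ₀ a₀) 1 (by rw [AlgEquiv.symm_apply_apply, _root_.mul_one])
    (by rw [map_one, one_mul])

lemma erep₁_x_pow (n : ℕ) (r : R) :
    erep σ₀ a₀ (rep₁ σ₀ a₀) (XX ^ n * ρ r) = Finsupp.single (n : ℤ) ((σ₀ ^ n) r) := by
  show (rep₁ σ₀ a₀) (XX ^ n * ρ r) (Finsupp.single 0 1) = _
  rw [map_mul, map_pow, rep₁, gwaRep_rho, gwaRep_x, Module.End.mul_apply, vR_single,
    _root_.mul_one, vX_one_pow, zero_add]

lemma erep₁_y_pow (n : ℕ) (r : R) :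
    ∃ e, erep σ₀ a₀ (rep₁ σ₀ a₀) (YY ^ n * ρ r) = Finsupp.single (-(n : ℤ)) e := by
  show ∃ e, (rep₁ σ₀ a₀) (YY ^ n * ρ r) (Finsupp.single 0 1) = _
  rw [map_mul, map_pow, rep₁, gwaRep_rho, gwaRep_y, Module.End.mul_apply, vR_single,
    _root_.mul_one]
  obtain ⟨e, he⟩ := vY_pow_exists σ₀ a₀ n 0 r
  exact ⟨e, by rw [he, zero_sub]⟩

lemma erep₂_y_pow (n : ℕ) (r : R) :
    erep σ₀ a₀ (rep₂ σ₀ a₀) (YY ^ n * ρ r) = Finsupp.single (-(n : ℤ)) ((σ₀.symm ^ n) r) := by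
  show (rep₂ σ₀ a₀) (YY ^ n * ρ r) (Finsupp.single 0 1) = _
  rw [map_mul, map_pow, rep₂, gwaRep_rho, gwaRep_y, Module.End.mul_apply, vR_single,
    _root_.mul_one, vY_one_pow, zero_sub]

lemma erep₂_x_pow (n : ℕ) (r : R) :
    ∃ e, erep σ₀ a₀ (rep₂ σ₀ a₀) (XX ^ n * ρ r) = Finsupp.single (n : ℤ) e := by
  show ∃ e, (rep₂ σ₀ a₀) (XX ^ n * ρ r) (Finsupp.single 0 1) = _
  rw [map_mul, map_pow, rep₂, gwaRep_rho, gwaRep_x, Module.End.mul_apply, vR_single,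
    _root_.mul_one]
  obtain ⟨e, he⟩ := vX_pow_exists σ₀ (σ₀ a₀) n 0 r
  exact ⟨e, by rw [he, zero_add]⟩

variable (hℓ : 0 < ℓ)

/-- Reassembling `x`-coefficients. -/
noncomputable def gOne : (ℤ →₀ R) →ₗ[k] BB :=
  Finsupp.lsum k fun i =>
    if 0 ≤ i ∧ (ℓ : ℤ) ∣ i then
      (LinearMap.mulLeft k (XB ^ (i.toNat / ℓ))).comp
        ((ρB).toLinearMap.comp (σ₀.symm ^ i.toNat).toLinearMap)
    else 0

/-- Reassembling `y`-coefficients. -/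
noncomputable def gTwo : (ℤ →₀ R) →ₗ[k] BB :=
  Finsupp.lsum k fun i =>
    if i < 0 ∧ (ℓ : ℤ) ∣ i then
      (LinearMap.mulLeft k (YB ^ ((-i).toNat / ℓ))).comp
        ((ρB).toLinearMap.comp (σ₀ ^ (-i).toNat).toLinearMap)
    else 0

/-- Left inverse of `psi`. -/
noncomputable def invPsi : GWA k R 1 ![σ₀] ![a₀] →ₗ[k] BB :=
  (gOne σ₀ a₀ ℓ).comp (erep σ₀ a₀ (rep₁ σ₀ a₀))
    + (gTwo σ₀ a₀ ℓ).comp (erep σ₀ a₀ (rep₂ σ₀ a₀))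

lemma invPsi_psi (hℓ : 0 < ℓ) (u : BB) : invPsi σ₀ a₀ ℓ (psi σ₀ a₀ ℓ u) = u := by
  have hu : u ∈ Submodule.span k (gwaSpanSet (σ₀ ^ ℓ) (ahat σ₀ a₀ ℓ)) := by
    rw [span_gwaSpanSet]; trivial
  induction hu using Submodule.span_induction with
  | mem s hs =>
    have key : ∀ (m : ℕ) (r : R),
        invPsi σ₀ a₀ ℓ (XX ^ (ℓ * m) * ρ r) = XB ^ m * ρB r := by
      intro m r
      rw [invPsi, LinearMap.add_apply, LinearMap.comp_apply, LinearMap.comp_apply,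
        erep₁_x_pow]
      obtain ⟨e, he⟩ := erep₂_x_pow σ₀ a₀ (ℓ * m) r
      rw [he, gOne, gTwo, Finsupp.lsum_single, Finsupp.lsum_single]
      rw [if_pos ⟨Int.natCast_nonneg _, Int.natCast_dvd_natCast.mpr ⟨m, rfl⟩⟩,
        if_neg (fun h => absurd h.1 (not_lt.mpr (Int.natCast_nonneg _)))]
      rw [LinearMap.comp_apply, LinearMap.comp_apply, LinearMap.zero_apply, add_zero,
        LinearMap.mulLeft_apply, AlgEquiv.toLinearMap_apply, AlgHom.toLinearMap_apply]
      rw [Int.toNat_natCast,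
        Nat.mul_div_cancel_left m hℓ, ← aut_symm_pow, AlgEquiv.symm_apply_apply]
    rcases hs with ⟨m, r, rfl⟩ | ⟨m, r, rfl⟩
    · rw [map_mul, map_pow, psi_x, psi_rho, ← pow_mul]
      exact key m r
    · rcases m with _ | m
      · have h0 := key 0 r
        rw [Nat.mul_zero, pow_zero, one_mul, pow_zero, one_mul] at h0
        simp only [pow_zero, one_mul]
        rw [psi_rho]
        exact h0
      · rw [map_mul, map_pow, psi_y, psi_rho, ← pow_mul]
        rw [invPsi, LinearMap.add_apply, LinearMap.comp_apply, LinearMap.comp_apply,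
          erep₂_y_pow]
        obtain ⟨e, he⟩ := erep₁_y_pow σ₀ a₀ (ℓ * (m + 1)) r
        rw [he, gOne, gTwo, Finsupp.lsum_single, Finsupp.lsum_single]
        have hlt : (-((ℓ * (m + 1) : ℕ) : ℤ)) < 0 :=
          neg_neg_of_pos (by exact_mod_cast Nat.mul_pos hℓ m.succ_pos)
        rw [if_neg (fun h => absurd h.1 (not_le.mpr hlt)),
          if_pos ⟨hlt, (dvd_neg).mpr (Int.natCast_dvd_natCast.mpr ⟨m + 1, rfl⟩)⟩]
        rw [LinearMap.comp_apply, LinearMap.comp_apply, LinearMap.zero_apply, zero_add,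
          LinearMap.mulLeft_apply, AlgEquiv.toLinearMap_apply, AlgHom.toLinearMap_apply]
        rw [neg_neg, Int.toNat_natCast,
          Nat.mul_div_cancel_left (m + 1) hℓ, ← aut_symm_pow, AlgEquiv.apply_symm_apply]
  | zero => rw [map_zero, map_zero]
  | add x y hx hy ihx ihy => rw [map_add, map_add, ihx, ihy]
  | smul c x hx ihx => rw [map_smul, map_smul, ihx]

lemma psi_injective (hℓ : 0 < ℓ) : Function.Injective (psi σ₀ a₀ ℓ) := by
  intro u v h
  have hu := invPsi_psi σ₀ a₀ ℓ hℓ u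
  have hv := invPsi_psi σ₀ a₀ ℓ hℓ v
  rw [← hu, ← hv, h]

lemma psi_range :
    (psi σ₀ a₀ ℓ).range =
      Algebra.adjoin k (Set.range (rho σ₀ a₀) ∪ {XX ^ ℓ, YY ^ ℓ}) := by
  apply le_antisymm
  · rintro _ ⟨u, rfl⟩
    obtain ⟨w, rfl⟩ := RingQuot.mkAlgHom_surjective k _ u
    refine FreeAlgebra.induction k _
      (motive := fun w => psi σ₀ a₀ ℓ
        (RingQuot.mkAlgHom k (GWARel k R 1 ![σ₀ ^ ℓ] ![ahat σ₀ a₀ ℓ]) w)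
        ∈ Algebra.adjoin k (Set.range (rho σ₀ a₀) ∪ {XX ^ ℓ, YY ^ ℓ})) ?_ ?_ ?_ ?_ w
    · intro c
      rw [AlgHom.commutes, AlgHom.commutes]
      exact Subalgebra.algebraMap_mem _ c
    · rintro (p | ⟨i, b⟩)
      · rw [show RingQuot.mkAlgHom k (GWARel k R 1 ![σ₀ ^ ℓ] ![ahat σ₀ a₀ ℓ])
          (FreeAlgebra.ι k (.inl p)) = ρB p from rfl, psi_rho]
        exact Algebra.subset_adjoin (Or.inl ⟨p, rfl⟩)
      · obtain rfl : i = 0 := Subsingleton.elim i 0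
        cases b
        · rw [show RingQuot.mkAlgHom k (GWARel k R 1 ![σ₀ ^ ℓ] ![ahat σ₀ a₀ ℓ])
            (FreeAlgebra.ι k (.inr (0, false))) = XB from rfl, psi_x]
          exact Algebra.subset_adjoin (Or.inr (Set.mem_insert _ _))
        · rw [show RingQuot.mkAlgHom k (GWARel k R 1 ![σ₀ ^ ℓ] ![ahat σ₀ a₀ ℓ])
            (FreeAlgebra.ι k (.inr (0, true))) = YB from rfl, psi_y]
          exact Algebra.subset_adjoin (Or.inr (Set.mem_insert_of_mem _ rfl))
    · intro u v hu hv
      rw [map_mul, map_mul]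
      exact Subalgebra.mul_mem _ hu hv
    · intro u v hu hv
      rw [map_add, map_add]
      exact Subalgebra.add_mem _ hu hv
  · rw [Algebra.adjoin_le_iff]
    rintro x (⟨p, rfl⟩ | hx)
    · exact ⟨ρB p, psi_rho σ₀ a₀ ℓ p⟩
    · rcases hx with rfl | rfl
      · exact ⟨XB, psi_x σ₀ a₀ ℓ⟩
      · exact ⟨YB, psi_y σ₀ a₀ ℓ⟩

end Psi

section Poly

open Polynomial

variable {k : Type*} [CommRing k]

lemma aeval_eq_comp (p q : k[X]) : Polynomial.aeval q p = p.comp q := by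
  rw [Polynomial.aeval_def, Polynomial.algebraMap_eq]
  rfl

lemma shiftDown_symm_apply (p : k[X]) : (shiftDown k).symm p = p.comp (X + 1) := by
  rw [show (shiftDown k).symm p = Polynomial.aeval (X + 1) p from rfl, aeval_eq_comp]

lemma shiftDown_symm_pow_apply (j : ℕ) (p : k[X]) :
    ((shiftDown k).symm ^ j) p = p.comp (X + C (j : k)) := by
  induction j with
  | zero =>
    rw [pow_zero, Nat.cast_zero, map_zero, add_zero, comp_X]
    rfl
  | succ n ih =>
    rw [aut_pow_succ_apply, ih, shiftDown_symm_apply, comp_assoc, add_comp, X_comp, C_comp]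
    congr 1
    rw [Nat.cast_succ, map_add, map_one]
    ring

lemma ahat_shiftDown (a : k[X]) (ℓ : ℕ) :
    ahat (shiftDown k) a ℓ = ∏ j ∈ Finset.range ℓ, a.comp (X + C (j : k)) := by
  rw [ahat]
  exact Finset.prod_congr rfl fun j _ => shiftDown_symm_pow_apply j a

end Poly

end GWAAux

open GWAAux Polynomial Finset

/-- Let `A = k[z](σ, a)` be a classical GWA with `σ(z) = z - 1`, and
let `φ` be the `k`-algebra automorphism with `φ(x) = μ⁻¹x`, `φ(y) = μy`, `φ(z) = z`,
where `μ ∈ k^×` has finite order `ℓ`. Then the fixed ring `A^⟨φ⟩` is generated by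
`z, x^ℓ, y^ℓ` and is isomorphic to `k[z](σ^ℓ, â)` with `â = ∏_{j=0}^{ℓ-1} a(z + j)`. -/
theorem classical_gwa_fixed_ring (k : Type*) [Field k] [CharZero k]
    (a : Polynomial k) (μ : k) (ℓ : ℕ) (hℓ : 0 < ℓ) (hμ : orderOf μ = ℓ)
    (φ : GWA k (Polynomial k) 1 ![shiftDown k] ![a] ≃ₐ[k]
      GWA k (Polynomial k) 1 ![shiftDown k] ![a])
    (hx : φ (GWA.x k (Polynomial k) ![shiftDown k] ![a] 0) =
      μ⁻¹ • GWA.x k (Polynomial k) ![shiftDown k] ![a] 0)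
    (hy : φ (GWA.y k (Polynomial k) ![shiftDown k] ![a] 0) =
      μ • GWA.y k (Polynomial k) ![shiftDown k] ![a] 0)
    (hz : φ (GWA.r k (Polynomial k) ![shiftDown k] ![a] Polynomial.X) =
      GWA.r k (Polynomial k) ![shiftDown k] ![a] Polynomial.X) :
    AlgHom.equalizer (φ : GWA k (Polynomial k) 1 ![shiftDown k] ![a] →ₐ[k] _)
        (AlgHom.id k _) =
      Algebra.adjoin k
        {GWA.r k (Polynomial k) ![shiftDown k] ![a] Polynomial.X,
         GWA.x k (Polynomial k) ![shiftDown k] ![a] 0 ^ ℓ,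
         GWA.y k (Polynomial k) ![shiftDown k] ![a] 0 ^ ℓ} ∧
    Nonempty ((AlgHom.equalizer (φ : GWA k (Polynomial k) 1 ![shiftDown k] ![a] →ₐ[k] _)
        (AlgHom.id k _)) ≃ₐ[k]
      GWA k (Polynomial k) 1 ![shiftDown k ^ ℓ]
        ![∏ j ∈ Finset.range ℓ, a.comp (Polynomial.X + Polynomial.C (j : k))]) := by
  classical
  -- notation
  let σ := shiftDown k
  have hμℓ : μ ^ ℓ = 1 := by rw [← hμ]; exact pow_orderOf_eq_one μ
  have hμ0 : μ ≠ 0 := by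
    rintro rfl
    rw [zero_pow hℓ.ne'] at hμℓ
    exact zero_ne_one hμℓ
  have hℓk : (ℓ : k) ≠ 0 := Nat.cast_ne_zero.mpr hℓ.ne'
  -- φ fixes the image of R
  have hfix : ∀ p : Polynomial k, φ (rho (shiftDown k) a p) = rho (shiftDown k) a p := by
    have hcomp : ((φ : GWA k (Polynomial k) 1 ![shiftDown k] ![a] →ₐ[k] _).comp
        (rho (shiftDown k) a)) = rho (shiftDown k) a := by
      apply Polynomial.algHom_ext
      simp only [AlgHom.comp_apply]
      exact hz
    intro p
    exact AlgHom.congr_fun hcomp p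
  -- projector
  let Φ : GWA k (Polynomial k) 1 ![shiftDown k] ![a] →ₐ[k]
      GWA k (Polynomial k) 1 ![shiftDown k] ![a] := φ
  let prj : GWA k (Polynomial k) 1 ![shiftDown k] ![a] →ₗ[k]
      GWA k (Polynomial k) 1 ![shiftDown k] ![a] :=
    (ℓ : k)⁻¹ • ∑ j ∈ Finset.range ℓ, (Φ ^ j).toLinearMap
  have hΦ : ∀ u, Φ u = φ u := fun _ => rfl
  have hpow_succ : ∀ (j : ℕ) u, (Φ ^ (j + 1)) u = φ ((Φ ^ j) u) := by
    intro j u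
    rw [pow_succ']
    rfl
  have prj_apply : ∀ u, prj u = (ℓ : k)⁻¹ • ∑ j ∈ Finset.range ℓ, (Φ ^ j) u := by
    intro u
    show ((ℓ : k)⁻¹ • ∑ j ∈ Finset.range ℓ, (Φ ^ j).toLinearMap) u = _
    rw [LinearMap.smul_apply, LinearMap.sum_apply]
    rfl
  have prj_fixed : ∀ u, φ u = u → prj u = u := by
    intro u hu
    have hj : ∀ j, (Φ ^ j) u = u := by
      intro j
      induction j with
      | zero => rfl
      | succ n ih => rw [hpow_succ, ih, hu]
    rw [prj_apply]
    simp only [hj]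
    rw [Finset.sum_const, Finset.card_range, ← Nat.cast_smul_eq_nsmul k, smul_smul,
      inv_mul_cancel₀ hℓk, one_smul]
  have geom : ∀ ζ : k, ζ ^ ℓ = 1 → ζ ≠ 1 → ∑ j ∈ Finset.range ℓ, ζ ^ j = 0 := by
    intro ζ h1 h2
    rw [geom_sum_eq h2, h1, sub_self, zero_div]
  have prj_elem : ∀ (ζ : k) u, φ u = ζ • u →
      prj u = ((ℓ : k)⁻¹ * ∑ j ∈ Finset.range ℓ, ζ ^ j) • u := by
    intro ζ u hu
    have hj : ∀ j, (Φ ^ j) u = ζ ^ j • u := by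
      intro j
      induction j with
      | zero => rw [pow_zero, pow_zero, one_smul]; rfl
      | succ n ih =>
        rw [hpow_succ, ih, map_smul, hu, smul_smul, ← pow_succ]
    rw [prj_apply]
    simp only [hj]
    rw [← Finset.sum_smul, smul_smul]
  -- scalars on spanning elements
  have hx_span : ∀ (m : ℕ) (r : Polynomial k),
      φ (GWA.x k (Polynomial k) ![shiftDown k] ![a] 0 ^ m * rho (shiftDown k) a r) =
        (μ⁻¹) ^ m • (GWA.x k (Polynomial k) ![shiftDown k] ![a] 0 ^ m
          * rho (shiftDown k) a r) := by
    intro m r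
    rw [map_mul, map_pow, hx, hfix r, _root_.smul_pow, smul_mul_assoc]
  have hy_span : ∀ (m : ℕ) (r : Polynomial k),
      φ (GWA.y k (Polynomial k) ![shiftDown k] ![a] 0 ^ m * rho (shiftDown k) a r) =
        μ ^ m • (GWA.y k (Polynomial k) ![shiftDown k] ![a] 0 ^ m
          * rho (shiftDown k) a r) := by
    intro m r
    rw [map_mul, map_pow, hy, hfix r, _root_.smul_pow, smul_mul_assoc]
  -- the adjoin
  have hρmem : ∀ r : Polynomial k, rho (shiftDown k) a r ∈ Algebra.adjoin k
      {GWA.r k (Polynomial k) ![shiftDown k] ![a] Polynomial.X,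
       GWA.x k (Polynomial k) ![shiftDown k] ![a] 0 ^ ℓ,
       GWA.y k (Polynomial k) ![shiftDown k] ![a] 0 ^ ℓ} := by
    have hrho_eq : rho (shiftDown k) a =
        Polynomial.aeval (GWA.r k (Polynomial k) ![shiftDown k] ![a] Polynomial.X) := by
      apply Polynomial.algHom_ext
      rw [Polynomial.aeval_X]
      rfl
    intro r
    have h1 : rho (shiftDown k) a r ∈ Algebra.adjoin k
        {GWA.r k (Polynomial k) ![shiftDown k] ![a] Polynomial.X} := by
      rw [Algebra.adjoin_singleton_eq_range_aeval]
      exact ⟨r, by rw [← hrho_eq]; rfl⟩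
    exact Algebra.adjoin_mono (Set.singleton_subset_iff.mpr (Set.mem_insert _ _)) h1
  have hXmem : GWA.x k (Polynomial k) ![shiftDown k] ![a] 0 ^ ℓ ∈ Algebra.adjoin k
      {GWA.r k (Polynomial k) ![shiftDown k] ![a] Polynomial.X,
       GWA.x k (Polynomial k) ![shiftDown k] ![a] 0 ^ ℓ,
       GWA.y k (Polynomial k) ![shiftDown k] ![a] 0 ^ ℓ} :=
    Algebra.subset_adjoin (Set.mem_insert_of_mem _ (Set.mem_insert _ _))
  have hYmem : GWA.y k (Polynomial k) ![shiftDown k] ![a] 0 ^ ℓ ∈ Algebra.adjoin k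
      {GWA.r k (Polynomial k) ![shiftDown k] ![a] Polynomial.X,
       GWA.x k (Polynomial k) ![shiftDown k] ![a] 0 ^ ℓ,
       GWA.y k (Polynomial k) ![shiftDown k] ![a] 0 ^ ℓ} :=
    Algebra.subset_adjoin (Set.mem_insert_of_mem _
      (Set.mem_insert_of_mem _ rfl))
  -- key: the projector maps everything into the adjoin
  have prj_mem : ∀ v, prj v ∈ Algebra.adjoin k
      {GWA.r k (Polynomial k) ![shiftDown k] ![a] Polynomial.X,
       GWA.x k (Polynomial k) ![shiftDown k] ![a] 0 ^ ℓ,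
       GWA.y k (Polynomial k) ![shiftDown k] ![a] 0 ^ ℓ} := by
    intro v
    have hv : v ∈ Submodule.span k (gwaSpanSet (shiftDown k) a) := by
      rw [span_gwaSpanSet]; trivial
    induction hv using Submodule.span_induction with
    | mem s hs =>
      rcases hs with ⟨m, r, rfl⟩ | ⟨m, r, rfl⟩
      · rw [prj_elem _ _ (hx_span m r)]
        by_cases hdvd : ℓ ∣ m
        · obtain ⟨q, rfl⟩ := hdvd
          have hζ1 : (μ⁻¹) ^ (ℓ * q) = 1 := by
            rw [inv_pow, pow_mul, hμℓ, one_pow, inv_one]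
          simp only [hζ1, one_pow]
          rw [Finset.sum_const, Finset.card_range, nsmul_eq_mul, mul_one,
            inv_mul_cancel₀ hℓk, one_smul, pow_mul]
          exact Subalgebra.mul_mem _ (Subalgebra.pow_mem _ hXmem q) (hρmem r)
        · have hζℓ : ((μ⁻¹) ^ m) ^ ℓ = 1 := by
            rw [← pow_mul, mul_comm, pow_mul, inv_pow, hμℓ, inv_one, one_pow]
          have hζne : (μ⁻¹) ^ m ≠ 1 := by
            rw [inv_pow]
            intro hc
            exact hdvd (hμ ▸ orderOf_dvd_iff_pow_eq_one.mpr (inv_eq_one.mp hc))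
          rw [geom _ hζℓ hζne, mul_zero, zero_smul]
          exact Subalgebra.zero_mem _
      · rw [prj_elem _ _ (hy_span m r)]
        by_cases hdvd : ℓ ∣ m
        · obtain ⟨q, rfl⟩ := hdvd
          have hζ1 : μ ^ (ℓ * q) = 1 := by rw [pow_mul, hμℓ, one_pow]
          simp only [hζ1, one_pow]
          rw [Finset.sum_const, Finset.card_range, nsmul_eq_mul, mul_one,
            inv_mul_cancel₀ hℓk, one_smul, pow_mul]
          exact Subalgebra.mul_mem _ (Subalgebra.pow_mem _ hYmem q) (hρmem r)
        · have hζℓ : (μ ^ m) ^ ℓ = 1 := by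
            rw [← pow_mul, mul_comm, pow_mul, hμℓ, one_pow]
          have hζne : μ ^ m ≠ 1 := by
            intro hc
            exact hdvd (hμ ▸ orderOf_dvd_iff_pow_eq_one.mpr hc)
          rw [geom _ hζℓ hζne, mul_zero, zero_smul]
          exact Subalgebra.zero_mem _
    | zero => rw [map_zero]; exact Subalgebra.zero_mem _
    | add x y hx' hy' ihx ihy => rw [map_add]; exact Subalgebra.add_mem _ ihx ihy
    | smul c x hx' ihx => rw [map_smul]; exact Subalgebra.smul_mem _ ihx c
  -- Part 1
  have part1 : AlgHom.equalizer (φ : GWA k (Polynomial k) 1 ![shiftDown k] ![a] →ₐ[k] _)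
      (AlgHom.id k _) =
      Algebra.adjoin k
        {GWA.r k (Polynomial k) ![shiftDown k] ![a] Polynomial.X,
         GWA.x k (Polynomial k) ![shiftDown k] ![a] 0 ^ ℓ,
         GWA.y k (Polynomial k) ![shiftDown k] ![a] 0 ^ ℓ} := by
    apply le_antisymm
    · intro u hu
      have hφu : φ u = u := hu
      have h2 := prj_mem u
      rwa [prj_fixed u hφu] at h2
    · rw [Algebra.adjoin_le_iff]
      intro x hx'
      rcases hx' with rfl | rfl | rfl
      · exact hz
      · show φ _ = _
        rw [map_pow, hx, _root_.smul_pow, inv_pow, hμℓ, inv_one, one_smul, AlgHom.id_apply]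
      · show φ _ = _
        rw [map_pow, hy, _root_.smul_pow, hμℓ, one_smul, AlgHom.id_apply]
  refine ⟨part1, ?_⟩
  -- Part 2
  have hranges : (psi (shiftDown k) a ℓ).range = Algebra.adjoin k
      {GWA.r k (Polynomial k) ![shiftDown k] ![a] Polynomial.X,
       GWA.x k (Polynomial k) ![shiftDown k] ![a] 0 ^ ℓ,
       GWA.y k (Polynomial k) ![shiftDown k] ![a] 0 ^ ℓ} := by
    rw [psi_range]
    apply le_antisymm
    · rw [Algebra.adjoin_le_iff]
      rintro x (⟨p, rfl⟩ | hx')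
      · exact hρmem p
      · rcases hx' with rfl | rfl
        · exact hXmem
        · exact hYmem
    · rw [Algebra.adjoin_le_iff]
      rintro x (rfl | rfl | rfl)
      · exact Algebra.subset_adjoin (Or.inl ⟨Polynomial.X, rfl⟩)
      · exact Algebra.subset_adjoin (Or.inr (Set.mem_insert _ _))
      · exact Algebra.subset_adjoin (Or.inr (Set.mem_insert_of_mem _ rfl))
  rw [← ahat_shiftDown]
  exact ⟨((AlgEquiv.ofInjective _ (psi_injective (shiftDown k) a ℓ hℓ)).trans
    (Subalgebra.equivOfEq _ _ (hranges.trans part1.symm))).symm⟩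
end
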